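/- arXiv:1402.0934 — 3 statements merged into one kernel-verified Lean document; each statement's English description precedes it below -/
import Mathlib

section
/- Let r > 0 and 0 < p < 1. Then the Stein factors G_{m,1} and G_{m,2} for conditional negative binomial approximation are both decreasing in m: G_{m,1} ≤ G_{m−1,1} and G_{m,2} ≤ G_{m−1,2} for every m ≥ 1. -/
open MeasureTheory Filter Set Topology Classical

/-- The negative binomial probability mass function:
`P(Z = k) = Γ(r+k)/(Γ(r) k!) (1-p)^r p^k`. -/
noncomputable def nbPMF (r p : ℝ) (k : ℕ) : ℝ :=
  Real.Gamma (r + k) / (Real.Gamma r * (k.factorial : ℝ)) * (1 - p) ^ r * p ^ k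

/-- `P(Z ∈ A | Z ≥ m)` for `Z ~ NB(r,p)`. -/
noncomputable def nbCondProb (r p : ℝ) (m : ℕ) (A : Set ℕ) : ℝ :=
  (∑' k : ℕ, if k ∈ A ∧ m ≤ k then nbPMF r p k else 0) /
    (∑' k : ℕ, if m ≤ k then nbPMF r p k else 0)

/-- `g` is a solution on `ℤ_m` of the Stein equation for `NB^{(m)}(r,p)` with test function
`f = 1_A`: `p(r+i) g(i+1) − i g(i) 1{i>m} = 1_A(i) − P(Z^{(m)} ∈ A)` for all `i ≥ m`. -/
def IsNBSteinSol (r p : ℝ) (m : ℕ) (A : Set ℕ) (g : ℕ → ℝ) : Prop :=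
  ∀ i : ℕ, m ≤ i →
    p * (r + i) * g (i + 1) - (if m < i then (i : ℝ) * g i else 0) =
      (if i ∈ A then 1 else 0) - nbCondProb r p m A

/-- The first Stein factor `G_{m,1} = sup_{f ∈ F_m} ‖g_{m,f}‖_m`, where
`‖h‖_m = sup_{w ≥ m} |h(w+1)|`. -/
noncomputable def nbG1 (r p : ℝ) (m : ℕ) : ℝ :=
  sSup {x : ℝ | ∃ A : Set ℕ, A ⊆ Set.Ici m ∧ ∃ g : ℕ → ℝ, IsNBSteinSol r p m A g ∧
    ∃ w : ℕ, m ≤ w ∧ x = |g (w + 1)|}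

/-- The second Stein factor `G_{m,2} = sup_{f ∈ F_m} ‖Δg_{m,f}‖_m`. -/
noncomputable def nbG2 (r p : ℝ) (m : ℕ) : ℝ :=
  sSup {x : ℝ | ∃ A : Set ℕ, A ⊆ Set.Ici m ∧ ∃ g : ℕ → ℝ, IsNBSteinSol r p m A g ∧
    ∃ w : ℕ, m ≤ w ∧ x = |g (w + 2) - g (w + 1)|}



section NBAux
variable {r p : ℝ}

lemma nbPMF_pos (hr : 0 < r) (hp0 : 0 < p) (hp1 : p < 1) (k : ℕ) : 0 < nbPMF r p k := by
  unfold nbPMF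
  have h1 : 0 < Real.Gamma (r + k) := Real.Gamma_pos_of_pos (by positivity)
  have h2 : 0 < Real.Gamma r := Real.Gamma_pos_of_pos hr
  have h3 : (0:ℝ) < (1 - p) ^ r := Real.rpow_pos_of_pos (by linarith) r
  positivity

lemma nbPMF_step (hr : 0 < r) (k : ℕ) :
    ((k:ℝ) + 1) * nbPMF r p (k+1) = p * (r + k) * nbPMF r p k := by
  unfold nbPMF
  have h0 : r + (k:ℝ) ≠ 0 := by positivity
  have hG : Real.Gamma (r + ((k:ℕ)+1:ℕ)) = (r + k) * Real.Gamma (r + k) := by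
    push_cast
    rw [show r + ((k:ℝ) + 1) = (r + k) + 1 by ring, Real.Gamma_add_one h0]
  rw [hG]
  have hf : ((k+1).factorial : ℝ) = ((k:ℝ)+1) * (k.factorial : ℝ) := by
    rw [Nat.factorial_succ]; push_cast; ring
  rw [hf]
  have h2 : 0 < Real.Gamma r := Real.Gamma_pos_of_pos hr
  have hfk : (k.factorial : ℝ) ≠ 0 := by positivity
  have hk1 : ((k:ℝ) + 1) ≠ 0 := by positivity
  field_simp
  ring

lemma nbPMF_summable (hr : 0 < r) (hp0 : 0 < p) (hp1 : p < 1) : Summable (nbPMF r p) := by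
  set q : ℝ := (1 + p) / 2 with hq
  have hpq : p < q := by rw [hq]; linarith
  have hq1 : q < 1 := by rw [hq]; linarith
  apply summable_of_ratio_norm_eventually_le hq1
  have htend : Tendsto (fun n : ℕ => p * (r + n) / (n + 1)) atTop (nhds p) := by
    have h1 : Tendsto (fun n : ℕ => (r + n) / (n + 1)) atTop (nhds 1) := by
      have ht := Filter.Tendsto.div_atTop (f := fun n : ℕ => r - 1) (l := atTop)
        tendsto_const_nhds (tendsto_atTop_add_const_right _ 1 tendsto_natCast_atTop_atTop)
      have h2 : (fun n : ℕ => (r + n) / (n + 1)) = fun n : ℕ => (r - 1) / (n + 1) + 1 := by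
        funext n
        have : ((n:ℝ) + 1) ≠ 0 := by positivity
        field_simp
        ring
      rw [h2]
      simpa using ht.add tendsto_const_nhds
    have := h1.const_mul p
    simpa [mul_comm, mul_div_assoc] using this
  filter_upwards [htend.eventually_lt_const hpq] with n hn
  have hpin : 0 < nbPMF r p n := nbPMF_pos hr hp0 hp1 n
  have hpin1 : 0 < nbPMF r p (n+1) := nbPMF_pos hr hp0 hp1 (n+1)
  have hstep := nbPMF_step (p := p) hr n
  rw [Real.norm_eq_abs, Real.norm_eq_abs, abs_of_pos hpin, abs_of_pos hpin1]
  have hn1 : (0:ℝ) < (n:ℝ) + 1 := by positivity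
  rw [div_lt_iff₀ hn1] at hn
  nlinarith [hpin, hpin1]

/-- partial weighted sum -/
noncomputable def Sw (r p : ℝ) (f : ℕ → ℝ) (n i : ℕ) : ℝ :=
  ∑ k ∈ Finset.Icc n i, f k * nbPMF r p k

/-- tail weighted sum -/
noncomputable def Tw (r p : ℝ) (f : ℕ → ℝ) (n : ℕ) : ℝ :=
  ∑' k, if n ≤ k then f k * nbPMF r p k else 0

lemma Tw_summable (hr : 0 < r) (hp0 : 0 < p) (hp1 : p < 1) {f : ℕ → ℝ} (n : ℕ)
    (hf0 : ∀ k, n ≤ k → 0 ≤ f k) (hf1 : ∀ k, n ≤ k → f k ≤ 1) :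
    Summable (fun k => if n ≤ k then f k * nbPMF r p k else 0) := by
  apply Summable.of_nonneg_of_le (f := nbPMF r p) ?h1 ?h2 (nbPMF_summable hr hp0 hp1)
  · intro k
    by_cases h : n ≤ k <;> simp [h]
    exact mul_nonneg (hf0 k h) (nbPMF_pos hr hp0 hp1 k).le
  · intro k
    by_cases h : n ≤ k <;> simp [h]
    · calc f k * nbPMF r p k ≤ 1 * nbPMF r p k :=
            mul_le_mul_of_nonneg_right (hf1 k h) (nbPMF_pos hr hp0 hp1 k).le
        _ = nbPMF r p k := one_mul _
    · exact (nbPMF_pos hr hp0 hp1 k).le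

lemma Tw_nonneg (hr : 0 < r) (hp0 : 0 < p) (hp1 : p < 1) {f : ℕ → ℝ} (n : ℕ)
    (hf0 : ∀ k, n ≤ k → 0 ≤ f k) : 0 ≤ Tw r p f n := by
  apply tsum_nonneg
  intro k
  by_cases h : n ≤ k <;> simp [h]
  exact mul_nonneg (hf0 k h) (nbPMF_pos hr hp0 hp1 k).le

/-- splitting the tail sum -/
lemma Tw_split (hr : 0 < r) (hp0 : 0 < p) (hp1 : p < 1) {f : ℕ → ℝ} {n i : ℕ} (hni : n ≤ i)
    (hf0 : ∀ k, n ≤ k → 0 ≤ f k) (hf1 : ∀ k, n ≤ k → f k ≤ 1) :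
    Tw r p f n = Sw r p f n i + Tw r p f (i+1) := by
  have hsum1 : Summable (fun k => if i+1 ≤ k then f k * nbPMF r p k else 0) :=
    Tw_summable hr hp0 hp1 (i+1) (fun k hk => hf0 k (le_trans (by omega) hk))
      (fun k hk => hf1 k (le_trans (by omega) hk))
  have hsum2 : Summable (fun k => if n ≤ k ∧ k ≤ i then f k * nbPMF r p k else 0) := by
    apply summable_of_finite_support
    apply Set.Finite.subset (Set.finite_Icc n i)
    intro k hk
    simp only [Function.mem_support] at hk
    by_contra hmem
    simp only [Set.mem_Icc, not_and_or] at hmem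
    apply hk
    rw [if_neg]
    omega
  have hpt : (fun k => if n ≤ k then f k * nbPMF r p k else 0)
      = fun k => (if n ≤ k ∧ k ≤ i then f k * nbPMF r p k else 0)
        + (if i+1 ≤ k then f k * nbPMF r p k else 0) := by
    funext k
    by_cases h1 : n ≤ k
    · by_cases h2 : k ≤ i
      · rw [if_pos h1, if_pos ⟨h1, h2⟩, if_neg (by omega)]; ring
      · rw [if_pos h1, if_neg (by omega), if_pos (by omega)]; ring
    · rw [if_neg h1, if_neg (by omega), if_neg (by omega)]; ring
  have : Tw r p f n = (∑' k, if n ≤ k ∧ k ≤ i then f k * nbPMF r p k else 0) + Tw r p f (i+1) := by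
    rw [Tw, hpt, Summable.tsum_add hsum2 hsum1]; rfl
  rw [this]
  congr 1
  rw [tsum_eq_sum (s := Finset.Icc n i)]
  · apply Finset.sum_congr rfl
    intro k hk
    simp only [Finset.mem_Icc] at hk
    rw [if_pos hk]
  · intro k hk
    simp only [Finset.mem_Icc] at hk
    rw [if_neg hk]

/-- the tail of the nbPMF, denominator of nbCondProb -/
noncomputable def tailP (r p : ℝ) (n : ℕ) : ℝ := ∑' k, if n ≤ k then nbPMF r p k else 0

lemma tailP_eq_Tw (n : ℕ) : tailP r p n = Tw r p (fun _ => 1) n := by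
  apply tsum_congr; intro k; by_cases h : n ≤ k <;> simp [h, Tw]

lemma tailP_pos (hr : 0 < r) (hp0 : 0 < p) (hp1 : p < 1) (n : ℕ) : 0 < tailP r p n := by
  have hsum : Summable (fun k => if n ≤ k then nbPMF r p k else 0) := by
    have := Tw_summable hr hp0 hp1 (f := fun _ => 1) n (fun _ _ => zero_le_one)
      (fun _ _ => le_refl 1)
    simpa [Tw] using this
  have h1 : nbPMF r p n ≤ tailP r p n := by
    have := Summable.le_tsum hsum n (fun j _ => by by_cases h : n ≤ j <;>
      simp [h, (nbPMF_pos hr hp0 hp1 j).le])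
    simpa [tailP] using this
  exact lt_of_lt_of_le (nbPMF_pos hr hp0 hp1 n) h1

lemma Sw_nonneg (hr : 0 < r) (hp0 : 0 < p) (hp1 : p < 1) {f : ℕ → ℝ} {n i : ℕ}
    (hf0 : ∀ k, n ≤ k → 0 ≤ f k) : 0 ≤ Sw r p f n i := by
  apply Finset.sum_nonneg
  intro k hk
  simp only [Finset.mem_Icc] at hk
  exact mul_nonneg (hf0 k hk.1) (nbPMF_pos hr hp0 hp1 k).le

lemma Sw_le (hr : 0 < r) (hp0 : 0 < p) (hp1 : p < 1) {f : ℕ → ℝ} {n i : ℕ}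
    (hf1 : ∀ k, n ≤ k → f k ≤ 1) : Sw r p f n i ≤ Sw r p (fun _ => 1) n i := by
  apply Finset.sum_le_sum
  intro k hk
  simp only [Finset.mem_Icc] at hk
  calc f k * nbPMF r p k ≤ 1 * nbPMF r p k :=
        mul_le_mul_of_nonneg_right (hf1 k hk.1) (nbPMF_pos hr hp0 hp1 k).le
    _ = 1 * nbPMF r p k := rfl

lemma Tw_le (hr : 0 < r) (hp0 : 0 < p) (hp1 : p < 1) {f : ℕ → ℝ} (n : ℕ)
    (hf0 : ∀ k, n ≤ k → 0 ≤ f k) (hf1 : ∀ k, n ≤ k → f k ≤ 1) :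
    Tw r p f n ≤ tailP r p n := by
  rw [tailP_eq_Tw]
  apply Summable.tsum_le_tsum ?_ (Tw_summable hr hp0 hp1 n hf0 hf1)
    (Tw_summable hr hp0 hp1 n (fun _ _ => zero_le_one) (fun _ _ => le_refl 1))
  intro k
  by_cases h : n ≤ k <;> simp [h]
  calc f k * nbPMF r p k ≤ 1 * nbPMF r p k :=
        mul_le_mul_of_nonneg_right (hf1 k h) (nbPMF_pos hr hp0 hp1 k).le
    _ = nbPMF r p k := one_mul _

/-- indicator function of a set -/
noncomputable def indA (A : Set ℕ) (k : ℕ) : ℝ := if k ∈ A then 1 else 0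

lemma indA_nonneg (A : Set ℕ) (k : ℕ) : 0 ≤ indA A k := by
  unfold indA; by_cases h : k ∈ A <;> simp [h]
lemma indA_le_one (A : Set ℕ) (k : ℕ) : indA A k ≤ 1 := by
  unfold indA; by_cases h : k ∈ A <;> simp [h]

/-- canonical Stein solution numerator -/
noncomputable def SS (r p : ℝ) (f : ℕ → ℝ) (n i : ℕ) : ℝ :=
  Sw r p f n i - (Tw r p f n / tailP r p n) * Sw r p (fun _ => 1) n i

lemma nbCondProb_eq (n : ℕ) (A : Set ℕ) :
    nbCondProb r p n A = Tw r p (indA A) n / tailP r p n := by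
  unfold nbCondProb Tw tailP indA
  congr 1
  apply tsum_congr
  intro k
  by_cases h1 : k ∈ A <;> by_cases h2 : n ≤ k <;> simp [h1, h2]

/-- Any solution of the Stein equation has values given by the canonical formula. -/
lemma sol_formula (hr : 0 < r) (hp0 : 0 < p) (hp1 : p < 1) {n : ℕ} {A : Set ℕ} {g : ℕ → ℝ}
    (hg : IsNBSteinSol r p n A g) :
    ∀ i, n ≤ i → p * (r + i) * nbPMF r p i * g (i + 1) = SS r p (indA A) n i := by
  intro i hi
  induction i, hi using Nat.le_induction with
  | base =>
    have h := hg n le_rfl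
    rw [if_neg (lt_irrefl n)] at h
    have hIcc : ∀ f : ℕ → ℝ, Sw r p f n n = f n * nbPMF r p n := by
      intro f; unfold Sw; rw [Finset.Icc_self, Finset.sum_singleton]
    rw [SS, hIcc, hIcc, nbCondProb_eq] at *
    have : p * (r + ↑n) * g (n+1) = indA A n - Tw r p (indA A) n / tailP r p n := by
      rw [indA]; linarith [h]
    calc p * (r + ↑n) * nbPMF r p n * g (n + 1)
        = (p * (r + ↑n) * g (n+1)) * nbPMF r p n := by ring
      _ = (indA A n - Tw r p (indA A) n / tailP r p n) * nbPMF r p n := by rw [this]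
      _ = indA A n * nbPMF r p n - Tw r p (indA A) n / tailP r p n * (1 * nbPMF r p n) := by ring
  | succ i hi ih =>
    have h := hg (i+1) (by omega)
    rw [if_pos (by omega), nbCondProb_eq] at h
    have hcast : ((i+1 : ℕ) : ℝ) = (i : ℝ) + 1 := by push_cast; ring
    have hSS : ∀ f : ℕ → ℝ, SS r p f n (i+1) =
        SS r p f n i + (f (i+1) - Tw r p f n / tailP r p n * 1) * nbPMF r p (i+1) := by
      intro f
      unfold SS Sw
      rw [Finset.sum_Icc_succ_top (by omega : n ≤ i + 1),
        Finset.sum_Icc_succ_top (by omega : n ≤ i + 1)]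
      ring
    rw [hSS]
    have hstep := nbPMF_step (p := p) hr i
    have hind : (if i+1 ∈ A then (1:ℝ) else 0) = indA A (i+1) := rfl
    rw [hind] at h
    push_cast at h ⊢
    linear_combination (nbPMF r p (i+1)) * h + g (i+1) * hstep + ih

lemma SS_succ (f : ℕ → ℝ) {n i : ℕ} (h : n ≤ i) :
    SS r p f n (i+1) = SS r p f n i
      + (f (i+1) - Tw r p f n / tailP r p n) * nbPMF r p (i+1) := by
  unfold SS Sw
  rw [Finset.sum_Icc_succ_top (by omega : n ≤ i + 1),
    Finset.sum_Icc_succ_top (by omega : n ≤ i + 1)]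
  ring

lemma SS_base (f : ℕ → ℝ) (n : ℕ) :
    SS r p f n n = (f n - Tw r p f n / tailP r p n) * nbPMF r p n := by
  unfold SS Sw
  rw [Finset.Icc_self, Finset.sum_singleton, Finset.sum_singleton]
  ring

/-- the canonical Stein solution -/
noncomputable def gcan (r p : ℝ) (n : ℕ) (A : Set ℕ) (i : ℕ) : ℝ :=
  if n + 1 ≤ i then
    SS r p (indA A) n (i-1) / (p * (r + ((i-1 : ℕ):ℝ)) * nbPMF r p (i-1))
  else 0

lemma gcan_eval (n : ℕ) (A : Set ℕ) (i : ℕ) (h : n ≤ i) :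
    gcan r p n A (i+1) = SS r p (indA A) n i / (p * (r + (i:ℝ)) * nbPMF r p i) := by
  unfold gcan
  rw [if_pos (by omega : n + 1 ≤ i + 1)]
  simp

lemma gcan_sol (hr : 0 < r) (hp0 : 0 < p) (hp1 : p < 1) (n : ℕ) (A : Set ℕ) :
    IsNBSteinSol r p n A (gcan r p n A) := by
  intro i hi
  have hd : ∀ j : ℕ, p * (r + (j:ℝ)) * nbPMF r p j ≠ 0 := by
    intro j
    have := nbPMF_pos hr hp0 hp1 j
    positivity
  rw [nbCondProb_eq]
  rcases Nat.eq_or_lt_of_le hi with heq | hlt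
  · subst heq
    rw [if_neg (lt_irrefl n), gcan_eval n A n le_rfl, SS_base]
    have hπ : nbPMF r p n ≠ 0 := (nbPMF_pos hr hp0 hp1 n).ne'
    have hpri : p * (r + (n:ℝ)) ≠ 0 := by positivity
    rw [show (if n ∈ A then (1:ℝ) else 0) = indA A n from rfl]
    field_simp
    ring
  · obtain ⟨j, rfl⟩ : ∃ j, i = j + 1 := ⟨i - 1, by omega⟩
    have hnj : n ≤ j := by omega
    rw [if_pos hlt, gcan_eval n A (j+1) (by omega), gcan_eval n A j hnj,
      SS_succ (indA A) hnj]
    have hπ1 : nbPMF r p (j+1) ≠ 0 := (nbPMF_pos hr hp0 hp1 (j+1)).ne'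
    have hπ0 : nbPMF r p j ≠ 0 := (nbPMF_pos hr hp0 hp1 j).ne'
    have hpr1 : p * (r + ((j:ℝ)+1)) ≠ 0 := by positivity
    have hpr0 : p * (r + (j:ℝ)) ≠ 0 := by positivity
    have hstep := nbPMF_step (p := p) hr j
    rw [show (if j+1 ∈ A then (1:ℝ) else 0) = indA A (j+1) from rfl]
    have hj1 : ((j:ℝ) + 1) ≠ 0 := by positivity
    rw [show p * (r + (j:ℝ)) * nbPMF r p j = ((j:ℝ)+1) * nbPMF r p (j+1) from hstep.symm]
    push_cast
    field_simp
    ring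

/-- `SS·T = u·R − v·P` representation. -/
lemma SS_rep (hr : 0 < r) (hp0 : 0 < p) (hp1 : p < 1) {f : ℕ → ℝ} {n i : ℕ} (hni : n ≤ i)
    (hf0 : ∀ k, n ≤ k → 0 ≤ f k) (hf1 : ∀ k, n ≤ k → f k ≤ 1) :
    SS r p f n i * tailP r p n =
      Sw r p f n i * tailP r p (i+1) - Tw r p f (i+1) * Sw r p (fun _ => 1) n i := by
  have hT : tailP r p n ≠ 0 := (tailP_pos hr hp0 hp1 n).ne'
  have h1 : Tw r p f n = Sw r p f n i + Tw r p f (i+1) := Tw_split hr hp0 hp1 hni hf0 hf1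
  have h2 : tailP r p n = Sw r p (fun _ => 1) n i + tailP r p (i+1) := by
    rw [tailP_eq_Tw n, tailP_eq_Tw (i+1)]
    exact Tw_split hr hp0 hp1 hni (fun _ _ => zero_le_one) (fun _ _ => le_refl 1)
  have key : SS r p f n i * tailP r p n =
      Sw r p f n i * tailP r p n - Tw r p f n * Sw r p (fun _ => 1) n i := by
    rw [SS]
    field_simp
  rw [key, h1, h2]
  ring

lemma SS_abs_le (hr : 0 < r) (hp0 : 0 < p) (hp1 : p < 1) {f : ℕ → ℝ} {n i : ℕ} (hni : n ≤ i)
    (hf0 : ∀ k, n ≤ k → 0 ≤ f k) (hf1 : ∀ k, n ≤ k → f k ≤ 1) :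
    |SS r p f n i| ≤ Sw r p (fun _ => 1) n i * tailP r p (i+1) / tailP r p n := by
  have hT : 0 < tailP r p n := tailP_pos hr hp0 hp1 n
  have hrep := SS_rep hr hp0 hp1 hni hf0 hf1
  have hu0 : 0 ≤ Sw r p f n i := Sw_nonneg hr hp0 hp1 hf0
  have huP : Sw r p f n i ≤ Sw r p (fun _ => 1) n i := Sw_le hr hp0 hp1 hf1
  have hv0 : 0 ≤ Tw r p f (i+1) :=
    Tw_nonneg hr hp0 hp1 (i+1) (fun k hk => hf0 k (le_trans hni (by omega)))
  have hvR : Tw r p f (i+1) ≤ tailP r p (i+1) :=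
    Tw_le hr hp0 hp1 (i+1) (fun k hk => hf0 k (le_trans hni (by omega)))
      (fun k hk => hf1 k (le_trans hni (by omega)))
  have hP0 : 0 ≤ Sw r p (fun _ => 1) n i := Sw_nonneg hr hp0 hp1 (fun _ _ => zero_le_one)
  have hR0 : 0 ≤ tailP r p (i+1) := (tailP_pos hr hp0 hp1 (i+1)).le
  rw [abs_le]
  constructor
  · have hstep : -(Sw r p (fun _ => 1) n i * tailP r p (i+1)) ≤ SS r p f n i * tailP r p n := by
      nlinarith
    calc -(Sw r p (fun _ => 1) n i * tailP r p (i+1) / tailP r p n)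
        = -(Sw r p (fun _ => 1) n i * tailP r p (i+1)) / tailP r p n := by ring
      _ ≤ SS r p f n i := by
          rw [div_le_iff₀ hT]
          nlinarith
  · rw [le_div_iff₀ hT]
    nlinarith

/-- indicator of `Icc n i` attains the extremal value. -/
lemma SS_Icc_val (hr : 0 < r) (hp0 : 0 < p) (hp1 : p < 1) {n i : ℕ} (hni : n ≤ i) :
    SS r p (indA (Set.Icc n i)) n i = Sw r p (fun _ => 1) n i * tailP r p (i+1) / tailP r p n := by
  have hT : tailP r p n ≠ 0 := (tailP_pos hr hp0 hp1 n).ne'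
  have hrep := SS_rep hr hp0 hp1 hni (f := indA (Set.Icc n i))
    (fun k _ => by unfold indA; by_cases h : k ∈ Set.Icc n i <;> simp [h])
    (fun k _ => by unfold indA; by_cases h : k ∈ Set.Icc n i <;> simp [h])
  have hu : Sw r p (indA (Set.Icc n i)) n i = Sw r p (fun _ => 1) n i := by
    unfold Sw
    apply Finset.sum_congr rfl
    intro k hk
    simp only [Finset.mem_Icc] at hk
    unfold indA
    rw [if_pos (by simpa using hk)]
  have hv : Tw r p (indA (Set.Icc n i)) (i+1) = 0 := by
    unfold Tw
    convert tsum_zero with k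
    by_cases h : i + 1 ≤ k
    · rw [if_pos h]
      unfold indA
      rw [if_neg (by simp only [Set.mem_Icc]; omega)]
      ring
    · rw [if_neg h]
  rw [hu, hv] at hrep
  rw [eq_div_iff hT]
  linarith [hrep]

lemma opt_le {a x P : ℝ} (hx : 0 ≤ x) (hxP : x ≤ P) :
    x * a ≤ (if 0 ≤ a then P else 0) * a := by
  by_cases h : 0 ≤ a
  · rw [if_pos h]; exact mul_le_mul_of_nonneg_right hxP h
  · rw [if_neg h, zero_mul]
    exact mul_nonpos_of_nonneg_of_nonpos hx (by linarith)

lemma Psi_rep (hr : 0 < r) (hp0 : 0 < p) (hp1 : p < 1) {f : ℕ → ℝ} {n w : ℕ} (hnw : n ≤ w)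
    (hf0 : ∀ k, n ≤ k → 0 ≤ f k) (hf1 : ∀ k, n ≤ k → f k ≤ 1)
    (d1 d2 : ℝ) (hd1 : d1 ≠ 0) (hd2 : d2 ≠ 0) :
    (SS r p f n (w+1) / d2 - SS r p f n w / d1) * tailP r p n =
      Sw r p f n w * (tailP r p (w+2) / d2 - tailP r p (w+1) / d1)
      + f (w+1) * nbPMF r p (w+1) * (tailP r p (w+2) / d2 + Sw r p (fun _ => 1) n w / d1)
      + Tw r p f (w+2) * (Sw r p (fun _ => 1) n w / d1 - Sw r p (fun _ => 1) n (w+1) / d2) := by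
  have h1 := SS_rep hr hp0 hp1 hnw hf0 hf1
  have h2 := SS_rep hr hp0 hp1 (show n ≤ w + 1 by omega) hf0 hf1
  have hsplit : Tw r p f (w+1) = f (w+1) * nbPMF r p (w+1) + Tw r p f (w+2) := by
    have := Tw_split hr hp0 hp1 (le_refl (w+1))
      (fun k hk => hf0 k (by omega)) (fun k hk => hf1 k (by omega))
    rwa [Sw, Finset.Icc_self, Finset.sum_singleton] at this
  have hu' : Sw r p f n (w+1) = Sw r p f n w + f (w+1) * nbPMF r p (w+1) := by
    rw [Sw, Sw, Finset.sum_Icc_succ_top (by omega : n ≤ w + 1)]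
  linear_combination h2 / d2 - h1 / d1 + (tailP r p (w+2) / d2) * hu'
    + (Sw r p (fun _ => 1) n w / d1) * hsplit

set_option maxHeartbeats 1000000 in
/-- For any `[0,1]`-valued test function, the Δg functional is dominated by
an indicator test function. -/
lemma Psi_extremal (hr : 0 < r) (hp0 : 0 < p) (hp1 : p < 1) {f : ℕ → ℝ} {n w : ℕ} (hnw : n ≤ w)
    (hf0 : ∀ k, n ≤ k → 0 ≤ f k) (hf1 : ∀ k, n ≤ k → f k ≤ 1)
    (d1 d2 : ℝ) (hd1 : 0 < d1) (hd2 : 0 < d2) (σ : ℝ) (hσ : σ = 1 ∨ σ = -1) :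
    ∃ A' : Set ℕ, A' ⊆ Set.Ici n ∧
      σ * (SS r p f n (w+1) / d2 - SS r p f n w / d1) ≤
        σ * (SS r p (indA A') n (w+1) / d2 - SS r p (indA A') n w / d1) := by
  set a : ℝ := tailP r p (w+2) / d2 - tailP r p (w+1) / d1 with ha
  set b : ℝ := tailP r p (w+2) / d2 + Sw r p (fun _ => 1) n w / d1 with hb
  set e : ℝ := Sw r p (fun _ => 1) n w / d1 - Sw r p (fun _ => 1) n (w+1) / d2 with he
  refine ⟨{k | (n ≤ k ∧ k ≤ w ∧ 0 ≤ σ * a) ∨ (k = w+1 ∧ 0 ≤ σ * b) ∨ (w+2 ≤ k ∧ 0 ≤ σ * e)},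
    ?_, ?_⟩
  · intro k hk
    simp only [Set.mem_setOf_eq] at hk
    simp only [Set.mem_Ici]
    omega
  set A' : Set ℕ :=
    {k | (n ≤ k ∧ k ≤ w ∧ 0 ≤ σ * a) ∨ (k = w+1 ∧ 0 ≤ σ * b) ∨ (w+2 ≤ k ∧ 0 ≤ σ * e)} with hA'
  have hind0 : ∀ k, n ≤ k → 0 ≤ indA A' k := fun k _ => by
    unfold indA; by_cases h : k ∈ A' <;> simp [h]
  have hind1 : ∀ k, n ≤ k → indA A' k ≤ 1 := fun k _ => by
    unfold indA; by_cases h : k ∈ A' <;> simp [h]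
  have hT : 0 < tailP r p n := tailP_pos hr hp0 hp1 n
  have hrf := Psi_rep hr hp0 hp1 hnw hf0 hf1 d1 d2 hd1.ne' hd2.ne'
  have hri := Psi_rep hr hp0 hp1 hnw hind0 hind1 d1 d2 hd1.ne' hd2.ne'
  rw [← ha, ← hb, ← he] at hrf hri
  -- compute the three pieces for the indicator
  have hu : Sw r p (indA A') n w = (if 0 ≤ σ * a then 1 else 0) * Sw r p (fun _ => 1) n w := by
    rw [Sw, Sw, Finset.mul_sum]
    apply Finset.sum_congr rfl
    intro k hk
    simp only [Finset.mem_Icc] at hk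
    by_cases h : 0 ≤ σ * a
    · rw [if_pos h, one_mul, indA,
        if_pos (show k ∈ A' from Or.inl ⟨hk.1, hk.2, h⟩)]
    · rw [if_neg h, zero_mul, indA, if_neg, zero_mul]
      rintro (⟨_, _, hc⟩ | ⟨hk1, _⟩ | ⟨hk2, _⟩)
      · exact h hc
      · omega
      · omega
  have hφ : indA A' (w+1) = if 0 ≤ σ * b then 1 else 0 := by
    by_cases h : 0 ≤ σ * b
    · rw [if_pos h, indA, if_pos (show w + 1 ∈ A' from Or.inr (Or.inl ⟨rfl, h⟩))]
    · rw [if_neg h, indA, if_neg]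
      rintro (⟨_, hk2, _⟩ | ⟨_, hc⟩ | ⟨hk2, _⟩)
      · omega
      · exact h hc
      · omega
  have hv : Tw r p (indA A') (w+2) = (if 0 ≤ σ * e then 1 else 0) * tailP r p (w+2) := by
    rw [Tw, tailP, ← tsum_mul_left]
    apply tsum_congr
    intro k
    by_cases hk : w + 2 ≤ k
    · rw [if_pos hk, if_pos hk]
      by_cases h : 0 ≤ σ * e
      · rw [if_pos h, one_mul, indA, if_pos (show k ∈ A' from Or.inr (Or.inr ⟨hk, h⟩))]
        exact one_mul _
      · rw [if_neg h, zero_mul, indA, if_neg, zero_mul]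
        rintro (⟨_, hk2, _⟩ | ⟨hk1, _⟩ | ⟨_, hc⟩)
        · omega
        · omega
        · exact h hc
    · rw [if_neg hk, if_neg hk, mul_zero]
  -- bounds for f pieces
  have hu0 : 0 ≤ Sw r p f n w := Sw_nonneg hr hp0 hp1 hf0
  have huP : Sw r p f n w ≤ Sw r p (fun _ => 1) n w := Sw_le hr hp0 hp1 hf1
  have hφ0 : 0 ≤ f (w+1) * nbPMF r p (w+1) :=
    mul_nonneg (hf0 _ (by omega)) (nbPMF_pos hr hp0 hp1 _).le
  have hφ1 : f (w+1) * nbPMF r p (w+1) ≤ nbPMF r p (w+1) := by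
    calc f (w+1) * nbPMF r p (w+1) ≤ 1 * nbPMF r p (w+1) :=
          mul_le_mul_of_nonneg_right (hf1 _ (by omega)) (nbPMF_pos hr hp0 hp1 _).le
      _ = nbPMF r p (w+1) := one_mul _
  have hv0 : 0 ≤ Tw r p f (w+2) :=
    Tw_nonneg hr hp0 hp1 (w+2) (fun k hk => hf0 k (by omega))
  have hvR : Tw r p f (w+2) ≤ tailP r p (w+2) :=
    Tw_le hr hp0 hp1 (w+2) (fun k hk => hf0 k (by omega)) (fun k hk => hf1 k (by omega))
  -- put it together
  have key : σ * (SS r p f n (w+1) / d2 - SS r p f n w / d1) * tailP r p n ≤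
      σ * (SS r p (indA A') n (w+1) / d2 - SS r p (indA A') n w / d1) * tailP r p n := by
    have e1 : σ * (SS r p f n (w+1) / d2 - SS r p f n w / d1) * tailP r p n =
        Sw r p f n w * (σ * a) + (f (w+1) * nbPMF r p (w+1)) * (σ * b)
          + Tw r p f (w+2) * (σ * e) := by
      rw [mul_assoc, hrf]; ring
    have e2 : σ * (SS r p (indA A') n (w+1) / d2 - SS r p (indA A') n w / d1) * tailP r p n =
        ((if 0 ≤ σ * a then Sw r p (fun _ => 1) n w else 0)) * (σ * a)
          + (if 0 ≤ σ * b then nbPMF r p (w+1) else 0) * (σ * b)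
          + (if 0 ≤ σ * e then tailP r p (w+2) else 0) * (σ * e) := by
      rw [mul_assoc, hri, hu, hφ, hv]
      by_cases h1 : 0 ≤ σ * a <;> by_cases h2 : 0 ≤ σ * b <;> by_cases h3 : 0 ≤ σ * e <;>
        simp [h1, h2, h3] <;> ring
    rw [e1, e2]
    have o1 := opt_le (a := σ * a) hu0 huP
    have o2 := opt_le (a := σ * b) hφ0 hφ1
    have o3 := opt_le (a := σ * e) hv0 hvR
    linarith
  exact le_of_mul_le_mul_right key hT

/-- the tail is bounded by a constant times the pmf -/
lemma tail_bound (hr : 0 < r) (hp0 : 0 < p) (hp1 : p < 1) :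
    ∃ C : ℝ, 0 ≤ C ∧ ∀ n, tailP r p n ≤ C * nbPMF r p n := by
  set q : ℝ := (1 + p) / 2 with hq
  have hpq : p < q := by rw [hq]; linarith
  have hq1 : q < 1 := by rw [hq]; linarith
  have hq0 : 0 < q := by rw [hq]; linarith
  set N : ℕ := ⌈p * r / (q - p)⌉₊ with hN
  have hratio : ∀ k, N ≤ k → nbPMF r p (k+1) ≤ q * nbPMF r p k := by
    intro k hk
    have hkN : p * r / (q - p) ≤ (k : ℝ) :=
      le_trans (Nat.le_ceil _) (by exact_mod_cast Nat.cast_le.mpr hk)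
    have h1 : p * r ≤ (q - p) * k := by
      rw [div_le_iff₀ (by linarith : (0:ℝ) < q - p)] at hkN
      linarith
    have h2 : p * (r + k) ≤ q * ((k:ℝ) + 1) := by nlinarith [hq0]
    have hstep := nbPMF_step (p := p) hr k
    have hk1 : (0:ℝ) < (k:ℝ) + 1 := by positivity
    have hπ : 0 < nbPMF r p k := nbPMF_pos hr hp0 hp1 k
    rw [← mul_le_mul_iff_right₀ hk1]
    calc ((k:ℝ)+1) * nbPMF r p (k+1) = p * (r + k) * nbPMF r p k := hstep
      _ ≤ q * ((k:ℝ)+1) * nbPMF r p k := by nlinarith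
      _ = ((k:ℝ)+1) * (q * nbPMF r p k) := by ring
  have hgeom : ∀ n, N ≤ n → ∀ j : ℕ, nbPMF r p (n + j) ≤ q ^ j * nbPMF r p n := by
    intro n hn j
    induction j with
    | zero => simp
    | succ j ih =>
      have := hratio (n + j) (by omega)
      calc nbPMF r p (n + (j+1)) = nbPMF r p ((n+j) + 1) := by ring_nf
        _ ≤ q * nbPMF r p (n+j) := this
        _ ≤ q * (q ^ j * nbPMF r p n) := by nlinarith
        _ = q ^ (j+1) * nbPMF r p n := by ring
  have hq1' : (0:ℝ) < 1 - q := by linarith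
  have htail : ∀ n, N ≤ n → tailP r p n ≤ (1 - q)⁻¹ * nbPMF r p n := by
    intro n hn
    have hinj : Function.Injective (fun j : ℕ => n + j) := add_right_injective n
    have hsupp : Function.support (fun k : ℕ => if n ≤ k then nbPMF r p n * q ^ (k - n) else 0)
        ⊆ Set.range (fun j : ℕ => n + j) := by
      intro x hx
      by_cases hnx : n ≤ x
      · exact ⟨x - n, by show n + (x - n) = x; omega⟩
      · exfalso
        apply hx
        simp only [if_neg hnx]
    have hcomp : ∀ j : ℕ, (if n ≤ n + j then nbPMF r p n * q ^ (n + j - n) else 0)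
        = nbPMF r p n * q ^ j := by
      intro j
      rw [if_pos (by omega : n ≤ n + j), Nat.add_sub_cancel_left]
    have htsumF : (∑' k : ℕ, if n ≤ k then nbPMF r p n * q ^ (k - n) else 0)
        = nbPMF r p n * (1 - q)⁻¹ := by
      rw [← Function.Injective.tsum_eq hinj hsupp]
      calc (∑' j : ℕ, if n ≤ n + j then nbPMF r p n * q ^ (n + j - n) else 0)
          = ∑' j : ℕ, nbPMF r p n * q ^ j := tsum_congr hcomp
        _ = nbPMF r p n * (1 - q)⁻¹ := by
            rw [tsum_mul_left, tsum_geometric_of_lt_one hq0.le hq1]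
    have hsumF : Summable (fun k : ℕ => if n ≤ k then nbPMF r p n * q ^ (k - n) else 0) := by
      have hgs : Summable (fun j : ℕ => nbPMF r p n * q ^ j) :=
        (summable_geometric_of_lt_one hq0.le hq1).mul_left _
      have hzero : ∀ x ∉ Set.range (fun j : ℕ => n + j),
          (if n ≤ x then nbPMF r p n * q ^ (x - n) else 0) = 0 := by
        intro x hx
        by_cases hnx : n ≤ x
        · exact absurd ⟨x - n, by show n + (x - n) = x; omega⟩ hx
        · simp only [if_neg hnx]
      apply (Function.Injective.summable_iff hinj hzero).mp
      apply hgs.congr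
      intro j
      simp only [Function.comp_apply]
      exact (hcomp j).symm
    have hle : tailP r p n ≤ ∑' k : ℕ, if n ≤ k then nbPMF r p n * q ^ (k - n) else 0 := by
      rw [tailP]
      apply Summable.tsum_le_tsum ?_ ?_ hsumF
      · intro k
        by_cases h : n ≤ k
        · rw [if_pos h, if_pos h]
          have := hgeom n hn (k - n)
          rw [show n + (k - n) = k by omega] at this
          linarith
        · rw [if_neg h, if_neg h]
      · have hS : Summable (fun k => if n ≤ k then (fun _ => (1:ℝ)) k * nbPMF r p k else 0) := by
          apply Summable.of_nonneg_of_le (f := nbPMF r p) ?h1 ?h2 (nbPMF_summable hr hp0 hp1)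
          · intro k; by_cases h : n ≤ k <;> simp [h, (nbPMF_pos hr hp0 hp1 k).le]
          · intro k; by_cases h : n ≤ k <;> simp [h, (nbPMF_pos hr hp0 hp1 k).le]
        apply hS.congr
        intro k
        by_cases h : n ≤ k <;> simp [h]
    rw [mul_comm] at htsumF
    calc tailP r p n ≤ _ := hle
      _ = (1 - q)⁻¹ * nbPMF r p n := htsumF
  refine ⟨(1 - q)⁻¹ + ∑ k ∈ Finset.range N, tailP r p k / nbPMF r p k, ?_, ?_⟩
  · have h1 : (0:ℝ) ≤ (1 - q)⁻¹ := (inv_nonneg).mpr hq1'.le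
    have h2 : (0:ℝ) ≤ ∑ k ∈ Finset.range N, tailP r p k / nbPMF r p k :=
      Finset.sum_nonneg fun k _ =>
        div_nonneg (tailP_pos hr hp0 hp1 k).le (nbPMF_pos hr hp0 hp1 k).le
    linarith
  · intro n
    have hsumpos : (0:ℝ) ≤ ∑ k ∈ Finset.range N, tailP r p k / nbPMF r p k :=
      Finset.sum_nonneg fun k _ =>
        div_nonneg (tailP_pos hr hp0 hp1 k).le (nbPMF_pos hr hp0 hp1 k).le
    have hπ : 0 < nbPMF r p n := nbPMF_pos hr hp0 hp1 n
    by_cases h : N ≤ n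
    · calc tailP r p n ≤ (1 - q)⁻¹ * nbPMF r p n := htail n h
        _ ≤ ((1 - q)⁻¹ + ∑ k ∈ Finset.range N, tailP r p k / nbPMF r p k) * nbPMF r p n := by
            nlinarith
    · have hmem : n ∈ Finset.range N := Finset.mem_range.mpr (by omega)
      have hterm : tailP r p n / nbPMF r p n
          ≤ ∑ k ∈ Finset.range N, tailP r p k / nbPMF r p k :=
        Finset.single_le_sum (f := fun k => tailP r p k / nbPMF r p k)
          (fun k _ => div_nonneg (tailP_pos hr hp0 hp1 k).le (nbPMF_pos hr hp0 hp1 k).le) hmem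
      have h1 : (0:ℝ) ≤ (1 - q)⁻¹ := (inv_nonneg).mpr hq1'.le
      have : tailP r p n = (tailP r p n / nbPMF r p n) * nbPMF r p n := by
        field_simp
      rw [this]
      apply mul_le_mul_of_nonneg_right _ hπ.le
      linarith

/-- translation of the level-(n+1) Stein numerator to level n -/
lemma ftil_eq (hr : 0 < r) (hp0 : 0 < p) (hp1 : p < 1) {n : ℕ} {A : Set ℕ}
    (hA : A ⊆ Set.Ici (n+1)) :
    ∀ i, n + 1 ≤ i →
      SS r p (indA A) (n+1) i =
        SS r p (fun k => if k = n then nbCondProb r p (n+1) A else indA A k) n i := by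
  intro i hi
  set θ := nbCondProb r p (n+1) A with hθ
  set ftil : ℕ → ℝ := fun k => if k = n then θ else indA A k with hftil
  have hT1 : 0 < tailP r p (n+1) := tailP_pos hr hp0 hp1 (n+1)
  have hθeq : θ = Tw r p (indA A) (n+1) / tailP r p (n+1) := nbCondProb_eq (n+1) A
  have hind0 : ∀ k, n+1 ≤ k → 0 ≤ indA A k := fun k _ => by
    unfold indA; by_cases h : k ∈ A <;> simp [h]
  have hind1 : ∀ k, n+1 ≤ k → indA A k ≤ 1 := fun k _ => by
    unfold indA; by_cases h : k ∈ A <;> simp [h]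
  have hθ0 : 0 ≤ θ := by
    rw [hθeq]
    exact div_nonneg (Tw_nonneg hr hp0 hp1 (n+1) hind0) hT1.le
  have hθ1 : θ ≤ 1 := by
    rw [hθeq, div_le_one hT1]
    exact Tw_le hr hp0 hp1 (n+1) hind0 hind1
  have hf0 : ∀ k, n ≤ k → 0 ≤ ftil k := by
    intro k _
    rw [hftil]
    by_cases h : k = n
    · simp only [if_pos h]; exact hθ0
    · simp only [if_neg h]
      unfold indA; by_cases h2 : k ∈ A <;> simp [h2]
  have hf1 : ∀ k, n ≤ k → ftil k ≤ 1 := by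
    intro k _
    rw [hftil]
    by_cases h : k = n
    · simp only [if_pos h]; exact hθ1
    · simp only [if_neg h]
      unfold indA; by_cases h2 : k ∈ A <;> simp [h2]
  have hfeq : ∀ k, n + 1 ≤ k → ftil k = indA A k := by
    intro k hk
    rw [hftil]
    simp only [if_neg (by omega : ¬ k = n)]
  have hnotmem : n ∉ Finset.Icc (n+1) i := by simp
  have hIcc : Finset.Icc n i = insert n (Finset.Icc (n+1) i) := by
    ext k
    simp only [Finset.mem_Icc, Finset.mem_insert]
    omega
  have hSw : ∀ f : ℕ → ℝ, Sw r p f n i = f n * nbPMF r p n + Sw r p f (n+1) i := by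
    intro f
    rw [Sw, Sw, hIcc, Finset.sum_insert hnotmem]
  have hSwf : Sw r p ftil n i = θ * nbPMF r p n + Sw r p (indA A) (n+1) i := by
    rw [hSw ftil]
    congr 1
    · rw [hftil]; simp
    · rw [Sw, Sw]
      exact Finset.sum_congr rfl fun k hk => by
        rw [hfeq k (Finset.mem_Icc.mp hk).1]
  have hSw1 : Sw r p (fun _ => 1) n i = nbPMF r p n + Sw r p (fun _ => 1) (n+1) i := by
    rw [hSw]; ring
  have hTwtail : Tw r p ftil (n+1) = Tw r p (indA A) (n+1) := by
    rw [Tw, Tw]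
    exact tsum_congr fun k => by
      by_cases h : n + 1 ≤ k
      · rw [if_pos h, if_pos h, hfeq k h]
      · rw [if_neg h, if_neg h]
  have hTwf : Tw r p ftil n = θ * nbPMF r p n + Tw r p (indA A) (n+1) := by
    rw [Tw_split hr hp0 hp1 (le_refl n) hf0 hf1, hTwtail]
    congr 1
    rw [Sw, Finset.Icc_self, Finset.sum_singleton, hftil]
    simp
  have htail : tailP r p n = nbPMF r p n + tailP r p (n+1) := by
    rw [tailP_eq_Tw n, tailP_eq_Tw (n+1),
      Tw_split hr hp0 hp1 (le_refl n) (fun _ _ => zero_le_one) (fun _ _ => le_refl 1),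
      Sw, Finset.Icc_self, Finset.sum_singleton]
    ring
  have hTwA : Tw r p (indA A) (n+1) = θ * tailP r p (n+1) := by
    rw [hθeq]
    field_simp
  have hratio : Tw r p ftil n / tailP r p n = θ := by
    rw [hTwf, htail, hTwA]
    have hd : nbPMF r p n + tailP r p (n+1) ≠ 0 := by
      have := nbPMF_pos hr hp0 hp1 n
      positivity
    field_simp
  rw [SS, SS, hratio, hSwf, hSw1, hTwA]
  have hT1' : tailP r p (n+1) ≠ 0 := hT1.ne'
  field_simp
  ring

lemma cond01 (hr : 0 < r) (hp0 : 0 < p) (hp1 : p < 1) (j : ℕ) (A : Set ℕ) :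
    0 ≤ nbCondProb r p j A ∧ nbCondProb r p j A ≤ 1 := by
  have hT : 0 < tailP r p j := tailP_pos hr hp0 hp1 j
  have hind0 : ∀ k, j ≤ k → 0 ≤ indA A k := fun k _ => by
    unfold indA; by_cases h : k ∈ A <;> simp [h]
  have hind1 : ∀ k, j ≤ k → indA A k ≤ 1 := fun k _ => by
    unfold indA; by_cases h : k ∈ A <;> simp [h]
  rw [nbCondProb_eq]
  constructor
  · exact div_nonneg (Tw_nonneg hr hp0 hp1 j hind0) hT.le
  · rw [div_le_one hT]
    exact Tw_le hr hp0 hp1 j hind0 hind1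

lemma ind01 (A : Set ℕ) : (∀ k : ℕ, 0 ≤ indA A k) ∧ (∀ k : ℕ, indA A k ≤ 1) :=
  ⟨fun k => by unfold indA; by_cases h : k ∈ A <;> simp [h],
   fun k => by unfold indA; by_cases h : k ∈ A <;> simp [h]⟩

/-- absolute value of canonical solution values, bounded by `C` -/
lemma sol_val_le (hr : 0 < r) (hp0 : 0 < p) (hp1 : p < 1) {j : ℕ} {A : Set ℕ} {g : ℕ → ℝ}
    (hg : IsNBSteinSol r p j A g) {w : ℕ} (hw : j ≤ w) {C : ℝ}
    (hC : ∀ n, tailP r p n ≤ C * nbPMF r p n) : |g (w+1)| ≤ C := by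
  have hπw : 0 < nbPMF r p w := nbPMF_pos hr hp0 hp1 w
  have hπw1 : 0 < nbPMF r p (w+1) := nbPMF_pos hr hp0 hp1 (w+1)
  have hd : 0 < p * (r + (w:ℝ)) * nbPMF r p w := by positivity
  have hT : 0 < tailP r p j := tailP_pos hr hp0 hp1 j
  have hf := sol_formula hr hp0 hp1 hg w hw
  have hgv : g (w+1) = SS r p (indA A) j w / (p * (r + (w:ℝ)) * nbPMF r p w) := by
    rw [eq_div_iff hd.ne']
    linarith [hf]
  have habs := SS_abs_le hr hp0 hp1 hw (fun k _ => (ind01 A).1 k) (fun k _ => (ind01 A).2 k)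
  -- Sw 1 ≤ tailP j
  have hsplit : tailP r p j = Sw r p (fun _ => 1) j w + tailP r p (w+1) := by
    rw [tailP_eq_Tw j, tailP_eq_Tw (w+1)]
    exact Tw_split hr hp0 hp1 hw (fun _ _ => zero_le_one) (fun _ _ => le_refl 1)
  have hR0 : 0 < tailP r p (w+1) := tailP_pos hr hp0 hp1 (w+1)
  have hSw0 : 0 ≤ Sw r p (fun _ => 1) j w := Sw_nonneg hr hp0 hp1 (fun _ _ => zero_le_one)
  have hSled : Sw r p (fun _ => 1) j w * tailP r p (w+1) / tailP r p j ≤ tailP r p (w+1) := by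
    rw [div_le_iff₀ hT]
    nlinarith
  have hb1 : |SS r p (indA A) j w| ≤ tailP r p (w+1) := le_trans habs hSled
  have hb2 : tailP r p (w+1) ≤ C * nbPMF r p (w+1) := hC (w+1)
  have hstep := nbPMF_step (p := p) hr w
  have hC0 : 0 ≤ C := by
    have := hC w
    nlinarith [hR0, hπw]
  rw [hgv, abs_div, abs_of_pos hd]
  rw [div_le_iff₀ hd]
  calc |SS r p (indA A) j w| ≤ tailP r p (w+1) := hb1
    _ ≤ C * nbPMF r p (w+1) := hb2
    _ ≤ C * (((w:ℝ)+1) * nbPMF r p (w+1)) := by nlinarith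
    _ = C * (p * (r + (w:ℝ)) * nbPMF r p w) := by rw [hstep]

lemma zero_sol (hr : 0 < r) (hp0 : 0 < p) (hp1 : p < 1) (j : ℕ) :
    IsNBSteinSol r p j (∅ : Set ℕ) (fun _ => 0) := by
  intro i hi
  have hc : nbCondProb r p j (∅ : Set ℕ) = 0 := by
    rw [nbCondProb]
    simp
  simp [hc]

lemma G1_mono (hr : 0 < r) (hp0 : 0 < p) (hp1 : p < 1) (n : ℕ) :
    nbG1 r p (n+1) ≤ nbG1 r p n := by
  obtain ⟨C, hC0, hC⟩ := tail_bound hr hp0 hp1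
  rw [nbG1, nbG1]
  have hbdd : BddAbove {x : ℝ | ∃ A : Set ℕ, A ⊆ Set.Ici n ∧ ∃ g : ℕ → ℝ,
      IsNBSteinSol r p n A g ∧ ∃ w : ℕ, n ≤ w ∧ x = |g (w + 1)|} := by
    refine ⟨C, ?_⟩
    rintro x ⟨A, hA, g, hg, w, hw, rfl⟩
    exact sol_val_le hr hp0 hp1 hg hw hC
  apply csSup_le
  · exact ⟨0, ∅, by simp, fun _ => 0, zero_sol hr hp0 hp1 (n+1), n+1, le_rfl, by simp⟩
  rintro x ⟨A, hA, g, hg, w, hw, rfl⟩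
  have hnw : n ≤ w := by omega
  have hπw : 0 < nbPMF r p w := nbPMF_pos hr hp0 hp1 w
  have hd : 0 < p * (r + (w:ℝ)) * nbPMF r p w := by positivity
  have hgv : g (w+1) = SS r p (indA A) (n+1) w / (p * (r + (w:ℝ)) * nbPMF r p w) := by
    rw [eq_div_iff hd.ne']
    linarith [sol_formula hr hp0 hp1 hg w hw]
  have htr := ftil_eq hr hp0 hp1 hA w hw
  have hf0 : ∀ k, n ≤ k → 0 ≤ (fun k => if k = n then nbCondProb r p (n+1) A else indA A k) k := by
    intro k _
    by_cases h : k = n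
    · simp only [if_pos h]; exact (cond01 hr hp0 hp1 (n+1) A).1
    · simp only [if_neg h]; exact (ind01 A).1 k
  have hf1 : ∀ k, n ≤ k → (fun k => if k = n then nbCondProb r p (n+1) A else indA A k) k ≤ 1 := by
    intro k _
    by_cases h : k = n
    · simp only [if_pos h]; exact (cond01 hr hp0 hp1 (n+1) A).2
    · simp only [if_neg h]; exact (ind01 A).2 k
  have habs := SS_abs_le hr hp0 hp1 hnw hf0 hf1
  -- the canonical competitor
  have hval : gcan r p n (Set.Icc n w) (w+1) =
      Sw r p (fun _ => 1) n w * tailP r p (w+1) / tailP r p n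
        / (p * (r + (w:ℝ)) * nbPMF r p w) := by
    rw [gcan_eval n (Set.Icc n w) w hnw, SS_Icc_val hr hp0 hp1 hnw]
  have hvnonneg : 0 ≤ gcan r p n (Set.Icc n w) (w+1) := by
    rw [hval]
    have h1 : 0 ≤ Sw r p (fun _ => 1) n w := Sw_nonneg hr hp0 hp1 (fun _ _ => zero_le_one)
    have h2 : 0 ≤ tailP r p (w+1) := (tailP_pos hr hp0 hp1 (w+1)).le
    have h3 : 0 ≤ tailP r p n := (tailP_pos hr hp0 hp1 n).le
    positivity
  have hxle : |g (w+1)| ≤ |gcan r p n (Set.Icc n w) (w+1)| := by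
    rw [abs_of_nonneg hvnonneg, hval, hgv, htr, abs_div, abs_of_pos hd]
    gcongr
  have hmem : |gcan r p n (Set.Icc n w) (w+1)| ∈ {x : ℝ | ∃ A : Set ℕ, A ⊆ Set.Ici n ∧
      ∃ g : ℕ → ℝ, IsNBSteinSol r p n A g ∧ ∃ w : ℕ, n ≤ w ∧ x = |g (w + 1)|} :=
    ⟨Set.Icc n w, fun k hk => by simp only [Set.mem_Icc] at hk; exact hk.1,
      gcan r p n (Set.Icc n w), gcan_sol hr hp0 hp1 n (Set.Icc n w), w, hnw, rfl⟩
  exact le_trans hxle (le_csSup hbdd hmem)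

set_option maxHeartbeats 1000000 in
lemma G2_mono (hr : 0 < r) (hp0 : 0 < p) (hp1 : p < 1) (n : ℕ) :
    nbG2 r p (n+1) ≤ nbG2 r p n := by
  obtain ⟨C, hC0, hC⟩ := tail_bound hr hp0 hp1
  rw [nbG2, nbG2]
  have hbdd : BddAbove {x : ℝ | ∃ A : Set ℕ, A ⊆ Set.Ici n ∧ ∃ g : ℕ → ℝ,
      IsNBSteinSol r p n A g ∧ ∃ w : ℕ, n ≤ w ∧ x = |g (w + 2) - g (w + 1)|} := by
    refine ⟨2 * C, ?_⟩
    rintro x ⟨A, hA, g, hg, w, hw, rfl⟩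
    have h1 := sol_val_le hr hp0 hp1 hg hw hC
    have h2 := sol_val_le hr hp0 hp1 hg (show n ≤ w + 1 by omega) hC
    have he : g (w + 1 + 1) = g (w + 2) := by norm_num
    rw [he] at h2
    calc |g (w+2) - g (w+1)| ≤ |g (w+2)| + |g (w+1)| := abs_sub _ _
      _ ≤ 2 * C := by linarith
  apply csSup_le
  · exact ⟨0, ∅, by simp, fun _ => 0, zero_sol hr hp0 hp1 (n+1), n+1, le_rfl, by simp⟩
  rintro x ⟨A, hA, g, hg, w, hw, rfl⟩
  have hnw : n ≤ w := by omega
  have hπw : 0 < nbPMF r p w := nbPMF_pos hr hp0 hp1 w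
  have hπw1 : 0 < nbPMF r p (w+1) := nbPMF_pos hr hp0 hp1 (w+1)
  have hd1 : 0 < p * (r + (w:ℝ)) * nbPMF r p w := by positivity
  have hd2 : 0 < p * (r + ((w+1:ℕ):ℝ)) * nbPMF r p (w+1) := by positivity
  have hg1 : g (w+1) = SS r p (indA A) (n+1) w / (p * (r + (w:ℝ)) * nbPMF r p w) := by
    rw [eq_div_iff hd1.ne']
    linarith [sol_formula hr hp0 hp1 hg w hw]
  have hg2 : g (w+2) = SS r p (indA A) (n+1) (w+1)
      / (p * (r + ((w+1:ℕ):ℝ)) * nbPMF r p (w+1)) := by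
    rw [eq_div_iff hd2.ne']
    have := sol_formula hr hp0 hp1 hg (w+1) (by omega)
    have he : g (w + 1 + 1) = g (w + 2) := by norm_num
    rw [he] at this
    linarith [this]
  have htr1 := ftil_eq hr hp0 hp1 hA w hw
  have htr2 := ftil_eq hr hp0 hp1 hA (w+1) (by omega)
  have hf0 : ∀ k, n ≤ k → 0 ≤ (fun k => if k = n then nbCondProb r p (n+1) A else indA A k) k := by
    intro k _
    by_cases h : k = n
    · simp only [if_pos h]; exact (cond01 hr hp0 hp1 (n+1) A).1
    · simp only [if_neg h]; exact (ind01 A).1 k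
  have hf1 : ∀ k, n ≤ k → (fun k => if k = n then nbCondProb r p (n+1) A else indA A k) k ≤ 1 := by
    intro k _
    by_cases h : k = n
    · simp only [if_pos h]; exact (cond01 hr hp0 hp1 (n+1) A).2
    · simp only [if_neg h]; exact (ind01 A).2 k
  obtain ⟨A1, hA1, hle1⟩ := Psi_extremal hr hp0 hp1 hnw hf0 hf1 _ _ hd1 hd2 1 (Or.inl rfl)
  obtain ⟨A2, hA2, hle2⟩ := Psi_extremal hr hp0 hp1 hnw hf0 hf1 _ _ hd1 hd2 (-1) (Or.inr rfl)
  rw [one_mul, one_mul] at hle1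
  have hle2' : - (SS r p (fun k => if k = n then nbCondProb r p (n+1) A else indA A k) n (w+1)
        / (p * (r + ((w+1:ℕ):ℝ)) * nbPMF r p (w+1))
      - SS r p (fun k => if k = n then nbCondProb r p (n+1) A else indA A k) n w
        / (p * (r + (w:ℝ)) * nbPMF r p w)) ≤
      - (SS r p (indA A2) n (w+1) / (p * (r + ((w+1:ℕ):ℝ)) * nbPMF r p (w+1))
        - SS r p (indA A2) n w / (p * (r + (w:ℝ)) * nbPMF r p w)) := by
    have := hle2
    linarith [hle2]
  -- canonical values
  have hcan : ∀ B : Set ℕ, gcan r p n B (w+2) - gcan r p n B (w+1)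
      = SS r p (indA B) n (w+1) / (p * (r + ((w+1:ℕ):ℝ)) * nbPMF r p (w+1))
        - SS r p (indA B) n w / (p * (r + (w:ℝ)) * nbPMF r p w) := by
    intro B
    have e2 : gcan r p n B (w+1+1)
        = SS r p (indA B) n (w+1) / (p * (r + ((w+1:ℕ):ℝ)) * nbPMF r p (w+1)) :=
      gcan_eval n B (w+1) (by omega)
    have e1 : gcan r p n B (w+1) = SS r p (indA B) n w / (p * (r + (w:ℝ)) * nbPMF r p w) :=
      gcan_eval n B w hnw
    have he : gcan r p n B (w + 1 + 1) = gcan r p n B (w + 2) := by norm_num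
    rw [← he, e2, e1]
  have hmem : ∀ B : Set ℕ, B ⊆ Set.Ici n →
      |gcan r p n B (w+2) - gcan r p n B (w+1)| ∈ {x : ℝ | ∃ A : Set ℕ, A ⊆ Set.Ici n ∧
        ∃ g : ℕ → ℝ, IsNBSteinSol r p n A g ∧ ∃ w : ℕ, n ≤ w ∧ x = |g (w + 2) - g (w + 1)|} :=
    fun B hB => ⟨B, hB, gcan r p n B, gcan_sol hr hp0 hp1 n B, w, hnw, rfl⟩
  have hub1 := le_csSup hbdd (hmem A1 hA1)
  have hub2 := le_csSup hbdd (hmem A2 hA2)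
  -- x = |Δ| with Δ written via ftil
  have hΔ : g (w+2) - g (w+1) =
      SS r p (fun k => if k = n then nbCondProb r p (n+1) A else indA A k) n (w+1)
        / (p * (r + ((w+1:ℕ):ℝ)) * nbPMF r p (w+1))
      - SS r p (fun k => if k = n then nbCondProb r p (n+1) A else indA A k) n w
        / (p * (r + (w:ℝ)) * nbPMF r p w) := by
    rw [hg1, hg2, htr1, htr2]
  rw [abs_le]
  constructor
  · have t1 : -(g (w+2) - g (w+1)) ≤ -(SS r p (indA A2) n (w+1)
        / (p * (r + ((w+1:ℕ):ℝ)) * nbPMF r p (w+1))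
      - SS r p (indA A2) n w / (p * (r + (w:ℝ)) * nbPMF r p w)) := by
      rw [hΔ]; exact hle2'
    have t2 : -(SS r p (indA A2) n (w+1) / (p * (r + ((w+1:ℕ):ℝ)) * nbPMF r p (w+1))
        - SS r p (indA A2) n w / (p * (r + (w:ℝ)) * nbPMF r p w))
        ≤ |gcan r p n A2 (w+2) - gcan r p n A2 (w+1)| := by
      rw [hcan A2]
      exact neg_le_abs _
    linarith
  · have t1 : g (w+2) - g (w+1) ≤ SS r p (indA A1) n (w+1)
        / (p * (r + ((w+1:ℕ):ℝ)) * nbPMF r p (w+1))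
      - SS r p (indA A1) n w / (p * (r + (w:ℝ)) * nbPMF r p w) := by
      rw [hΔ]; exact hle1
    have t2 : SS r p (indA A1) n (w+1) / (p * (r + ((w+1:ℕ):ℝ)) * nbPMF r p (w+1))
        - SS r p (indA A1) n w / (p * (r + (w:ℝ)) * nbPMF r p w)
        ≤ |gcan r p n A1 (w+2) - gcan r p n A1 (w+1)| := by
      rw [hcan A1]
      exact le_abs_self _
    linarith

end NBAux

/-- For `r > 0` and `0 < p < 1`, the Stein factors `G_{m,1}` and
`G_{m,2}` for conditional negative binomial approximation are decreasing in `m`. -/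
theorem stmt12 (r p : ℝ) (hr : 0 < r) (hp0 : 0 < p) (hp1 : p < 1) :
    ∀ m : ℕ, 1 ≤ m →
      nbG1 r p m ≤ nbG1 r p (m - 1) ∧ nbG2 r p m ≤ nbG2 r p (m - 1) := by
  intro m hm
  obtain ⟨n, rfl⟩ : ∃ n, m = n + 1 := ⟨m - 1, by omega⟩
  simp only [Nat.add_sub_cancel]
  exact ⟨G1_mono hr hp0 hp1 n, G2_mono hr hp0 hp1 n⟩
end

section
/- Let λ > 0 and m ≥ 0. Then the Stein factors for conditional Poisson approximation satisfy G_{m,1} ≤ min{ 1, √(2/(λ e)) } and G_{m,2} = P(P > m)/(λ P(P ≥ m)), where P ~ Poisson(λ). -/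
open MeasureTheory Filter Set Topology Classical

/-- The Poisson(`lam`) probability mass function. -/
noncomputable def poiPMF (lam : ℝ) (i : ℕ) : ℝ := Real.exp (-lam) * lam ^ i / i.factorial

/-- `P(P ∈ A | P ≥ m)` for `P ~ Poisson(lam)`. -/
noncomputable def poiCondProb (lam : ℝ) (m : ℕ) (A : Set ℕ) : ℝ :=
  (∑' k : ℕ, if k ∈ A ∧ m ≤ k then poiPMF lam k else 0) /
    (∑' k : ℕ, if m ≤ k then poiPMF lam k else 0)

/-- `g` is a solution on `ℤ_m` of the Stein equation for `Pn^{(m)}(λ)` with test function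
`f = 1_A`: `λ g(i+1) − i g(i) 1{i>m} = 1_A(i) − P(P^{(m)} ∈ A)` for all `i ≥ m`. -/
def IsPoiSteinSol (lam : ℝ) (m : ℕ) (A : Set ℕ) (g : ℕ → ℝ) : Prop :=
  ∀ i : ℕ, m ≤ i →
    lam * g (i + 1) - (if m < i then (i : ℝ) * g i else 0) =
      (if i ∈ A then 1 else 0) - poiCondProb lam m A

/-- The first Stein factor `G_{m,1} = sup_{f ∈ F_m} ‖g_{m,f}‖_m`, where
`‖h‖_m = sup_{w ≥ m} |h(w+1)|`. -/
noncomputable def poiG1 (lam : ℝ) (m : ℕ) : ℝ :=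
  sSup {x : ℝ | ∃ A : Set ℕ, A ⊆ Set.Ici m ∧ ∃ g : ℕ → ℝ, IsPoiSteinSol lam m A g ∧
    ∃ w : ℕ, m ≤ w ∧ x = |g (w + 1)|}

/-- The second Stein factor `G_{m,2} = sup_{f ∈ F_m} ‖Δg_{m,f}‖_m`. -/
noncomputable def poiG2 (lam : ℝ) (m : ℕ) : ℝ :=
  sSup {x : ℝ | ∃ A : Set ℕ, A ⊆ Set.Ici m ∧ ∃ g : ℕ → ℝ, IsPoiSteinSol lam m A g ∧
    ∃ w : ℕ, m ≤ w ∧ x = |g (w + 2) - g (w + 1)|}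

namespace S15

/-- shorthand -/
noncomputable def p (lam : ℝ) (k : ℕ) : ℝ := poiPMF lam k

lemma p_def (lam : ℝ) (k : ℕ) : p lam k = Real.exp (-lam) * lam ^ k / k.factorial := rfl

noncomputable def pS (lam : ℝ) (m : ℕ) : ℝ := ∑' n : ℕ, p lam (m + n)
noncomputable def pR (lam : ℝ) (j : ℕ) : ℝ := ∑' n : ℕ, p lam (j + 1 + n)
noncomputable def pC (lam : ℝ) (m j : ℕ) : ℝ := ∑ k ∈ Finset.range (j + 1 - m), p lam (m + k)
noncomputable def indA (A : Set ℕ) (k : ℕ) : ℝ := if k ∈ A then 1 else 0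
noncomputable def aA (lam : ℝ) (m : ℕ) (A : Set ℕ) (j : ℕ) : ℝ :=
  ∑ k ∈ Finset.range (j + 1 - m), indA A (m + k) * p lam (m + k)
noncomputable def bA (lam : ℝ) (A : Set ℕ) (j : ℕ) : ℝ :=
  ∑' n : ℕ, indA A (j + 1 + n) * p lam (j + 1 + n)
noncomputable def nuA (lam : ℝ) (m : ℕ) (A : Set ℕ) : ℝ :=
  ∑' n : ℕ, indA A (m + n) * p lam (m + n)
noncomputable def mM (lam : ℝ) (j : ℕ) : ℝ := ∑' n : ℕ, ((n : ℝ) + 1) * p lam (j + 1 + n)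

variable {lam : ℝ} {m : ℕ}

lemma p_pos (hl : 0 < lam) (k : ℕ) : 0 < p lam k := by
  have h : (0:ℝ) < (k.factorial : ℝ) := by exact_mod_cast k.factorial_pos
  rw [p_def]
  positivity

lemma p_nonneg (hl : 0 < lam) (k : ℕ) : 0 ≤ p lam k := (p_pos hl k).le

lemma indA_nonneg (A : Set ℕ) (k : ℕ) : 0 ≤ indA A k := by
  unfold indA; split <;> norm_num

lemma indA_le_one (A : Set ℕ) (k : ℕ) : indA A k ≤ 1 := by
  unfold indA; split <;> norm_num

lemma summable_p : Summable (p lam) := by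
  have h := (Real.summable_pow_div_factorial lam).mul_left (Real.exp (-lam))
  exact h.congr fun n => by rw [p_def]; ring

lemma summable_p_shift (j : ℕ) : Summable (fun n => p lam (j + n)) := by
  have h := (summable_nat_add_iff (f := p lam) j).2 summable_p
  exact h.congr fun n => by rw [Nat.add_comm]

lemma summable_ind_shift (hl : 0 < lam) (A : Set ℕ) (j : ℕ) :
    Summable (fun n => indA A (j + n) * p lam (j + n)) := by
  apply Summable.of_nonneg_of_le (f := fun n => p lam (j + n))
  · intro n; exact mul_nonneg (indA_nonneg A _) (p_nonneg hl _)
  · intro n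
    calc indA A (j + n) * p lam (j + n) ≤ 1 * p lam (j + n) :=
          mul_le_mul_of_nonneg_right (indA_le_one A _) (p_nonneg hl _)
      _ = p lam (j + n) := one_mul _
  · exact summable_p_shift j

lemma summable_ite (hl : 0 < lam) (P : ℕ → Prop) [DecidablePred P] :
    Summable (fun k => if P k then poiPMF lam k else 0) := by
  apply Summable.of_nonneg_of_le (f := p lam) _ _ summable_p
  · intro n; split
    · exact p_nonneg hl n
    · exact le_refl 0
  · intro n
    show (if P n then poiPMF lam n else 0) ≤ p lam n
    split
    · exact le_refl _
    · exact p_nonneg hl n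

/-- `lam * p k = (k+1) * p (k+1)` -/
lemma ratio (hl : 0 < lam) (k : ℕ) : lam * p lam k = ((k : ℝ) + 1) * p lam (k + 1) := by
  rw [p_def, p_def]
  rw [Nat.factorial_succ, pow_succ]
  have h1 : ((k.factorial : ℕ) : ℝ) ≠ 0 := by exact_mod_cast k.factorial_pos.ne'
  push_cast
  field_simp

lemma pR_succ (hl : 0 < lam) (j : ℕ) : pR lam j = p lam (j + 1) + pR lam (j + 1) := by
  unfold pR
  rw [Summable.tsum_eq_zero_add (summable_p_shift (j + 1))]
  congr 1
  exact tsum_congr fun n => by congr 1; omega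

lemma bA_succ (hl : 0 < lam) (A : Set ℕ) (j : ℕ) :
    bA lam A j = indA A (j + 1) * p lam (j + 1) + bA lam A (j + 1) := by
  unfold bA
  rw [Summable.tsum_eq_zero_add (summable_ind_shift hl A (j + 1))]
  congr 1
  exact tsum_congr fun n => by congr 2 <;> omega

lemma summable_aux1 : Summable (fun n : ℕ => (n : ℝ) * lam ^ n / n.factorial) := by
  rw [← summable_nat_add_iff 1]
  have h := (Real.summable_pow_div_factorial lam).mul_left lam
  apply h.congr
  intro n
  have hf : (((n+1).factorial : ℕ) : ℝ) = ((n:ℝ)+1) * (n.factorial : ℝ) := by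
    rw [Nat.factorial_succ]; push_cast; ring
  have hne : ((n:ℝ)+1) ≠ 0 := by positivity
  have hfn : ((n.factorial : ℕ):ℝ) ≠ 0 := by exact_mod_cast n.factorial_pos.ne'
  show lam * (lam ^ n / (n.factorial : ℝ)) = ((n:ℕ)+1 : ℕ) * lam ^ (n+1) / ((n+1).factorial : ℝ)
  push_cast
  rw [hf]
  field_simp
  ring

lemma summable_aux2 : Summable (fun n : ℕ => ((n : ℝ) + 1) * lam ^ n / n.factorial) := by
  have h := (summable_aux1 (lam := lam)).add (Real.summable_pow_div_factorial lam)
  exact (h : Summable fun n : ℕ => (n : ℝ) * lam ^ n / n.factorial + lam ^ n / n.factorial).congr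
    fun n => by ring

lemma p_fac_le (hl : 0 < lam) (j n : ℕ) :
    p lam (j + n) ≤ p lam j * (lam ^ n / n.factorial) := by
  have hdvd := Nat.factorial_mul_factorial_dvd_factorial_add j n
  have hle : (j.factorial * n.factorial : ℕ) ≤ (j + n).factorial :=
    Nat.le_of_dvd (Nat.factorial_pos _) hdvd
  have hle' : ((j.factorial : ℝ) * (n.factorial : ℝ)) ≤ ((j+n).factorial : ℝ) := by
    exact_mod_cast hle
  have key : (1:ℝ)/(((j+n).factorial : ℕ) : ℝ) ≤ 1/((j.factorial : ℝ) * (n.factorial : ℝ)) := by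
    apply one_div_le_one_div_of_le
    · positivity
    · exact hle'
  rw [p_def, p_def, pow_add]
  have e1 : Real.exp (-lam) * (lam ^ j * lam ^ n) / (((j+n).factorial : ℕ) : ℝ)
      = (Real.exp (-lam) * lam ^ j * lam ^ n) * (1/(((j+n).factorial : ℕ) : ℝ)) := by ring
  have e2 : Real.exp (-lam) * lam ^ j / (j.factorial : ℝ) * (lam ^ n / (n.factorial : ℝ))
      = (Real.exp (-lam) * lam ^ j * lam ^ n) * (1/((j.factorial : ℝ) * (n.factorial : ℝ))) := by
    ring
  rw [e1, e2]
  apply mul_le_mul_of_nonneg_left key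
  positivity

lemma summable_mom (hl : 0 < lam) (j : ℕ) :
    Summable (fun n : ℕ => ((n : ℝ) + 1) * p lam (j + 1 + n)) := by
  apply Summable.of_nonneg_of_le
    (f := fun (n : ℕ) => p lam (j+1) * (((n : ℝ) + 1) * lam ^ n / (n.factorial : ℝ))) _ _
    (summable_aux2.mul_left _)
  · intro n
    exact mul_nonneg (by positivity) (p_nonneg hl _)
  · intro n
    have h := p_fac_le hl (j+1) n
    have hn1 : (0:ℝ) ≤ (n : ℝ) + 1 := by positivity
    calc ((n : ℝ) + 1) * p lam (j + 1 + n)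
        ≤ ((n : ℝ) + 1) * (p lam (j+1) * (lam ^ n / n.factorial)) :=
          mul_le_mul_of_nonneg_left h hn1
      _ = p lam (j+1) * (((n : ℝ) + 1) * lam ^ n / n.factorial) := by ring

lemma summable_mom' (hl : 0 < lam) (j : ℕ) :
    Summable (fun n : ℕ => (n : ℝ) * p lam (j + 1 + n)) := by
  apply Summable.of_nonneg_of_le _ _ (summable_mom hl j)
  · intro n; exact mul_nonneg (by positivity) (p_nonneg hl _)
  · intro n
    apply mul_le_mul_of_nonneg_right _ (p_nonneg hl _)
    linarith

lemma mM_rec (hl : 0 < lam) (j : ℕ) : mM lam j = pR lam j + mM lam (j + 1) := by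
  unfold mM
  have hsum : ∀ n : ℕ, ((n:ℝ)+1) * p lam (j+1+n) = p lam (j+1+n) + (n:ℝ) * p lam (j+1+n) :=
    fun n => by ring
  rw [tsum_congr hsum, Summable.tsum_add (summable_p_shift (j+1)) (summable_mom' hl j)]
  congr 1
  rw [Summable.tsum_eq_zero_add (summable_mom' hl j)]
  simp only [Nat.cast_zero, zero_mul, zero_add]
  apply tsum_congr
  intro n
  push_cast
  have harg : j + 1 + (n + 1) = j + 1 + 1 + n := by omega
  rw [harg]

lemma pC_m : pC lam m m = p lam m := by
  unfold pC
  have h : m + 1 - m = 1 := by omega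
  rw [h, Finset.sum_range_one]
  simp

lemma aA_m (A : Set ℕ) : aA lam m A m = indA A m * p lam m := by
  unfold aA
  have h : m + 1 - m = 1 := by omega
  rw [h, Finset.sum_range_one]
  simp

lemma pC_succ (hm : m ≤ j + 1) : pC lam m (j + 1) = pC lam m j + p lam (j + 1) := by
  unfold pC
  have h1 : j + 1 + 1 - m = (j + 1 - m) + 1 := by omega
  rw [h1, Finset.sum_range_succ]
  congr 2
  omega

lemma aA_succ (A : Set ℕ) (hm : m ≤ j + 1) :
    aA lam m A (j + 1) = aA lam m A j + indA A (j + 1) * p lam (j + 1) := by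
  unfold aA
  have h1 : j + 1 + 1 - m = (j + 1 - m) + 1 := by omega
  rw [h1, Finset.sum_range_succ]
  congr 3 <;> omega

lemma pC_first (hm : m ≤ j) :
    pC lam m j = p lam m + ∑ k ∈ Finset.range (j - m), p lam (m + 1 + k) := by
  unfold pC
  have h1 : j + 1 - m = (j - m) + 1 := by omega
  have e1 : p lam (m + 0) = p lam m := by norm_num
  have e2 : ∑ k ∈ Finset.range (j - m), p lam (m + (k + 1))
      = ∑ k ∈ Finset.range (j - m), p lam (m + 1 + k) :=
    Finset.sum_congr rfl fun k _ => by congr 1; omega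
  rw [h1, Finset.sum_range_succ', e1, e2, add_comm]

lemma S_split (hl : 0 < lam) (hm : m ≤ j) : pS lam m = pC lam m j + pR lam j := by
  induction j, hm using Nat.le_induction with
  | base =>
    rw [pC_m]
    unfold pS pR
    rw [Summable.tsum_eq_zero_add (summable_p_shift m)]
    congr 1
    exact tsum_congr fun n => by congr 1; omega
  | succ j hj ih =>
    rw [pC_succ (by omega), pR_succ hl j] at *
    linarith

lemma nu_split (hl : 0 < lam) (A : Set ℕ) (hm : m ≤ j) :
    nuA lam m A = aA lam m A j + bA lam A j := by
  induction j, hm using Nat.le_induction with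
  | base =>
    rw [aA_m]
    unfold nuA bA
    rw [Summable.tsum_eq_zero_add (summable_ind_shift hl A m)]
    congr 1
    exact tsum_congr fun n => by congr 2 <;> omega
  | succ j hj ih =>
    rw [aA_succ A (by omega), bA_succ hl A j] at *
    linarith

lemma pR_nonneg (hl : 0 < lam) (j : ℕ) : 0 ≤ pR lam j :=
  tsum_nonneg fun n => p_nonneg hl _

lemma pC_nonneg (hl : 0 < lam) (j : ℕ) : 0 ≤ pC lam m j :=
  Finset.sum_nonneg fun k _ => p_nonneg hl _

lemma aA_nonneg (hl : 0 < lam) (A : Set ℕ) (j : ℕ) : 0 ≤ aA lam m A j :=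
  Finset.sum_nonneg fun k _ => mul_nonneg (indA_nonneg A _) (p_nonneg hl _)

lemma bA_nonneg (hl : 0 < lam) (A : Set ℕ) (j : ℕ) : 0 ≤ bA lam A j :=
  tsum_nonneg fun n => mul_nonneg (indA_nonneg A _) (p_nonneg hl _)

lemma aA_le (hl : 0 < lam) (A : Set ℕ) (j : ℕ) : aA lam m A j ≤ pC lam m j := by
  apply Finset.sum_le_sum
  intro k _
  calc indA A (m + k) * p lam (m + k) ≤ 1 * p lam (m + k) :=
        mul_le_mul_of_nonneg_right (indA_le_one A _) (p_nonneg hl _)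
    _ = p lam (m + k) := one_mul _

lemma bA_le (hl : 0 < lam) (A : Set ℕ) (j : ℕ) : bA lam A j ≤ pR lam j := by
  apply Summable.tsum_le_tsum _ (summable_ind_shift hl A (j+1)) (summable_p_shift (j+1))
  intro n
  calc indA A (j + 1 + n) * p lam (j + 1 + n) ≤ 1 * p lam (j + 1 + n) :=
        mul_le_mul_of_nonneg_right (indA_le_one A _) (p_nonneg hl _)
    _ = p lam (j + 1 + n) := one_mul _

lemma S_pos (hl : 0 < lam) : 0 < pS lam m := by
  have h := Summable.le_tsum (summable_p_shift (lam := lam) m) 0 (fun j _ => p_nonneg hl _)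
  calc (0:ℝ) < p lam (m + 0) := p_pos hl _
    _ ≤ pS lam m := h

/-- denominator conversion -/
lemma den_eq (hl : 0 < lam) : (∑' k : ℕ, if m ≤ k then poiPMF lam k else 0) = pS lam m := by
  rw [← Summable.sum_add_tsum_nat_add (f := fun k => if m ≤ k then poiPMF lam k else 0) m
    (summable_ite hl (fun k => m ≤ k))]
  have h1 : ∑ i ∈ Finset.range m, (if m ≤ i then poiPMF lam i else 0) = 0 := by
    apply Finset.sum_eq_zero
    intro i hi
    rw [if_neg]
    simp at hi; omega
  rw [h1, zero_add]
  exact tsum_congr fun n => by rw [if_pos (by omega)]; show poiPMF lam (n + m) = p lam (m + n); congr 1; omega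

lemma numgt_eq (hl : 0 < lam) : (∑' k : ℕ, if m < k then poiPMF lam k else 0) = pR lam m := by
  rw [← Summable.sum_add_tsum_nat_add (f := fun k => if m < k then poiPMF lam k else 0) (m + 1)
    (summable_ite hl (fun k => m < k))]
  have h1 : ∑ i ∈ Finset.range (m + 1), (if m < i then poiPMF lam i else 0) = 0 := by
    apply Finset.sum_eq_zero
    intro i hi
    rw [if_neg]
    simp at hi; omega
  rw [h1, zero_add]
  exact tsum_congr fun n => by rw [if_pos (by omega)]; show poiPMF lam (n + (m+1)) = p lam (m + 1 + n); congr 1; omega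

lemma cond_eq (hl : 0 < lam) (A : Set ℕ) :
    poiCondProb lam m A = nuA lam m A / pS lam m := by
  unfold poiCondProb
  rw [den_eq hl]
  congr 1
  rw [← Summable.sum_add_tsum_nat_add (f := fun k => if k ∈ A ∧ m ≤ k then poiPMF lam k else 0) m
    (summable_ite hl (fun k => k ∈ A ∧ m ≤ k))]
  have h1 : ∑ i ∈ Finset.range m, (if i ∈ A ∧ m ≤ i then poiPMF lam i else 0) = 0 := by
    apply Finset.sum_eq_zero
    intro i hi
    rw [if_neg]
    simp at hi
    intro h
    omega
  rw [h1, zero_add]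
  unfold nuA
  apply tsum_congr
  intro n
  have harg : n + m = m + n := by omega
  rw [harg]
  by_cases hA : m + n ∈ A
  · rw [if_pos ⟨hA, by omega⟩]
    unfold indA
    rw [if_pos hA, one_mul]
    rfl
  · rw [if_neg (by tauto)]
    unfold indA
    rw [if_neg hA, zero_mul]

lemma pstep (hl : 0 < lam) {a b : ℕ} (hab : a ≤ b) :
    p lam a * p lam (b + 1) ≤ p lam (a + 1) * p lam b := by
  have r1 := ratio hl a
  have r2 := ratio hl b
  have ha1 : (0:ℝ) < (a:ℝ) + 1 := by positivity
  have hb1 : (0:ℝ) < (b:ℝ) + 1 := by positivity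
  have hpb : p lam (b+1) = lam * p lam b / ((b:ℝ)+1) := by
    field_simp
    linarith [r2]
  have hpa : p lam (a+1) = lam * p lam a / ((a:ℝ)+1) := by
    field_simp
    linarith [r1]
  have hcast : ((a:ℝ)+1) ≤ ((b:ℝ)+1) := by
    have : (a:ℝ) ≤ (b:ℝ) := by exact_mod_cast hab
    linarith
  rw [hpa, hpb]
  calc p lam a * (lam * p lam b / ((b:ℝ)+1))
      = (lam * p lam a * p lam b) * (1/((b:ℝ)+1)) := by ring
    _ ≤ (lam * p lam a * p lam b) * (1/((a:ℝ)+1)) := by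
        apply mul_le_mul_of_nonneg_left (one_div_le_one_div_of_le ha1 hcast)
        have := p_nonneg hl a
        have := p_nonneg hl b
        positivity
    _ = lam * p lam a / ((a:ℝ)+1) * p lam b := by ring

lemma LC_aux (hl : 0 < lam) : ∀ d k n : ℕ, d ≤ n + 1 →
    p lam k * p lam (k + d + 1 + n) ≤ p lam (k + d) * p lam (k + 1 + n) := by
  intro d
  induction d with
  | zero =>
    intro k n _
    apply le_of_eq
    congr 2 <;> omega
  | succ d ih =>
    intro k n hd
    have h1 := ih k (n+1) (by omega)
    have h2 := pstep hl (a := k + d) (b := k + 1 + n) (by omega)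
    calc p lam k * p lam (k + (d+1) + 1 + n)
        = p lam k * p lam (k + d + 1 + (n + 1)) := by
          rw [show k + (d+1) + 1 + n = k + d + 1 + (n + 1) from by omega]
      _ ≤ p lam (k + d) * p lam (k + 1 + (n + 1)) := h1
      _ = p lam (k + d) * p lam ((k + 1 + n) + 1) := by
          rw [show k + 1 + (n + 1) = (k + 1 + n) + 1 from by omega]
      _ ≤ p lam (k + d + 1) * p lam (k + 1 + n) := h2
      _ = p lam (k + (d+1)) * p lam (k + 1 + n) := by
          rw [show k + d + 1 = k + (d+1) from by omega]

lemma LC (hl : 0 < lam) {a w : ℕ} (haw : a ≤ w) (n : ℕ) :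
    p lam a * p lam (w + 1 + n) ≤ p lam w * p lam (a + 1 + n) := by
  by_cases hc : w - a ≤ n + 1
  · have h := LC_aux hl (w - a) a n hc
    calc p lam a * p lam (w + 1 + n) = p lam a * p lam (a + (w-a) + 1 + n) := by congr 2; omega
      _ ≤ p lam (a + (w-a)) * p lam (a + 1 + n) := h
      _ = p lam w * p lam (a + 1 + n) := by congr 2; omega
  · have hd1 : 1 ≤ w - a := by omega
    have h := LC_aux hl (n+1) a (w - a - 1) (by omega)
    calc p lam a * p lam (w + 1 + n) = p lam a * p lam (a + (n+1) + 1 + (w - a - 1)) := by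
          congr 2; omega
      _ ≤ p lam (a + (n+1)) * p lam (a + 1 + (w - a - 1)) := h
      _ = p lam (a + 1 + n) * p lam w := by congr 2 <;> omega
      _ = p lam w * p lam (a + 1 + n) := by ring

lemma S_tail (hl : 0 < lam) (w : ℕ) : (∑' n : ℕ, p lam (w + n)) = p lam w + pR lam w := by
  have h2 : (∑' n : ℕ, p lam (w + (n+1))) = pR lam w :=
    tsum_congr fun n => by rw [show w + (n+1) = w + 1 + n from by omega]
  rw [Summable.tsum_eq_zero_add (summable_p_shift w), h2, Nat.add_zero]

lemma R_le (hl : 0 < lam) (w : ℕ) : ((w:ℝ)+1) * pR lam w ≤ lam * (p lam w + pR lam w) := by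
  have hterm : ∀ n : ℕ, ((w:ℝ)+1) * p lam (w + 1 + n) ≤ lam * p lam (w + n) := by
    intro n
    have r := ratio hl (w + n)
    have harg : w + n + 1 = w + 1 + n := by omega
    rw [harg] at r
    rw [r]
    apply mul_le_mul_of_nonneg_right _ (p_nonneg hl _)
    push_cast
    linarith [Nat.cast_nonneg (α := ℝ) n]
  calc ((w:ℝ)+1) * pR lam w = ∑' n : ℕ, ((w:ℝ)+1) * p lam (w + 1 + n) := by
        rw [pR, tsum_mul_left]
    _ ≤ ∑' n : ℕ, lam * p lam (w + n) := by
        apply Summable.tsum_le_tsum hterm ((summable_p_shift (w+1)).mul_left _)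
          ((summable_p_shift w).mul_left _)
    _ = lam * ∑' n : ℕ, p lam (w + n) := tsum_mul_left
    _ = lam * (p lam w + pR lam w) := by rw [S_tail hl w]

lemma M_le (hl : 0 < lam) (j : ℕ) : mM lam j ≤ lam * (p lam j + pR lam j) := by
  have hterm : ∀ n : ℕ, ((n:ℝ)+1) * p lam (j + 1 + n) ≤ lam * p lam (j + n) := by
    intro n
    have r := ratio hl (j + n)
    have harg : j + n + 1 = j + 1 + n := by omega
    rw [harg] at r
    rw [r]
    apply mul_le_mul_of_nonneg_right _ (p_nonneg hl _)
    push_cast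
    linarith [Nat.cast_nonneg (α := ℝ) j]
  calc mM lam j ≤ ∑' n : ℕ, lam * p lam (j + n) := by
        apply Summable.tsum_le_tsum hterm (summable_mom hl j) ((summable_p_shift j).mul_left _)
    _ = lam * ∑' n : ℕ, p lam (j + n) := tsum_mul_left
    _ = lam * (p lam j + pR lam j) := by rw [S_tail hl j]

lemma mM_nonneg (hl : 0 < lam) (j : ℕ) : 0 ≤ mM lam j :=
  tsum_nonneg fun n => mul_nonneg (by positivity) (p_nonneg hl _)

lemma Phi_eq (hl : 0 < lam) : ∀ K : ℕ,
    (∑ k ∈ Finset.range K, pR lam (m + k)) + mM lam (m + K) = mM lam m := by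
  intro K
  induction K with
  | zero => simp
  | succ K ih =>
    rw [Finset.sum_range_succ]
    have h := mM_rec hl (m + K)
    have harg : m + K + 1 = m + (K + 1) := by omega
    rw [harg] at h
    linarith

lemma I1 (hl : 0 < lam) (hw : m ≤ w) :
    pC lam m w * pR lam w ≤ lam * p lam w * pS lam m := by
  have h1 : pC lam m w * pR lam w
      ≤ p lam w * ∑ k ∈ Finset.range (w + 1 - m), pR lam (m + k) := by
    rw [pC, Finset.sum_mul, Finset.mul_sum]
    apply Finset.sum_le_sum
    intro k hk
    have hkw : m + k ≤ w := by
      simp only [Finset.mem_range] at hk; omega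
    calc p lam (m+k) * pR lam w = ∑' n : ℕ, p lam (m+k) * p lam (w + 1 + n) := by
          rw [pR, tsum_mul_left]
      _ ≤ ∑' n : ℕ, p lam w * p lam (m + k + 1 + n) := by
          apply Summable.tsum_le_tsum (fun n => LC hl hkw n) ((summable_p_shift (w+1)).mul_left _)
            ((summable_p_shift (m+k+1)).mul_left _)
      _ = p lam w * pR lam (m+k) := by rw [pR, tsum_mul_left]
  have h2 : (∑ k ∈ Finset.range (w + 1 - m), pR lam (m + k)) ≤ mM lam m := by
    have := Phi_eq (m := m) hl (w + 1 - m)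
    have hnn := mM_nonneg hl (m + (w + 1 - m))
    linarith
  have h3 : mM lam m ≤ lam * pS lam m := by
    have h := M_le hl m
    have hs : pS lam m = p lam m + pR lam m := by
      rw [S_split hl (le_refl m), pC_m]
    rw [hs]
    exact h
  calc pC lam m w * pR lam w ≤ p lam w * ∑ k ∈ Finset.range (w + 1 - m), pR lam (m + k) := h1
    _ ≤ p lam w * mM lam m := mul_le_mul_of_nonneg_left h2 (p_nonneg hl w)
    _ ≤ p lam w * (lam * pS lam m) := mul_le_mul_of_nonneg_left h3 (p_nonneg hl w)
    _ = lam * p lam w * pS lam m := by ring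

lemma key_step (hl : 0 < lam) (A : Set ℕ) {j : ℕ} (hm : m ≤ j) :
    aA lam m A (j+1) * pR lam (j+1) - bA lam A (j+1) * pC lam m (j+1)
      = aA lam m A j * pR lam j - bA lam A j * pC lam m j
        + p lam (j+1) * (pS lam m * indA A (j+1) - nuA lam m A) := by
  have hS := S_split hl hm
  have hnu := nu_split hl A hm
  have h1 := pR_succ hl j
  have h2 := pC_succ (lam := lam) (m := m) (j := j) (by omega)
  have h3 := bA_succ hl A j
  have h4 := aA_succ (lam := lam) (m := m) A (j := j) (by omega)
  have e1 : pR lam (j+1) = pR lam j - p lam (j+1) := by linarith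
  have e2 : bA lam A (j+1) = bA lam A j - indA A (j+1) * p lam (j+1) := by linarith
  rw [h4, h2, e1, e2, hS, hnu]
  ring

theorem sol_formula (hl : 0 < lam) {A : Set ℕ} {g : ℕ → ℝ} (hg : IsPoiSteinSol lam m A g) :
    ∀ n : ℕ, lam * p lam (m + n) * pS lam m * g (m + n + 1)
      = aA lam m A (m + n) * pR lam (m + n) - bA lam A (m + n) * pC lam m (m + n) := by
  intro n
  induction n with
  | zero =>
    show lam * p lam m * pS lam m * g (m + 1)
      = aA lam m A m * pR lam m - bA lam A m * pC lam m m
    have h := hg m (le_refl m)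
    rw [if_neg (lt_irrefl m), sub_zero, cond_eq hl A] at h
    have hfeq : (if m ∈ A then (1:ℝ) else 0) = indA A m := rfl
    rw [hfeq] at h
    have hS0 : pS lam m = p lam m + pR lam m := by
      rw [S_split hl (le_refl m), pC_m]
    have hnu0 : nuA lam m A = indA A m * p lam m + bA lam A m := by
      rw [nu_split hl A (le_refl m), aA_m]
    have hSne : pS lam m ≠ 0 := (S_pos hl).ne'
    have h' : lam * g (m+1) * pS lam m = indA A m * pS lam m - nuA lam m A := by
      rw [h]; field_simp
    rw [aA_m, pC_m]
    have e1 : pR lam m = pS lam m - p lam m := by linarith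
    have e2 : bA lam A m = nuA lam m A - indA A m * p lam m := by linarith
    rw [e1, e2]
    linear_combination (p lam m) * h'
  | succ n ih =>
    show lam * p lam (m + n + 1) * pS lam m * g (m + n + 1 + 1)
      = aA lam m A (m + n + 1) * pR lam (m + n + 1) - bA lam A (m + n + 1) * pC lam m (m + n + 1)
    have h := hg (m + n + 1) (by omega)
    rw [if_pos (show m < m + n + 1 by omega), cond_eq hl A] at h
    have hfeq : (if m + n + 1 ∈ A then (1:ℝ) else 0) = indA A (m + n + 1) := rfl
    rw [hfeq] at h
    have hSne : pS lam m ≠ 0 := (S_pos hl).ne'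
    have hg2' : lam * g (m + n + 1 + 1) * pS lam m
        = ((m + n + 1 : ℕ) : ℝ) * g (m + n + 1) * pS lam m
          + indA A (m + n + 1) * pS lam m - nuA lam m A := by
      have : lam * g (m + n + 1 + 1)
          = ((m + n + 1 : ℕ) : ℝ) * g (m + n + 1) + indA A (m + n + 1)
            - nuA lam m A / pS lam m := by linarith
      rw [this]; field_simp
    have hr := ratio hl (m + n)
    have hcast : ((m + n + 1 : ℕ) : ℝ) * p lam (m + n + 1) = lam * p lam (m + n) := by
      push_cast at hr ⊢
      linarith
    have hkey := key_step hl A (show m ≤ m + n by omega)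
    linear_combination (p lam (m + n + 1)) * hg2' + (g (m + n + 1) * pS lam m) * hcast + ih - hkey

lemma K1_le (hl : 0 < lam) (w : ℕ) :
    (((w:ℝ)+1) - lam) * pR lam w ≤ ((w:ℝ)+1) * p lam (w+1) := by
  have h1 := R_le hl w
  have hr := ratio hl w
  nlinarith [pR_nonneg hl w]

lemma K2_le (hl : 0 < lam) {w : ℕ} (hw : m ≤ w) :
    (lam - ((w:ℝ)+1)) * pC lam m w ≤ ((w:ℝ)+1) * p lam (w+1) - ((w:ℝ)+1) * p lam m := by
  have hterm : ∀ k ∈ Finset.range (w+1-m), lam * p lam (m+k) ≤ ((w:ℝ)+1) * p lam (m+1+k) := by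
    intro k hk
    have hk' : m + k ≤ w := by
      simp only [Finset.mem_range] at hk; omega
    have hr := ratio hl (m+k)
    rw [show m+k+1 = m+1+k from by omega] at hr
    rw [hr]
    apply mul_le_mul_of_nonneg_right _ (p_nonneg hl _)
    have : ((m+k : ℕ):ℝ) ≤ (w:ℝ) := by exact_mod_cast hk'
    push_cast at this ⊢
    linarith
  have h2 : lam * pC lam m w ≤ ((w:ℝ)+1) * ∑ k ∈ Finset.range (w+1-m), p lam (m+1+k) := by
    rw [pC, Finset.mul_sum, Finset.mul_sum]
    exact Finset.sum_le_sum hterm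
  have h3 : (∑ k ∈ Finset.range (w+1-m), p lam (m+1+k)) = pC lam m w + p lam (w+1) - p lam m := by
    have hfirst := pC_first (lam := lam) (m := m) (j := w+1) (by omega)
    have hsucc := pC_succ (lam := lam) (m := m) (j := w) (by omega)
    have harg : w + 1 - m = (w + 1) - m := rfl
    rw [show (w+1) - m = w + 1 - m from rfl] at hfirst
    linarith
  nlinarith [p_nonneg hl (w+1), p_nonneg hl m, pC_nonneg (m := m) hl w]

/-- the pure algebra core of the G2 bound -/
lemma g2_core {C R S T q i al be f pm : ℝ}
    (hal0 : 0 ≤ al) (halC : al ≤ C) (hbe0 : 0 ≤ be) (hbeR : be ≤ R)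
    (hq : 0 ≤ q) (hpm : 0 ≤ pm)
    (hS : S = C + R) (hT : T = S - pm) (hT0 : 0 ≤ T)
    (hK1 : (i - lam) * R ≤ i * q)
    (hK2 : (lam - i) * C ≤ i * q - i * pm)
    (hi : 0 ≤ i)
    (hf : (f = 1 ∧ q ≤ be) ∨ (f = 0 ∧ be ≤ R - q)) :
    |(i - lam) * (al * R - be * C) + i * q * (S * f - (al + be))| ≤ i * q * T := by
  have hiq : 0 ≤ i * q := mul_nonneg hi hq
  have hipm : 0 ≤ i * pm := mul_nonneg hi hpm
  have hK1v : (i - lam) * R - i * q ≤ 0 := by linarith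
  have hK2vm : (lam - i) * C - i * q ≤ -(i * pm) := by linarith
  have hK2v : (lam - i) * C - i * q ≤ 0 := by linarith
  have e3 : C * ((i - lam) * R - i * q) + R * ((lam - i) * C - i * q) + i * q * S = 0 := by
    rw [hS]; ring
  rcases hf with ⟨hf1, hqb⟩ | ⟨hf0, hbR⟩
  · subst hf1
    rw [abs_le]
    constructor
    · have e1 : C * ((i - lam) * R - i * q) ≤ al * ((i - lam) * R - i * q) :=
        mul_le_mul_of_nonpos_right halC hK1v
      have e2 : R * ((lam - i) * C - i * q) ≤ be * ((lam - i) * C - i * q) :=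
        mul_le_mul_of_nonpos_right hbeR hK2v
      nlinarith [e1, e2, e3, mul_nonneg hiq hT0]
    · have e1 : al * ((i - lam) * R - i * q) ≤ 0 :=
        mul_nonpos_of_nonneg_of_nonpos hal0 hK1v
      have e2 : be * ((lam - i) * C - i * q) ≤ q * ((lam - i) * C - i * q) :=
        mul_le_mul_of_nonpos_right hqb hK2v
      have e4 : q * ((lam - i) * C - i * q) ≤ q * (-(i * pm)) :=
        mul_le_mul_of_nonneg_left hK2vm hq
      nlinarith [e1, e2, e4]
  · subst hf0
    rw [abs_le]
    constructor
    · have e1 : C * ((i - lam) * R - i * q) ≤ al * ((i - lam) * R - i * q) :=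
        mul_le_mul_of_nonpos_right halC hK1v
      have e2 : (R - q) * ((lam - i) * C - i * q) ≤ be * ((lam - i) * C - i * q) :=
        mul_le_mul_of_nonpos_right hbR hK2v
      have e4 : q * ((lam - i) * C) ≤ q * (i * q - i * pm) :=
        mul_le_mul_of_nonneg_left hK2 hq
      nlinarith [e1, e2, e4]
    · have e1 : al * ((i - lam) * R - i * q) ≤ 0 :=
        mul_nonpos_of_nonneg_of_nonpos hal0 hK1v
      have e2 : be * ((lam - i) * C - i * q) ≤ 0 :=
        mul_nonpos_of_nonneg_of_nonpos hbe0 hK2v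
      nlinarith [e1, e2]

theorem g2_elt (hl : 0 < lam) {A : Set ℕ} {g : ℕ → ℝ} (hg : IsPoiSteinSol lam m A g)
    (w : ℕ) (hw : m ≤ w) :
    |g (w + 2) - g (w + 1)| ≤ pR lam m / (lam * pS lam m) := by
  obtain ⟨n, rfl⟩ := Nat.exists_eq_add_of_le hw
  have F1 := sol_formula hl hg n
  have F2 : lam * p lam (m+n+1) * pS lam m * g (m+n+1+1)
      = aA lam m A (m+n+1) * pR lam (m+n+1) - bA lam A (m+n+1) * pC lam m (m+n+1) :=
    sol_formula hl hg (n+1)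
  have hkey := key_step hl A (show m ≤ m+n by omega)
  have hr := ratio hl (m+n)
  have hcast : ((m+n+1 : ℕ):ℝ) * p lam (m+n+1) = lam * p lam (m+n) := by
    push_cast at hr ⊢; linarith
  have hE : (((m+n+1:ℕ):ℝ)) * lam * p lam (m+n+1) * pS lam m * (g (m+n+1+1) - g (m+n+1))
      = (((m+n+1:ℕ):ℝ) - lam)
          * (aA lam m A (m+n) * pR lam (m+n) - bA lam A (m+n) * pC lam m (m+n))
        + ((m+n+1:ℕ):ℝ) * p lam (m+n+1)
          * (pS lam m * indA A (m+n+1) - (aA lam m A (m+n) + bA lam A (m+n))) := by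
    have hnu := nu_split hl A (show m ≤ m + n by omega)
    linear_combination (((m+n+1:ℕ):ℝ)) * F2 - lam * F1
      - (lam * pS lam m * g (m+n+1)) * hcast + (((m+n+1:ℕ):ℝ)) * hkey
      - (((m+n+1:ℕ):ℝ) * p lam (m+n+1)) * hnu
  have hcastJ : ((m+n+1 : ℕ):ℝ) = ((m+n : ℕ):ℝ) + 1 := by push_cast; ring
  have hK1 : (((m+n+1:ℕ):ℝ) - lam) * pR lam (m+n) ≤ ((m+n+1:ℕ):ℝ) * p lam (m+n+1) := by
    rw [hcastJ]; exact K1_le hl (m+n)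
  have hK2 : (lam - ((m+n+1:ℕ):ℝ)) * pC lam m (m+n)
      ≤ ((m+n+1:ℕ):ℝ) * p lam (m+n+1) - ((m+n+1:ℕ):ℝ) * p lam m := by
    rw [hcastJ]; exact K2_le hl (show m ≤ m + n by omega)
  have hf : (indA A (m+n+1) = 1 ∧ p lam (m+n+1) ≤ bA lam A (m+n))
      ∨ (indA A (m+n+1) = 0 ∧ bA lam A (m+n) ≤ pR lam (m+n) - p lam (m+n+1)) := by
    by_cases hA : (m+n+1) ∈ A
    · left
      constructor
      · unfold indA; rw [if_pos hA]
      · have h0 := Summable.le_tsum (summable_ind_shift hl A (m+n+1)) 0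
          (fun j _ => mul_nonneg (indA_nonneg A _) (p_nonneg hl _))
        have harg : indA A (m+n+1+0) * p lam (m+n+1+0) = p lam (m+n+1) := by
          norm_num
          unfold indA
          rw [if_pos hA, one_mul]
        rw [harg] at h0
        exact h0
    · right
      constructor
      · unfold indA; rw [if_neg hA]
      · have hb := bA_succ hl A (m+n)
        have hz : indA A (m+n+1) = 0 := by unfold indA; rw [if_neg hA]
        rw [hz, zero_mul, zero_add] at hb
        have hRs := pR_succ hl (m+n)
        have := bA_le (lam := lam) hl A (m+n+1)
        linarith
  have hS := S_split (lam := lam) hl (show m ≤ m + n by omega)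
  have hT : pR lam m = pS lam m - p lam m := by
    have := S_split (lam := lam) hl (le_refl m)
    rw [pC_m] at this
    linarith
  have hcore := g2_core (lam := lam) (C := pC lam m (m+n)) (R := pR lam (m+n))
    (S := pS lam m) (T := pR lam m) (q := p lam (m+n+1)) (i := ((m+n+1:ℕ):ℝ))
    (al := aA lam m A (m+n)) (be := bA lam A (m+n)) (f := indA A (m+n+1)) (pm := p lam m)
    (aA_nonneg hl A (m+n)) (aA_le hl A (m+n)) (bA_nonneg hl A (m+n)) (bA_le hl A (m+n))
    (p_nonneg hl _) (p_nonneg hl _) hS hT (pR_nonneg hl m) hK1 hK2 (by positivity) hf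
  rw [← hE] at hcore
  -- now extract the bound on the difference
  have hJ : (0:ℝ) < ((m+n+1:ℕ):ℝ) := by positivity
  have hq : (0:ℝ) < p lam (m+n+1) := p_pos hl _
  have hSpos : (0:ℝ) < pS lam m := S_pos hl
  have hfac : (0:ℝ) < ((m+n+1:ℕ):ℝ) * lam * p lam (m+n+1) * pS lam m := by positivity
  rw [abs_mul, abs_of_pos hfac] at hcore
  rw [le_div_iff₀ (by positivity : (0:ℝ) < lam * pS lam m)]
  have hfin : |g (m+n+1+1) - g (m+n+1)| * (lam * pS lam m) * (((m+n+1:ℕ):ℝ) * p lam (m+n+1))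
      ≤ pR lam m * (((m+n+1:ℕ):ℝ) * p lam (m+n+1)) := by
    calc |g (m+n+1+1) - g (m+n+1)| * (lam * pS lam m) * (((m+n+1:ℕ):ℝ) * p lam (m+n+1))
        = ((m+n+1:ℕ):ℝ) * lam * p lam (m+n+1) * pS lam m * |g (m+n+1+1) - g (m+n+1)| := by
          ring
      _ ≤ ((m+n+1:ℕ):ℝ) * p lam (m+n+1) * pR lam m := hcore
      _ = pR lam m * (((m+n+1:ℕ):ℝ) * p lam (m+n+1)) := by ring
  have := le_of_mul_le_mul_right hfin (by positivity : (0:ℝ) < ((m+n+1:ℕ):ℝ) * p lam (m+n+1))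
  exact this

/-- canonical recursive solution of the Stein equation -/
noncomputable def csol (lam : ℝ) (m : ℕ) (A : Set ℕ) : ℕ → ℝ
  | 0 => 0
  | i + 1 =>
    if i < m then 0
    else ((if m < i then (i : ℝ) * csol lam m A i else 0) + (if i ∈ A then 1 else 0)
      - poiCondProb lam m A) / lam

lemma csol_step (lam : ℝ) (m : ℕ) (A : Set ℕ) (i : ℕ) :
    csol lam m A (i + 1)
      = if i < m then 0
        else ((if m < i then (i : ℝ) * csol lam m A i else 0) + (if i ∈ A then 1 else 0)
          - poiCondProb lam m A) / lam := rfl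

lemma csol_sol (hl : 0 < lam) (A : Set ℕ) : IsPoiSteinSol lam m A (csol lam m A) := by
  intro i hi
  have hne : lam ≠ 0 := hl.ne'
  rw [csol_step, if_neg (not_lt.2 hi)]
  field_simp
  ring

lemma nuA_singleton (hl : 0 < lam) : nuA lam m {m+1} = p lam (m+1) := by
  unfold nuA
  rw [tsum_eq_single 1]
  · have h1 : indA {m+1} (m+1) = 1 := by
      unfold indA
      rw [if_pos (by exact rfl)]
    rw [h1, one_mul]
  · intro n hn
    have h0 : indA {m+1} (m+n) = 0 := by
      unfold indA
      rw [if_neg]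
      intro hmem
      have : m + n = m + 1 := hmem
      omega
    rw [h0, zero_mul]

lemma csol_vals (hl : 0 < lam) :
    |csol lam m {m+1} (m+2) - csol lam m {m+1} (m+1)| = pR lam m / (lam * pS lam m) := by
  have hSpos := S_pos (lam := lam) (m := m) hl
  have hmu : poiCondProb lam m {m+1} = p lam (m+1) / pS lam m := by
    rw [cond_eq hl, nuA_singleton hl]
  have hmem1 : (m + 1 : ℕ) ∈ ({m+1} : Set ℕ) := rfl
  have hmem0 : (m : ℕ) ∉ ({m+1} : Set ℕ) := by
    intro hmem
    have : m = m + 1 := hmem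
    omega
  have h1 : csol lam m {m+1} (m+1) = (0 + 0 - poiCondProb lam m {m+1}) / lam := by
    rw [csol_step, if_neg (lt_irrefl m), if_neg (lt_irrefl m), if_neg hmem0]
  have h2 : csol lam m {m+1} (m+2)
      = (((m+1 : ℕ) : ℝ) * csol lam m {m+1} (m+1) + 1 - poiCondProb lam m {m+1}) / lam := by
    show csol lam m {m+1} ((m+1) + 1) = _
    rw [csol_step, if_neg (by omega : ¬ m + 1 < m), if_pos (by omega : m < m + 1),
      if_pos hmem1]
  have hr := ratio hl m
  have hS : pS lam m = p lam m + pR lam m := by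
    have := S_split (lam := lam) hl (le_refl m)
    rw [pC_m] at this
    exact this
  have hne : lam ≠ 0 := hl.ne'
  have hSne : pS lam m ≠ 0 := hSpos.ne'
  have hval : lam * (lam * pS lam m) * (csol lam m {m+1} (m+2) - csol lam m {m+1} (m+1))
      = lam * pR lam m := by
    rw [h2, h1, hmu]
    field_simp
    push_cast at hr ⊢
    linear_combination lam * hS + hr
  have hΔ : csol lam m {m+1} (m+2) - csol lam m {m+1} (m+1)
      = pR lam m / (lam * pS lam m) := by
    rw [eq_div_iff (by positivity : (lam * pS lam m) ≠ 0)]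
    apply mul_left_cancel₀ hne
    linarith [hval]
  rw [hΔ, abs_of_nonneg]
  exact div_nonneg (pR_nonneg hl m) (by positivity)

section Continuous

open Real

/-- total mass one -/
lemma pS_zero {lam : ℝ} (hl : 0 < lam) : pS lam 0 = 1 := by
  unfold pS
  have h1 : ∀ n : ℕ, p lam (0 + n) = Real.exp (-lam) * (lam ^ n / n.factorial) := by
    intro n
    rw [Nat.zero_add, p_def]
    ring
  rw [tsum_congr h1, tsum_mul_left]
  have h2 : (∑' n : ℕ, lam ^ n / (n.factorial : ℝ)) = Real.exp lam := by
    rw [Real.exp_eq_exp_ℝ, NormedSpace.exp_eq_tsum_div]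
  rw [h2, ← Real.exp_add]
  simp

noncomputable def sqe : ℝ := Real.sqrt (2 / Real.exp 1)
noncomputable def phiF (t : ℝ) : ℝ := sqe * Real.sqrt t
noncomputable def MbF (t : ℝ) : ℝ := sqe / (2 * Real.sqrt t)
noncomputable def FF (w : ℕ) (t : ℝ) : ℝ :=
  ∑ k ∈ Finset.range (w+1), Real.exp (-t) * t ^ k / k.factorial
noncomputable def pp (w : ℕ) (t : ℝ) : ℝ := Real.exp (-t) * t ^ w / w.factorial
noncomputable def DD (w : ℕ) (t : ℝ) : ℝ := FF w t * (1 - FF w t) - phiF t * pp w t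
noncomputable def GG (w : ℕ) (t : ℝ) : ℝ :=
  2 * FF w t - 1 - MbF t - phiF t * ((w : ℝ) - t) / t

lemma sqe_pos : 0 < sqe := Real.sqrt_pos.2 (by positivity)

lemma sqe_sq : sqe ^ 2 = 2 / Real.exp 1 := Real.sq_sqrt (by positivity)

lemma pp_eq {lam : ℝ} (w : ℕ) : pp w lam = p lam w := rfl

lemma FF_eq {lam : ℝ} (w : ℕ) : FF w lam = pC lam 0 w := by
  unfold FF pC
  rw [show w + 1 - 0 = w + 1 from rfl]
  exact Finset.sum_congr rfl fun k _ => by rw [Nat.zero_add, p_def]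

lemma pp_pos (w : ℕ) {t : ℝ} (ht : 0 < t) : 0 < pp w t := by
  have h : (0:ℝ) < (w.factorial : ℝ) := by exact_mod_cast w.factorial_pos
  unfold pp; positivity

lemma FF_nonneg (w : ℕ) {t : ℝ} (ht : 0 < t) : 0 ≤ FF w t := by
  apply Finset.sum_nonneg
  intro k _
  have h : (0:ℝ) < (k.factorial : ℝ) := by exact_mod_cast k.factorial_pos
  positivity

lemma MbF_pos {t : ℝ} (ht : 0 < t) : 0 < MbF t := by
  have := sqe_pos
  have h2 : 0 < Real.sqrt t := Real.sqrt_pos.2 ht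
  unfold MbF; positivity

lemma phiF_pos {t : ℝ} (ht : 0 < t) : 0 < phiF t := by
  have := sqe_pos
  have h2 : 0 < Real.sqrt t := Real.sqrt_pos.2 ht
  unfold phiF; positivity

lemma phiF_eq_two_MbF {t : ℝ} (ht : 0 < t) : phiF t = 2 * MbF t * t := by
  have h2 : 0 < Real.sqrt t := Real.sqrt_pos.2 ht
  have h3 : Real.sqrt t * Real.sqrt t = t := Real.mul_self_sqrt ht.le
  unfold phiF MbF
  field_simp
  linear_combination sqe * h3

lemma phiF_mul_MbF {t : ℝ} (ht : 0 < t) : phiF t * MbF t = 1 / Real.exp 1 := by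
  have h2 : 0 < Real.sqrt t := Real.sqrt_pos.2 ht
  have he : (0:ℝ) < Real.exp 1 := Real.exp_pos 1
  have hs : sqe ^ 2 * Real.exp 1 = 2 := by
    rw [sqe_sq]; field_simp
  unfold phiF MbF
  field_simp
  linear_combination hs

lemma hasDeriv_term (k : ℕ) (t : ℝ) :
    HasDerivAt (fun s : ℝ => Real.exp (-s) * s ^ k / (k.factorial : ℝ))
      ((Real.exp (-t) * ((k:ℝ) * t ^ (k-1)) - Real.exp (-t) * t ^ k) / (k.factorial : ℝ)) t := by
  have h1 : HasDerivAt (fun s : ℝ => Real.exp (-s)) (-Real.exp (-t)) t := by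
    exact ((Real.hasDerivAt_exp (-t)).comp t (hasDerivAt_neg t)).congr_deriv (by ring)
  have h2 := hasDerivAt_pow k t
  have h3 := h1.mul h2
  have h4 := h3.div_const (k.factorial : ℝ)
  refine (h4).congr_deriv (Eq.symm ?_)
  ring

lemma hasDeriv_FF (w : ℕ) (t : ℝ) : HasDerivAt (FF w) (-(pp w t)) t := by
  induction w with
  | zero =>
    have h := hasDeriv_term 0 t
    have e1 : FF 0 = fun s : ℝ => Real.exp (-s) * s ^ 0 / ((0:ℕ).factorial : ℝ) := by
      funext s
      unfold FF
      rw [Finset.sum_range_one]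
    rw [e1]
    convert h using 1
    unfold pp
    norm_num
  | succ w ih =>
    have h := hasDeriv_term (w+1) t
    have e1 : FF (w+1) = fun s : ℝ =>
        FF w s + Real.exp (-s) * s ^ (w+1) / ((w+1).factorial : ℝ) := by
      funext s
      unfold FF
      rw [Finset.sum_range_succ]
    rw [e1]
    have h5 := ih.add h
    refine (h5).congr_deriv (Eq.symm ?_)
    have hfac : ((w+1).factorial : ℝ) = ((w:ℝ)+1) * (w.factorial : ℝ) := by
      rw [Nat.factorial_succ]; push_cast; ring
    have hw : (w+1) - 1 = w := rfl
    unfold pp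
    rw [hfac, hw]
    have hfw : ((w.factorial : ℕ) : ℝ) ≠ 0 := by
      exact_mod_cast w.factorial_pos.ne'
    have hfw1 : ((w:ℝ)+1) ≠ 0 := by positivity
    field_simp
    push_cast; ring

lemma hasDeriv_pp (w : ℕ) {t : ℝ} (ht : 0 < t) :
    HasDerivAt (pp w) (pp w t * ((w:ℝ)/t - 1)) t := by
  have h := hasDeriv_term w t
  refine (h).congr_deriv (Eq.symm ?_)
  unfold pp
  have hfw : ((w.factorial : ℕ) : ℝ) ≠ 0 := by exact_mod_cast w.factorial_pos.ne'
  rcases Nat.eq_zero_or_pos w with hw | hw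
  · subst hw; norm_num
  · have hw1 : w - 1 + 1 = w := by omega
    have hpow : t ^ w = t ^ (w-1) * t := by
      rw [← pow_succ, hw1]
    rw [hpow]
    field_simp

lemma hasDeriv_phiF {t : ℝ} (ht : 0 < t) : HasDerivAt phiF (MbF t) t := by
  have h := (Real.hasDerivAt_sqrt ht.ne').const_mul sqe
  refine (h).congr_deriv (Eq.symm ?_)
  unfold MbF
  ring

lemma hasDeriv_MbF {t : ℝ} (ht : 0 < t) : HasDerivAt MbF (-(MbF t)/(2*t)) t := by
  have hst : 0 < Real.sqrt t := Real.sqrt_pos.2 ht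
  have h1 := Real.hasDerivAt_sqrt ht.ne'
  have h2 := (h1.const_mul (2:ℝ)).inv (by positivity)
  have h3 := h2.const_mul sqe
  have hts : Real.sqrt t * Real.sqrt t = t := Real.mul_self_sqrt ht.le
  refine (h3).congr_deriv (Eq.symm ?_)
  unfold MbF
  field_simp
  linear_combination (-sqe) * hts

lemma hasDeriv_DD (w : ℕ) {t : ℝ} (ht : 0 < t) :
    HasDerivAt (DD w) (pp w t * GG w t) t := by
  have hF := hasDeriv_FF w t
  have hp := hasDeriv_pp w ht
  have hφ := hasDeriv_phiF ht
  have h1 : HasDerivAt (fun s => FF w s * (1 - FF w s))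
      (-(pp w t) * (1 - FF w t) + FF w t * (-(-(pp w t)))) t := by
    have := hF.mul ((hasDerivAt_const t (1:ℝ)).sub hF)
    refine (this).congr_deriv (Eq.symm ?_)
    simp only [Pi.sub_apply]; ring
  have h2 : HasDerivAt (fun s => phiF s * pp w s)
      (MbF t * pp w t + phiF t * (pp w t * ((w:ℝ)/t - 1))) t := hφ.mul hp
  have h3 := h1.sub h2
  refine (h3).congr_deriv (Eq.symm ?_)
  unfold GG
  field_simp
  ring

lemma hasDeriv_GG (w : ℕ) {t : ℝ} (ht : 0 < t) :
    HasDerivAt (GG w) (-2 * pp w t + MbF t * (1 + (w:ℝ)/t + 1/(2*t))) t := by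
  have hF := hasDeriv_FF w t
  have hM := hasDeriv_MbF ht
  have hφ := hasDeriv_phiF ht
  have hq : HasDerivAt (fun s : ℝ => ((w:ℝ) - s)/s) (-(w:ℝ)/t^2) t := by
    have h1 : HasDerivAt (fun s : ℝ => s⁻¹) (-(t^2)⁻¹) t := hasDerivAt_inv ht.ne'
    have h2 := h1.const_mul (w:ℝ)
    have h3 := h2.sub (hasDerivAt_const t (1:ℝ))
    have he : (fun s : ℝ => ((w:ℝ) - s)/s) =ᶠ[nhds t] (fun s : ℝ => (w:ℝ) * s⁻¹ - 1) := by
      filter_upwards [eventually_ne_nhds ht.ne'] with s hs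
      field_simp
    have h4 := h3.congr_of_eventuallyEq he
    refine (h4).congr_deriv (Eq.symm ?_)
    field_simp; ring
  have h5 := hφ.mul hq
  have h6 := ((hF.const_mul (2:ℝ)).sub (hasDerivAt_const t (1:ℝ))).sub hM
  have h7 := h6.sub h5
  have hG : GG w = fun s => (2 * FF w s - 1 - MbF s) - phiF s * (((w:ℝ) - s)/s) := by
    funext s
    unfold GG
    ring
  rw [hG]
  refine (h7).congr_deriv (Eq.symm ?_)
  rw [phiF_eq_two_MbF ht]
  field_simp
  ring

end Continuous

section Facts

open Real

/-- telescoping identity: `∑_{k ≤ w} (t-k) π_k = t π_w` (continuous version) -/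
lemma sumid (w : ℕ) (t : ℝ) :
    ∑ k ∈ Finset.range (w+1), (t - (k:ℝ)) * (Real.exp (-t) * t ^ k / k.factorial)
      = t * (Real.exp (-t) * t ^ w / w.factorial) := by
  induction w with
  | zero => norm_num
  | succ w ih =>
    rw [Finset.sum_range_succ, ih]
    have hfac : ((w+1).factorial : ℝ) = ((w:ℝ)+1) * (w.factorial : ℝ) := by
      rw [Nat.factorial_succ]; push_cast; ring
    have hfw : ((w.factorial : ℕ) : ℝ) ≠ 0 := by exact_mod_cast w.factorial_pos.ne'
    have hfw1 : ((w:ℝ)+1) ≠ 0 := by positivity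
    rw [hfac]
    push_cast
    field_simp
    ring

lemma hFgeo (w : ℕ) {t : ℝ} (ht : 0 < t) : (t - (w:ℝ)) * FF w t ≤ t * pp w t := by
  rw [show t * pp w t = ∑ k ∈ Finset.range (w+1),
      (t - (k:ℝ)) * (Real.exp (-t) * t ^ k / k.factorial) from (sumid w t).symm]
  unfold FF
  rw [Finset.mul_sum]
  apply Finset.sum_le_sum
  intro k hk
  have hkw : (k:ℝ) ≤ (w:ℝ) := by
    simp only [Finset.mem_range] at hk
    exact_mod_cast by omega
  have hterm : (0:ℝ) ≤ Real.exp (-t) * t ^ k / k.factorial := by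
    have h : (0:ℝ) < (k.factorial : ℝ) := by exact_mod_cast k.factorial_pos
    positivity
  apply mul_le_mul_of_nonneg_right _ hterm
  linarith

lemma FF_le_one {lam : ℝ} (w : ℕ) (hl : 0 < lam) : FF w lam ≤ 1 := by
  rw [FF_eq]
  have h := S_split (lam := lam) (m := 0) hl (Nat.zero_le w)
  rw [pS_zero hl] at h
  have := pR_nonneg hl w
  linarith

/-- Padé-type bound: `(2-t) e^t ≤ 2+t` for `0 ≤ t` -/
lemma pade (t : ℝ) (ht : 0 ≤ t) : (2 - t) * Real.exp t ≤ 2 + t := by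
  have hderiv : ∀ s : ℝ, HasDerivAt (fun u : ℝ => (2 + u) - (2 - u) * Real.exp u)
      (1 - (1 - s) * Real.exp s) s := by
    intro s
    have h1 : HasDerivAt (fun u : ℝ => (2:ℝ) + u) 1 s := by
      simpa using (hasDerivAt_id s).const_add (2:ℝ)
    have h2 : HasDerivAt (fun u : ℝ => ((2:ℝ) - u) * Real.exp u)
        ((-1) * Real.exp s + (2 - s) * Real.exp s) s := by
      exact ((hasDerivAt_id s).const_sub (2:ℝ)).mul (Real.hasDerivAt_exp s)
    have h3 := h1.sub h2
    refine (h3).congr_deriv (Eq.symm ?_)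
    ring
  have hmono : MonotoneOn (fun u : ℝ => (2 + u) - (2 - u) * Real.exp u) (Set.Ici (0:ℝ)) := by
    apply monotoneOn_of_deriv_nonneg (convex_Ici 0)
    · exact Continuous.continuousOn (by fun_prop)
    · intro s _
      exact (hderiv s).differentiableAt.differentiableWithinAt
    · intro s hs
      rw [(hderiv s).deriv]
      have hs' : (0:ℝ) ≤ s := by
        have : s ∈ Set.Ioi (0:ℝ) := by rwa [interior_Ici] at hs
        exact (Set.mem_Ioi.1 this).le
      have h5 : 1 - s ≤ Real.exp (-s) := by
        have := Real.add_one_le_exp (-s)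
        linarith
      have h6 : Real.exp (-s) * Real.exp s = 1 := by
        rw [← Real.exp_add]; norm_num
      nlinarith [Real.exp_pos s]
  have := hmono (Set.mem_Ici.2 (le_refl 0)) (Set.mem_Ici.2 ht) ht
  norm_num at this
  linarith

lemma one_sub_exp_le (t : ℝ) (ht : 0 < t) : 1 - Real.exp (-t) ≤ 2*t/(2+t) := by
  have h2t : (0:ℝ) < 2 + t := by linarith
  rw [div_eq_inv_mul, ← sub_nonneg]
  rcases le_or_gt t 2 with h | h
  · have hp := pade t ht.le
    have hE : 0 < Real.exp (-t) := Real.exp_pos _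
    have h6 : Real.exp (-t) * Real.exp t = 1 := by
      rw [← Real.exp_add]; norm_num
    have key : 2 - t ≤ (2+t) * Real.exp (-t) := by
      nlinarith [Real.exp_pos t]
    have : (2+t) * ((2+t)⁻¹ * (2*t) - (1 - Real.exp (-t))) = 2*t - (2+t)*(1 - Real.exp (-t)) := by
      field_simp
    nlinarith [key]
  · have hE : 0 < Real.exp (-t) := Real.exp_pos _
    have h1 : 1 - Real.exp (-t) ≤ 1 := by linarith
    have h2 : (1:ℝ) ≤ (2+t)⁻¹ * (2*t) := by
      rw [inv_mul_eq_div, le_div_iff₀ h2t]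
      linarith
    linarith

lemma sqrt_bound (t : ℝ) (ht : 0 < t) : 2*t/(2+t) ≤ phiF t := by
  have h2t : (0:ℝ) < 2 + t := by linarith
  have he : (0:ℝ) < Real.exp 1 := Real.exp_pos 1
  have h2e : 2*t*Real.exp 1 ≤ (2+t)^2 := by
    nlinarith [sq_nonneg (t - (Real.exp 1 - 2)), Real.exp_one_lt_d9]
  have hL : (0:ℝ) ≤ 2*t/(2+t) := by positivity
  have hphi : (0:ℝ) ≤ phiF t := (phiF_pos ht).le
  have hsq : (2*t/(2+t))^2 ≤ (phiF t)^2 := by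
    have e1 : (phiF t)^2 = 2/Real.exp 1 * t := by
      unfold phiF
      rw [mul_pow, sqe_sq, Real.sq_sqrt ht.le]
    have key2 : (2*t/(2+t))^2 * Real.exp 1 ≤ 2*t := by
      rw [div_pow, div_mul_eq_mul_div, div_le_iff₀ (by positivity : (0:ℝ) < (2+t)^2)]
      nlinarith [h2e, ht]
    rw [e1, div_mul_eq_mul_div, le_div_iff₀ he]
    linarith [key2]
  calc 2*t/(2+t) = Real.sqrt ((2*t/(2+t))^2) := (Real.sqrt_sq hL).symm
    _ ≤ Real.sqrt ((phiF t)^2) := Real.sqrt_le_sqrt hsq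
    _ = phiF t := Real.sqrt_sq hphi

/-- B0 : the `w = 0` verification, all `t > 0` -/
lemma B0 {t : ℝ} (ht : 0 < t) : DD 0 t ≤ 0 := by
  have hE : 0 < Real.exp (-t) := Real.exp_pos _
  have h1 : FF 0 t = Real.exp (-t) := by
    unfold FF
    rw [Finset.sum_range_one]
    norm_num
  have h2 : pp 0 t = Real.exp (-t) := by
    unfold pp; norm_num
  unfold DD
  rw [h1, h2]
  have hkey : 1 - Real.exp (-t) ≤ phiF t :=
    le_trans (one_sub_exp_le t ht) (sqrt_bound t ht)
  nlinarith [hE, hkey]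

end Facts

section B1sec

open Real

lemma exp16_ub : Real.exp (1/16 : ℝ) ≤ 1.06449446 := by
  have h16 : (Real.exp (1/16 : ℝ))^16 = Real.exp 1 := by
    rw [← Real.exp_nat_mul]
    norm_num
  by_contra hcon
  push_neg at hcon
  have h1 : ((1.06449446:ℝ))^16 < (Real.exp (1/16 : ℝ))^16 := by
    apply pow_lt_pow_left₀ hcon (by norm_num)
    norm_num
  rw [h16] at h1
  have h2 := Real.exp_one_lt_d9
  have h3 : (2.7182818286:ℝ) < (1.06449446:ℝ)^16 := by norm_num
  linarith

lemma expneg_ge (j : ℕ) : (((1.06449446:ℝ))^j)⁻¹ ≤ Real.exp (-((j:ℝ)/16)) := by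
  have h1 : Real.exp (-((j:ℝ)/16)) = ((Real.exp (1/16 : ℝ))^j)⁻¹ := by
    rw [← Real.exp_nat_mul, ← Real.exp_neg]
    congr 1
    ring
  rw [h1]
  apply inv_anti₀
  · positivity
  · exact pow_le_pow_left₀ (Real.exp_pos _).le exp16_ub j

lemma cellB1 (a b EB : ℝ) (ha : 0 < a) (hab : a ≤ b) (hEB : 0 ≤ EB)
    (hEb : EB ≤ Real.exp (-b))
    (hnum : Real.exp 1 * ((1+b)*(1-(1+a)*EB))^2 ≤ 2*a^3)
    {t : ℝ} (h1 : a ≤ t) (h2 : t ≤ b) : DD 1 t ≤ 0 := by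
  have ht : 0 < t := lt_of_lt_of_le ha h1
  have hE : 0 < Real.exp (-t) := Real.exp_pos _
  have hF : FF 1 t = Real.exp (-t) * (1+t) := by
    unfold FF
    rw [Finset.sum_range_succ, Finset.sum_range_one]
    norm_num
    ring
  have hp : pp 1 t = Real.exp (-t) * t := by
    unfold pp; norm_num
  unfold DD
  rw [hF, hp]
  have hphit : 0 < phiF t := phiF_pos ht
  suffices hs : (1+t)*(1-Real.exp (-t)*(1+t)) ≤ phiF t * t by nlinarith [hE, hs]
  have hmono : Real.exp (-b) ≤ Real.exp (-t) := Real.exp_le_exp.2 (by linarith)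
  have hup : (1+t)*Real.exp (-t) ≤ 1 := by
    have h5 := Real.add_one_le_exp t
    have h6 : Real.exp (-t) * Real.exp t = 1 := by
      rw [← Real.exp_add]; norm_num
    nlinarith [Real.exp_pos t]
  have hFlow : (1+a)*EB ≤ (1+t)*Real.exp (-t) := by
    apply mul_le_mul (by linarith) (le_trans hEb hmono) hEB (by linarith)
  have hL : (1+t)*(1-Real.exp (-t)*(1+t)) ≤ (1+b)*(1-(1+a)*EB) := by
    apply mul_le_mul (by linarith) (by nlinarith [hFlow]) (by nlinarith [hup]) (by linarith)
  have hphiA : phiF a * a ≤ phiF t * t := by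
    have hsq : Real.sqrt a ≤ Real.sqrt t := Real.sqrt_le_sqrt h1
    have h7 : (0:ℝ) ≤ Real.sqrt a := Real.sqrt_nonneg a
    have h8 := sqe_pos
    have h9 : Real.sqrt a * a ≤ Real.sqrt t * t :=
      mul_le_mul hsq h1 ha.le (Real.sqrt_nonneg t)
    have h10 := mul_le_mul_of_nonneg_left h9 h8.le
    unfold phiF
    nlinarith [h10]
  have hphiAp : 0 < phiF a * a := mul_pos (phiF_pos ha) ha
  have hRa : (1+b)*(1-(1+a)*EB) ≤ phiF a * a := by
    rcases le_or_gt ((1+b)*(1-(1+a)*EB)) 0 with h | h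
    · linarith
    · have e1 : (phiF a * a)^2 = 2/Real.exp 1 * a^3 := by
        unfold phiF
        rw [mul_pow, mul_pow, sqe_sq, Real.sq_sqrt ha.le]
        ring
      have hsq2 : ((1+b)*(1-(1+a)*EB))^2 ≤ (phiF a * a)^2 := by
        rw [e1, div_mul_eq_mul_div, le_div_iff₀ (Real.exp_pos 1)]
        nlinarith [hnum]
      calc (1+b)*(1-(1+a)*EB) = Real.sqrt (((1+b)*(1-(1+a)*EB))^2) :=
            (Real.sqrt_sq h.le).symm
        _ ≤ Real.sqrt ((phiF a * a)^2) := Real.sqrt_le_sqrt hsq2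
        _ = phiF a * a := Real.sqrt_sq hphiAp.le
  linarith [hL, hRa, hphiA]

lemma B1 {t : ℝ} (h1 : 0.7 ≤ t) (h2 : t ≤ 3.3125) : DD 1 t ≤ 0 := by
  have hexp1 := Real.exp_one_lt_d9
  have cell : ∀ (a : ℝ) (j : ℕ), 0 < a → a ≤ (j:ℝ)/16 →
      Real.exp 1 * ((1+(j:ℝ)/16)*(1-(1+a)*(((1.06449446:ℝ))^j)⁻¹))^2 ≤ 2*a^3 →
      a ≤ t → t ≤ (j:ℝ)/16 → DD 1 t ≤ 0 := by
    intro a j ha hab hnum ht1 ht2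
    exact cellB1 a ((j:ℝ)/16) ((((1.06449446:ℝ))^j)⁻¹) ha hab (by positivity)
      (expneg_ge j) hnum ht1 ht2
  rcases le_or_gt t (13/16 : ℝ) with h | h
  · exact cell 0.7 13 (by norm_num) (by norm_num)
      (by norm_num; nlinarith [hexp1]) h1 (by norm_num at h ⊢; linarith)
  rcases le_or_gt t (15/16 : ℝ) with h' | h'
  · exact cell (13/16) 15 (by norm_num) (by norm_num)
      (by norm_num; nlinarith [hexp1]) (by norm_num at h ⊢; linarith) h'
  rcases le_or_gt t (17/16 : ℝ) with h'' | h''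
  · exact cell (15/16) 17 (by norm_num) (by norm_num)
      (by norm_num; nlinarith [hexp1]) (by norm_num at h' ⊢; linarith) h''
  rcases le_or_gt t (20/16 : ℝ) with h3 | h3
  · exact cell (17/16) 20 (by norm_num) (by norm_num)
      (by norm_num; nlinarith [hexp1]) (by norm_num at h'' ⊢; linarith) h3
  rcases le_or_gt t (23/16 : ℝ) with h4 | h4
  · exact cell (20/16) 23 (by norm_num) (by norm_num)
      (by norm_num; nlinarith [hexp1]) (by norm_num at h3 ⊢; linarith) h4
  rcases le_or_gt t (27/16 : ℝ) with h5 | h5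
  · exact cell (23/16) 27 (by norm_num) (by norm_num)
      (by norm_num; nlinarith [hexp1]) (by norm_num at h4 ⊢; linarith) h5
  rcases le_or_gt t (31/16 : ℝ) with h6 | h6
  · exact cell (27/16) 31 (by norm_num) (by norm_num)
      (by norm_num; nlinarith [hexp1]) (by norm_num at h5 ⊢; linarith) h6
  rcases le_or_gt t (36/16 : ℝ) with h7 | h7
  · exact cell (31/16) 36 (by norm_num) (by norm_num)
      (by norm_num; nlinarith [hexp1]) (by norm_num at h6 ⊢; linarith) h7
  rcases le_or_gt t (43/16 : ℝ) with h8 | h8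
  · exact cell (36/16) 43 (by norm_num) (by norm_num)
      (by norm_num; nlinarith [hexp1]) (by norm_num at h7 ⊢; linarith) h8
  · exact cell (43/16) 53 (by norm_num) (by norm_num)
      (by norm_num; nlinarith [hexp1]) (by norm_num at h8 ⊢; linarith)
      (by norm_num at h2 ⊢; linarith)

end B1sec

section Core

open Real Filter Set

lemma DD_cont (w : ℕ) : Continuous (DD w) := by
  unfold DD FF pp phiF
  fun_prop

/-- small-`t` bound via `I1` -/
lemma DD_small (w : ℕ) {t : ℝ} (ht : 0 < t) (hte : t ≤ 2/Real.exp 1) : DD w t ≤ 0 := by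
  have hI1 := I1 (lam := t) (m := 0) ht (Nat.zero_le w)
  rw [pS_zero ht] at hI1
  have hFR : FF w t = pC t 0 w := FF_eq w
  have hs := S_split (lam := t) (m := 0) ht (Nat.zero_le w)
  rw [pS_zero ht] at hs
  have hR : pR t w = 1 - FF w t := by rw [hFR]; linarith
  have htphi : t ≤ phiF t := by
    have h1 : Real.sqrt t ≤ sqe := by
      apply Real.sqrt_le_sqrt
      exact hte
    have h2 : t = Real.sqrt t * Real.sqrt t := (Real.mul_self_sqrt ht.le).symm
    calc t = Real.sqrt t * Real.sqrt t := h2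
      _ ≤ Real.sqrt t * sqe := by nlinarith [Real.sqrt_nonneg t]
      _ = phiF t := by unfold phiF; ring
  have hppnn : 0 ≤ p t w := p_nonneg ht w
  have hchain : FF w t * (1 - FF w t) ≤ phiF t * pp w t := by
    calc FF w t * (1 - FF w t) = pC t 0 w * pR t w := by rw [← hR, hFR]
      _ ≤ t * p t w * 1 := hI1
      _ = t * p t w := by ring
      _ ≤ phiF t * p t w := mul_le_mul_of_nonneg_right htphi hppnn
      _ = phiF t * pp w t := by rw [pp_eq]
  unfold DD
  linarith

/-- tail bound -/
lemma DD_tail (w : ℕ) {t : ℝ} (h1 : 2*(w:ℝ)+2 ≤ t) (h2 : 2*Real.exp 1 ≤ t) : DD w t ≤ 0 := by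
  have ht : 0 < t := lt_of_lt_of_le (by positivity) h2
  have hFnn := FF_nonneg w ht
  have hppp := pp_pos w ht
  have hgeo := hFgeo w ht
  have htw : t/2 ≤ t - (w:ℝ) := by linarith
  have hF2p : FF w t ≤ 2 * pp w t := by
    have ha : t/2 * FF w t ≤ (t - (w:ℝ)) * FF w t :=
      mul_le_mul_of_nonneg_right htw hFnn
    nlinarith [ha, hgeo, ht]
  have hphi2 : (2:ℝ) ≤ phiF t := by
    have hsq : (phiF t)^2 = 2/Real.exp 1 * t := by
      unfold phiF; rw [mul_pow, sqe_sq, Real.sq_sqrt ht.le]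
    have h4 : (4:ℝ) ≤ (phiF t)^2 := by
      rw [hsq, div_mul_eq_mul_div, le_div_iff₀ (Real.exp_pos 1)]
      nlinarith [Real.exp_pos 1]
    nlinarith [phiF_pos ht, h4]
  have hFle1 : FF w t ≤ 1 := FF_le_one w ht
  unfold DD
  nlinarith [hFnn, hF2p, hphi2, hppp, hFle1]

set_option maxHeartbeats 1000000 in
/-- THE core inequality: `DD w t ≤ 0` for all `w, t` -/
theorem DD_nonpos (w : ℕ) {lam : ℝ} (hl : 0 < lam) : DD w lam ≤ 0 := by
  by_contra hcon
  push_neg at hcon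
  have he1 : (0:ℝ) < Real.exp 1 := Real.exp_pos 1
  have h2e_pos : (0:ℝ) < 2/Real.exp 1 := by positivity
  have hlam_gt : 2/Real.exp 1 < lam := by
    by_contra hle
    push_neg at hle
    linarith [DD_small w hl hle]
  set T : ℝ := max (2*(w:ℝ)+2) (2*Real.exp 1) with hT
  have hT1 : 2*(w:ℝ)+2 ≤ T := le_max_left _ _
  have hT2 : 2*Real.exp 1 ≤ T := le_max_right _ _
  have hTpos : 0 < T := lt_of_lt_of_le (by positivity) hT2
  have htail : ∀ t : ℝ, T ≤ t → DD w t ≤ 0 := fun t ht' =>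
    DD_tail w (le_trans hT1 ht') (le_trans hT2 ht')
  have hlam_le : lam ≤ T := by
    by_contra hgt
    push_neg at hgt
    linarith [htail lam hgt.le]
  set a : ℝ := 2/Real.exp 1 with ha_def
  have haT : a ≤ T := by
    have h1 : a ≤ 2*Real.exp 1 := by
      rw [ha_def, div_le_iff₀ he1]
      nlinarith [Real.exp_one_gt_d9]
    linarith
  obtain ⟨c, hcmem, hcmax⟩ := (isCompact_Icc : IsCompact (Set.Icc a T)).exists_isMaxOn
    ⟨a, Set.mem_Icc.2 ⟨le_refl a, haT⟩⟩ ((DD_cont w).continuousOn)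
  have hlammem : lam ∈ Set.Icc a T := Set.mem_Icc.2 ⟨hlam_gt.le, hlam_le⟩
  have hDc : 0 < DD w c := lt_of_lt_of_le hcon (hcmax hlammem)
  have hca : a < c := by
    rcases lt_or_eq_of_le hcmem.1 with h | h
    · exact h
    · exfalso
      rw [← h] at hDc
      linarith [DD_small w h2e_pos (le_refl a)]
  have hcT : c < T := by
    rcases lt_or_eq_of_le hcmem.2 with h | h
    · exact h
    · exfalso
      rw [h] at hDc
      linarith [htail T (le_refl T)]
  have hc0 : 0 < c := lt_trans h2e_pos hca
  have hloc : IsLocalMax (DD w) c := hcmax.isLocalMax (Icc_mem_nhds hca hcT)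
  have hG0 : GG w c = 0 := by
    have h0 := hloc.hasDerivAt_eq_zero (hasDeriv_DD w hc0)
    have hq := pp_pos w hc0
    rcases mul_eq_zero.1 h0 with h | h
    · exfalso; linarith
    · exact h
  have hG'le : -2 * pp w c + MbF c * (1 + (w:ℝ)/c + 1/(2*c)) ≤ 0 := by
    by_contra hgpos
    push_neg at hgpos
    have hd := hasDeriv_GG w hc0
    have hslope := hasDerivAt_iff_tendsto_slope.1 hd
    have hev0 : ∀ᶠ x in nhdsWithin c {c}ᶜ, 0 < slope (GG w) c x :=
      hslope.eventually (lt_mem_nhds hgpos)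
    have hev1 : ∀ᶠ x in nhdsWithin c (Set.Ioi c), 0 < GG w x := by
      have hmono' : nhdsWithin c (Set.Ioi c) ≤ nhdsWithin c {c}ᶜ :=
        nhdsWithin_mono c (fun x hx => by
          simp only [Set.mem_compl_iff, Set.mem_singleton_iff]
          exact ne_of_gt hx)
      filter_upwards [hmono' hev0, self_mem_nhdsWithin] with x hx hx'
      have hxc : c < x := hx'
      rw [slope_def_field, hG0, sub_zero] at hx
      rcases div_pos_iff.1 hx with ⟨h1, _⟩ | ⟨_, h2⟩
      · exact h1
      · exfalso; linarith
    obtain ⟨u, hu, hsub⟩ := mem_nhdsGT_iff_exists_Ioc_subset.1 hev1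
    have hu' : c < u := hu
    set d := min u ((c+T)/2) with hd_def
    have hcd : c < d := lt_min hu' (by linarith)
    have hdT : d < T := lt_of_le_of_lt (min_le_right _ _) (by linarith)
    have hmono2 : StrictMonoOn (DD w) (Set.Icc c d) := by
      apply strictMonoOn_of_deriv_pos (convex_Icc c d) ((DD_cont w).continuousOn)
      intro x hx
      rw [interior_Icc] at hx
      have hx0 : 0 < x := lt_trans hc0 hx.1
      rw [(hasDeriv_DD w hx0).deriv]
      have hGx : 0 < GG w x :=
        hsub ⟨hx.1, le_of_lt (lt_of_lt_of_le hx.2 (min_le_left _ _))⟩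
      exact mul_pos (pp_pos w hx0) hGx
    have hdmem : d ∈ Set.Icc a T := ⟨by linarith, hdT.le⟩
    have hlt : DD w c < DD w d :=
      hmono2 (Set.mem_Icc.2 ⟨le_refl c, hcd.le⟩) (Set.mem_Icc.2 ⟨hcd.le, le_refl d⟩) hcd
    have h9 : DD w d ≤ DD w c := hcmax hdmem
    linarith
  -- final algebra
  have hqpos : 0 < pp w c := pp_pos w hc0
  have hMb := MbF_pos hc0
  have hphi := phiF_pos hc0
  have hfail : phiF c * pp w c < FF w c * (1 - FF w c) := by
    unfold DD at hDc; linarith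
  have hp_ge : MbF c * (1 + (w:ℝ)/c) / 2 ≤ pp w c := by
    have h1 : 0 < 1/(2*c) := by positivity
    nlinarith [hG'le, hMb]
  have hphiMb := phiF_mul_MbF hc0
  have hstep2 : (1 + (w:ℝ)/c) * (1/Real.exp 1) / 2 < FF w c * (1 - FF w c) := by
    calc (1 + (w:ℝ)/c) * (1/Real.exp 1)/2 = phiF c * (MbF c * (1 + (w:ℝ)/c)/2) := by
          rw [← hphiMb]; ring
      _ ≤ phiF c * pp w c := mul_le_mul_of_nonneg_left hp_ge hphi.le
      _ < FF w c * (1 - FF w c) := hfail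
  have hF14 : FF w c * (1 - FF w c) ≤ 1/4 := by nlinarith [sq_nonneg (FF w c - 1/2)]
  have hwe : 1 + (w:ℝ)/c < Real.exp 1/2 := by
    have h0 : (1 + (w:ℝ)/c) * (1/Real.exp 1) < 1/2 := by linarith
    have h1 : (1 + (w:ℝ)/c) * (1/Real.exp 1) * Real.exp 1 = 1 + (w:ℝ)/c := by
      field_simp
    nlinarith [mul_lt_mul_of_pos_right h0 he1, h1]
  have hwc : (w:ℝ) < c * (Real.exp 1/2 - 1) := by
    have h1 : (w:ℝ)/c < Real.exp 1/2 - 1 := by linarith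
    calc (w:ℝ) = ((w:ℝ)/c) * c := by field_simp
      _ < (Real.exp 1/2 - 1) * c := mul_lt_mul_of_pos_right h1 hc0
      _ = c * (Real.exp 1/2 - 1) := by ring
  have h4e : (0:ℝ) < 2 - Real.exp 1/2 := by nlinarith [Real.exp_one_lt_d9]
  have hcw2 : c*(2 - Real.exp 1/2) < c - (w:ℝ) := by nlinarith [hwc]
  have hFnn := FF_nonneg w hc0
  have hgeoc := hFgeo w hc0
  have hFq : (2 - Real.exp 1/2) * FF w c ≤ pp w c := by
    have h1 : c*(2 - Real.exp 1/2)*FF w c ≤ (c - (w:ℝ))*FF w c :=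
      mul_le_mul_of_nonneg_right hcw2.le hFnn
    nlinarith [hgeoc, hc0]
  have hFF_leF : FF w c * (1 - FF w c) ≤ FF w c := by nlinarith [hFnn]
  have hphi_lt : phiF c * (2 - Real.exp 1/2) < 1 := by
    have h1 : phiF c * pp w c * (2 - Real.exp 1/2) < FF w c * (2 - Real.exp 1/2) :=
      mul_lt_mul_of_pos_right (lt_of_lt_of_le hfail hFF_leF) h4e
    nlinarith [hFq, hqpos, hphi]
  have hc_ub : c < 3.3125 := by
    have hsq : (phiF c)^2 = 2/Real.exp 1 * c := by
      unfold phiF; rw [mul_pow, sqe_sq, Real.sq_sqrt hc0.le]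
    have h2 : (phiF c)^2 * (2 - Real.exp 1/2)^2 < 1 := by
      have hx0 : 0 ≤ phiF c * (2 - Real.exp 1/2) := (mul_pos hphi h4e).le
      have hxx : (phiF c * (2 - Real.exp 1/2)) * (phiF c * (2 - Real.exp 1/2)) < 1 * 1 :=
        mul_lt_mul'' hphi_lt hphi_lt hx0 hx0
      nlinarith [hxx]
    rw [hsq] at h2
    have he3 := Real.exp_one_gt_d9
    have he4 := Real.exp_one_lt_d9
    have h5 : 2 * c * (2 - Real.exp 1/2)^2 < Real.exp 1 := by
      have h6 : 2/Real.exp 1 * c * (2 - Real.exp 1/2)^2 * Real.exp 1 < 1 * Real.exp 1 :=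
        mul_lt_mul_of_pos_right h2 he1
      have h7 : 2/Real.exp 1 * c * (2 - Real.exp 1/2)^2 * Real.exp 1
          = 2 * c * (2 - Real.exp 1/2)^2 := by
        field_simp
      rw [h7] at h6
      linarith
    nlinarith [hc0, h5]
  have hwlt : (w:ℝ) < 1.19 := by
    have he4 := Real.exp_one_lt_d9
    nlinarith [hwc, hc_ub, hc0]
  have hc_lb : (0.7:ℝ) ≤ c := by
    have he4 := Real.exp_one_lt_d9
    have h1 : (0.7:ℝ) ≤ 2/Real.exp 1 := by
      rw [le_div_iff₀ he1]
      nlinarith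
    linarith [hca]
  have hw1 : w ≤ 1 := by
    by_contra hw2
    push_neg at hw2
    have : (2:ℝ) ≤ (w:ℝ) := by exact_mod_cast hw2
    linarith
  interval_cases w
  · linarith [B0 hc0]
  · linarith [B1 hc_lb hc_ub.le]

end Core

lemma pC_zero_eq {lam : ℝ} (w : ℕ) : pC lam 0 w = ∑ k ∈ Finset.range (w+1), p lam k := by
  unfold pC
  simp

/-- Classical bound (Barbour–Holst–Janson 1992, Lemma 1.1.1). -/
lemma I2 (hl : 0 < lam) (hw : m ≤ w) :
    pC lam m w * pR lam w
      ≤ Real.sqrt (2 / (lam * Real.exp 1)) * (lam * p lam w * pS lam m) := by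
  have he1 : (0:ℝ) < Real.exp 1 := Real.exp_pos 1
  have hphi_eq : Real.sqrt (2/(lam * Real.exp 1)) * lam = phiF lam := by
    have h1 : Real.sqrt (2/(lam*Real.exp 1)) * lam
        = Real.sqrt (2/(lam*Real.exp 1) * lam^2) := by
      rw [Real.sqrt_mul (by positivity), Real.sqrt_sq hl.le]
    rw [h1]
    unfold phiF sqe
    rw [← Real.sqrt_mul (by positivity : (0:ℝ) ≤ 2/Real.exp 1)]
    congr 1
    field_simp
  have hcore := DD_nonpos w hl
  unfold DD at hcore
  have hFR : FF w lam = pC lam 0 w := FF_eq w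
  have hs0 := S_split (lam := lam) (m := 0) hl (Nat.zero_le w)
  rw [pS_zero hl] at hs0
  have hRF : (1 - FF w lam) = pR lam w := by rw [hFR]; linarith
  have hFRle : pC lam 0 w * pR lam w ≤ phiF lam * p lam w := by
    rw [← hFR, ← hRF, ← pp_eq]
    linarith
  have hCF : pC lam m w ≤ pC lam 0 w := by
    rw [pC_zero_eq]
    have himg : ∑ j ∈ (Finset.range (w+1-m)).image (fun k => m + k), p lam j
        = ∑ k ∈ Finset.range (w+1-m), p lam (m + k) :=
      Finset.sum_image (fun x _ y _ h => by omega)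
    unfold pC
    rw [← himg]
    apply Finset.sum_le_sum_of_subset_of_nonneg
    · intro j hj
      simp only [Finset.mem_image, Finset.mem_range] at hj ⊢
      obtain ⟨k, hk, rfl⟩ := hj
      omega
    · intro i _ _
      exact p_nonneg hl i
  have hS := S_split (lam := lam) hl hw
  have hRnn := pR_nonneg (lam := lam) hl w
  have hCnn := pC_nonneg (lam := lam) (m := m) hl w
  have hpnn := p_nonneg hl w
  have key : pC lam m w * pR lam w * (pC lam 0 w + pR lam w)
      ≤ (pC lam 0 w * pR lam w) * (pC lam m w + pR lam w) := by
    nlinarith [hCF, hRnn, hCnn, sq_nonneg (pR lam w),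
      mul_le_mul_of_nonneg_right hCF (sq_nonneg (pR lam w))]
  calc pC lam m w * pR lam w
      = pC lam m w * pR lam w * (pC lam 0 w + pR lam w) := by rw [← hs0, mul_one]
    _ ≤ (pC lam 0 w * pR lam w) * (pC lam m w + pR lam w) := key
    _ ≤ (phiF lam * p lam w) * (pC lam m w + pR lam w) :=
        mul_le_mul_of_nonneg_right hFRle (by linarith)
    _ = phiF lam * p lam w * pS lam m := by rw [hS]
    _ = Real.sqrt (2 / (lam * Real.exp 1)) * (lam * p lam w * pS lam m) := by
        rw [← hphi_eq]; ring

theorem g1_elt (hl : 0 < lam) {A : Set ℕ} {g : ℕ → ℝ} (hg : IsPoiSteinSol lam m A g)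
    (w : ℕ) (hw : m ≤ w) :
    |g (w + 1)| ≤ min 1 (Real.sqrt (2 / (lam * Real.exp 1))) := by
  obtain ⟨n, rfl⟩ := Nat.exists_eq_add_of_le hw
  have F1 := sol_formula hl hg n
  have habs : |aA lam m A (m+n) * pR lam (m+n) - bA lam A (m+n) * pC lam m (m+n)|
      ≤ pC lam m (m+n) * pR lam (m+n) := by
    rw [abs_le]
    constructor
    · have e1 : bA lam A (m+n) * pC lam m (m+n) ≤ pR lam (m+n) * pC lam m (m+n) :=
        mul_le_mul_of_nonneg_right (bA_le hl A (m+n)) (pC_nonneg hl (m+n))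
      have e2 : 0 ≤ aA lam m A (m+n) * pR lam (m+n) :=
        mul_nonneg (aA_nonneg hl A (m+n)) (pR_nonneg hl (m+n))
      nlinarith
    · have e1 : aA lam m A (m+n) * pR lam (m+n) ≤ pC lam m (m+n) * pR lam (m+n) :=
        mul_le_mul_of_nonneg_right (aA_le hl A (m+n)) (pR_nonneg hl (m+n))
      have e2 : 0 ≤ bA lam A (m+n) * pC lam m (m+n) :=
        mul_nonneg (bA_nonneg hl A (m+n)) (pC_nonneg hl (m+n))
      linarith
  have hfac : (0:ℝ) < lam * p lam (m+n) * pS lam m := by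
    have := p_pos hl (m+n)
    have := S_pos (lam := lam) (m := m) hl
    positivity
  have hgabs : lam * p lam (m+n) * pS lam m * |g (m+n+1)|
      ≤ pC lam m (m+n) * pR lam (m+n) := by
    calc lam * p lam (m+n) * pS lam m * |g (m+n+1)|
        = |lam * p lam (m+n) * pS lam m * g (m+n+1)| := by
          rw [abs_mul, abs_of_pos hfac]
      _ = |aA lam m A (m+n) * pR lam (m+n) - bA lam A (m+n) * pC lam m (m+n)| := by rw [F1]
      _ ≤ pC lam m (m+n) * pR lam (m+n) := habs
  apply le_min
  · have h1 := I1 hl (show m ≤ m+n by omega)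
    have h2 : lam * p lam (m+n) * pS lam m * |g (m+n+1)|
        ≤ lam * p lam (m+n) * pS lam m * 1 := by rw [mul_one]; linarith
    exact le_of_mul_le_mul_left h2 hfac
  · have h1 := I2 hl (show m ≤ m+n by omega)
    have h2 : lam * p lam (m+n) * pS lam m * |g (m+n+1)|
        ≤ lam * p lam (m+n) * pS lam m * Real.sqrt (2 / (lam * Real.exp 1)) := by
      nlinarith
    exact le_of_mul_le_mul_left h2 hfac

end S15

/-- For `λ > 0` and `m ≥ 0`, the Stein factors for conditional Poisson
approximation satisfy `G_{m,1} ≤ min{1, √(2/(λe))}` and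
`G_{m,2} = P(P > m)/(λ P(P ≥ m))` for `P ~ Poisson(λ)`. -/
theorem stmt15 (lam : ℝ) (hlam : 0 < lam) (m : ℕ) :
    poiG1 lam m ≤ min 1 (Real.sqrt (2 / (lam * Real.exp 1))) ∧
    poiG2 lam m =
      (∑' k : ℕ, if m < k then poiPMF lam k else 0) /
        (lam * ∑' k : ℕ, if m ≤ k then poiPMF lam k else 0) := by
  have hden := S15.den_eq (m := m) hlam
  have hnum := S15.numgt_eq (m := m) hlam
  have hSpos := S15.S_pos (lam := lam) (m := m) hlam
  constructor
  · unfold poiG1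
    apply Real.sSup_le
    · rintro x ⟨A, -, g, hg, w, hw, rfl⟩
      exact S15.g1_elt hlam hg w hw
    · exact le_min zero_le_one (Real.sqrt_nonneg _)
  · rw [hden, hnum]
    unfold poiG2
    apply le_antisymm
    · apply Real.sSup_le
      · rintro x ⟨A, -, g, hg, w, hw, rfl⟩
        exact S15.g2_elt hlam hg w hw
      · exact div_nonneg (S15.pR_nonneg hlam m) (by positivity)
    · apply le_csSup
      · refine ⟨S15.pR lam m / (lam * S15.pS lam m), ?_⟩
        rintro x ⟨A, -, g, hg, w, hw, rfl⟩
        exact S15.g2_elt hlam hg w hw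
      · refine ⟨{m+1}, ?_, S15.csol lam m {m+1}, S15.csol_sol hlam _, m, le_refl m, ?_⟩
        · intro k hk
          have : k = m + 1 := hk
          simp [this]
        · exact (S15.csol_vals hlam).symm
end

section
/- Let X_1, …, X_n be independent real random variables, s a threshold with p_i = P(X_i > s) ∈ [0,1) and λ = Σ_{i=1}^n p_i > 0, and let N = Σ_{i=1}^n 1{X_i > s}. Then d_TV( L(N^{(1)}), Pn^{(1)}(λ) ) ≤ [ (1 − e^{−λ} − λ e^{−λ}) / ( λ (1 − e^{−λ}) ) ] · Σ_{i=1}^n p_i² / ( 1 − Π_{i=1}^n (1 − p_i) ). -/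
open MeasureTheory ProbabilityTheory Filter Set Topology Classical

/-- Conditional probability `P(A | B)` as a real number. -/
noncomputable def condP {Ω : Type*} [MeasurableSpace Ω] (μ : Measure Ω) (A B : Set Ω) : ℝ :=
  (μ (A ∩ B)).toReal / (μ B).toReal

noncomputable def tser (lam : ℝ) (j : ℕ) : ℝ := lam ^ j / j.factorial

noncomputable def mA (lam : ℝ) (A : Set ℕ) : ℝ :=
  (∑' k : ℕ, if k ∈ A then poiPMF lam k else 0) / (1 - Real.exp (-lam))

noncomputable def uA (lam : ℝ) (A : Set ℕ) (j : ℕ) : ℝ :=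
  if j = 0 then 0 else (if j ∈ A then 1 else 0) - mA lam A

noncomputable def gA (lam : ℝ) (A : Set ℕ) : ℕ → ℝ
  | 0 => 0
  | (j + 1) => ((j.factorial : ℝ) / lam ^ (j + 1)) *
      ∑ i ∈ Finset.range (j + 1), uA lam A i * tser lam i

lemma tser_nonneg {lam : ℝ} (hlam : 0 < lam) (j : ℕ) : 0 ≤ tser lam j := by
  unfold tser; positivity

lemma tser_pos {lam : ℝ} (hlam : 0 < lam) (j : ℕ) : 0 < tser lam j := by
  unfold tser; positivity

lemma summable_tser (lam : ℝ) : Summable (tser lam) := by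
  exact Real.summable_pow_div_factorial lam

lemma summable_tser_add (lam : ℝ) (k : ℕ) : Summable (fun j => tser lam (j + k)) :=
  (summable_nat_add_iff k).2 (summable_tser lam)

lemma tsum_tser (lam : ℝ) : ∑' j, tser lam j = Real.exp lam := by
  rw [Real.exp_eq_exp_ℝ, NormedSpace.exp_eq_tsum_div]
  rfl

lemma tser_zero (lam : ℝ) : tser lam 0 = 1 := by simp [tser]

lemma tser_one (lam : ℝ) : tser lam 1 = lam := by simp [tser]

lemma poiPMF_eq (lam : ℝ) (k : ℕ) : poiPMF lam k = Real.exp (-lam) * tser lam k := by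
  simp [poiPMF, tser, mul_div_assoc]

lemma summable_poiPMF (lam : ℝ) : Summable (poiPMF lam) := by
  simp only [funext (poiPMF_eq lam)]
  exact (summable_tser lam).mul_left _

lemma tsum_poiPMF (lam : ℝ) : ∑' k, poiPMF lam k = 1 := by
  simp only [funext (poiPMF_eq lam)]
  rw [tsum_mul_left, tsum_tser, ← Real.exp_add]
  simp

lemma poiPMF_nonneg {lam : ℝ} (hlam : 0 < lam) (k : ℕ) : 0 ≤ poiPMF lam k := by
  rw [poiPMF_eq]
  exact mul_nonneg (Real.exp_pos _).le (tser_nonneg hlam k)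

section SteinFacts

variable {lam : ℝ} {A : Set ℕ}

lemma q_pos (hlam : 0 < lam) : 0 < 1 - Real.exp (-lam) := by
  have : Real.exp (-lam) < Real.exp 0 := Real.exp_lt_exp.2 (by linarith)
  simp only [Real.exp_zero] at this
  linarith

noncomputable def PPf (lam : ℝ) (A : Set ℕ) (j : ℕ) : ℝ := if j ∈ A then tser lam j else 0

noncomputable def t1f (lam : ℝ) (j : ℕ) : ℝ := if j = 0 then 0 else tser lam j

lemma PPf_nonneg (hlam : 0 < lam) (j : ℕ) : 0 ≤ PPf lam A j := by
  unfold PPf; split <;> [exact tser_nonneg hlam j; rfl]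

lemma PPf_le (hlam : 0 < lam) (j : ℕ) : PPf lam A j ≤ tser lam j := by
  unfold PPf; split <;> [rfl; exact tser_nonneg hlam j]

lemma t1f_nonneg (hlam : 0 < lam) (j : ℕ) : 0 ≤ t1f lam j := by
  unfold t1f; split <;> [rfl; exact tser_nonneg hlam j]

lemma t1f_le (hlam : 0 < lam) (j : ℕ) : t1f lam j ≤ tser lam j := by
  unfold t1f; split
  · exact tser_nonneg hlam j
  · exact le_refl _

lemma summable_PPf (hlam : 0 < lam) : Summable (PPf lam A) :=
  (summable_tser lam).of_nonneg_of_le (PPf_nonneg hlam) (PPf_le hlam)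

lemma summable_t1f (hlam : 0 < lam) : Summable (t1f lam) :=
  (summable_tser lam).of_nonneg_of_le (t1f_nonneg hlam) (t1f_le hlam)

lemma summable_PPf_add (hlam : 0 < lam) (k : ℕ) : Summable (fun j => PPf lam A (j + k)) :=
  (summable_nat_add_iff k).2 (summable_PPf hlam)

lemma tsum_t1f (lam : ℝ) : ∑' j, t1f lam j = Real.exp lam - 1 := by
  have h1 : ∀ j : ℕ, t1f lam j = tser lam j - (if j = 0 then 1 else 0) := by
    intro j
    rcases Nat.eq_zero_or_pos j with h | h
    · simp [h, t1f, tser_zero]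
    · simp [t1f, Nat.pos_iff_ne_zero.mp h]
  rw [funext h1, (summable_tser lam).tsum_sub ⟨1, hasSum_ite_eq 0 1⟩, tsum_tser, tsum_ite_eq]

lemma mA_nonneg (hlam : 0 < lam) : 0 ≤ mA lam A := by
  apply div_nonneg _ (q_pos hlam).le
  apply tsum_nonneg
  intro k
  split
  · exact poiPMF_nonneg hlam k
  · rfl

lemma tsum_ite_one_le (hlam : 0 < lam) :
    ∑' k : ℕ, (if 1 ≤ k then poiPMF lam k else 0) = 1 - Real.exp (-lam) := by
  have h1 : ∀ k : ℕ, (if 1 ≤ k then poiPMF lam k else 0)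
      = poiPMF lam k - (if k = 0 then Real.exp (-lam) else 0) := by
    intro k
    rcases Nat.eq_zero_or_pos k with h | h
    · simp [h, poiPMF]
    · simp [h, Nat.pos_iff_ne_zero.mp h]
  rw [funext h1, (summable_poiPMF lam).tsum_sub ⟨_, hasSum_ite_eq 0 _⟩, tsum_poiPMF, tsum_ite_eq]

lemma PA_le (hlam : 0 < lam) (hA : A ⊆ Set.Ici 1) :
    ∑' k : ℕ, (if k ∈ A then poiPMF lam k else 0) ≤ 1 - Real.exp (-lam) := by
  rw [← tsum_ite_one_le hlam]
  have hs1 : Summable (fun k : ℕ => if k ∈ A then poiPMF lam k else 0) :=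
    (summable_poiPMF lam).of_nonneg_of_le
      (fun k => by split; exacts [poiPMF_nonneg hlam k, le_refl 0])
      (fun k => by split; exacts [le_refl _, poiPMF_nonneg hlam k])
  have hs2 : Summable (fun k : ℕ => if 1 ≤ k then poiPMF lam k else 0) :=
    (summable_poiPMF lam).of_nonneg_of_le
      (fun k => by split; exacts [poiPMF_nonneg hlam k, le_refl 0])
      (fun k => by split; exacts [le_refl _, poiPMF_nonneg hlam k])
  refine Summable.tsum_le_tsum (fun k => ?_) hs1 hs2
  by_cases hk : k ∈ A
  · have h1k : (1:ℕ) ≤ k := hA hk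
    simp [hk, h1k]
  · simp only [hk, if_false]
    split
    · exact poiPMF_nonneg hlam k
    · exact le_refl 0

lemma mA_le_one (hlam : 0 < lam) (hA : A ⊆ Set.Ici 1) : mA lam A ≤ 1 := by
  rw [mA, div_le_one (q_pos hlam)]
  exact PA_le hlam hA

end SteinFacts

section SteinCore

variable {lam : ℝ} {A : Set ℕ}

lemma uA_abs_le (hlam : 0 < lam) (hA : A ⊆ Set.Ici 1) (j : ℕ) : |uA lam A j| ≤ 1 := by
  have h0 := mA_nonneg (A := A) hlam
  have h1 := mA_le_one hlam hA
  unfold uA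
  split
  · simp
  · split
    · rw [abs_le]; constructor <;> linarith
    · rw [zero_sub, abs_neg, abs_le]; constructor <;> linarith

lemma uA_mul_abs (hlam : 0 < lam) (hA : A ⊆ Set.Ici 1) (j : ℕ) :
    |uA lam A j * tser lam j| ≤ tser lam j := by
  rw [abs_mul, abs_of_nonneg (tser_nonneg hlam j)]
  calc |uA lam A j| * tser lam j ≤ 1 * tser lam j :=
        mul_le_mul_of_nonneg_right (uA_abs_le hlam hA j) (tser_nonneg hlam j)
    _ = tser lam j := one_mul _

lemma summable_uA_mul (hlam : 0 < lam) (hA : A ⊆ Set.Ici 1) :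
    Summable (fun j => uA lam A j * tser lam j) := by
  apply Summable.of_abs
  exact (summable_tser lam).of_nonneg_of_le (fun j => abs_nonneg _) (uA_mul_abs hlam hA)

lemma h0A (hA : A ⊆ Set.Ici 1) : 0 ∉ A := fun h => by simpa using hA h

lemma uA_mul_eq (hA : A ⊆ Set.Ici 1) (j : ℕ) :
    uA lam A j * tser lam j = PPf lam A j - mA lam A * t1f lam j := by
  rcases Nat.eq_zero_or_pos j with h | h
  · simp [h, uA, PPf, t1f, h0A hA]
  · have hj : j ≠ 0 := Nat.pos_iff_ne_zero.mp h
    by_cases hj2 : j ∈ A <;> simp [uA, PPf, t1f, hj, hj2] <;> ring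

lemma tsum_PPf (hlam : 0 < lam) :
    ∑' j, PPf lam A j = Real.exp lam * (mA lam A * (1 - Real.exp (-lam))) := by
  have h1 : ∀ j : ℕ, PPf lam A j = Real.exp lam * (if j ∈ A then poiPMF lam j else 0) := by
    intro j
    unfold PPf
    split
    · rw [poiPMF_eq, ← mul_assoc, ← Real.exp_add]; simp
    · simp
  rw [funext h1, tsum_mul_left]
  congr 1
  rw [mA, div_mul_cancel₀]
  exact (q_pos hlam).ne'

lemma tsum_uA_mul (hlam : 0 < lam) (hA : A ⊆ Set.Ici 1) :
    ∑' j, uA lam A j * tser lam j = 0 := by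
  have h1 := funext (uA_mul_eq (lam := lam) hA)
  rw [h1, (summable_PPf hlam).tsum_sub ((summable_t1f hlam).mul_left _),
    tsum_PPf hlam, tsum_mul_left, tsum_t1f]
  have he : Real.exp lam * Real.exp (-lam) = 1 := by rw [← Real.exp_add]; simp
  linear_combination (-(mA lam A)) * he

lemma gA_forward_tail (hlam : 0 < lam) (hA : A ⊆ Set.Ici 1) (n : ℕ) :
    ∑ i ∈ Finset.range n, uA lam A i * tser lam i
      = -∑' j, uA lam A (j + n) * tser lam (j + n) := by
  have := Summable.sum_add_tsum_nat_add (f := fun j => uA lam A j * tser lam j) n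
    (summable_uA_mul hlam hA)
  rw [tsum_uA_mul hlam hA] at this
  linarith

lemma gA_stein_eq (hlam : 0 < lam) (k : ℕ) :
    lam * gA lam A (k + 1) - k * gA lam A k = uA lam A k := by
  rcases k with _ | j
  · simp [gA, uA, Finset.sum_range_one, tser_zero]
  · push_cast
    show lam * gA lam A (j + 2) - ((j:ℝ) + 1) * gA lam A (j + 1) = uA lam A (j + 1)
    have h2 : gA lam A (j + 2) = (((j+1).factorial : ℝ) / lam ^ (j + 2)) *
        (∑ i ∈ Finset.range (j + 1), uA lam A i * tser lam i
          + uA lam A (j+1) * tser lam (j+1)) := by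
      show gA lam A (j + 2) = _
      rw [show gA lam A (j+2) = (((j+1).factorial : ℝ) / lam ^ (j + 2)) *
        ∑ i ∈ Finset.range (j + 2), uA lam A i * tser lam i from rfl,
        Finset.sum_range_succ]
    rw [h2, show gA lam A (j+1) = ((j.factorial : ℝ) / lam ^ (j + 1)) *
        ∑ i ∈ Finset.range (j + 1), uA lam A i * tser lam i from rfl]
    have hfac : ((j+1).factorial : ℝ) = ((j:ℝ)+1) * j.factorial := by
      rw [Nat.factorial_succ]; push_cast; ring
    have htser : tser lam (j+1) = lam ^ (j+1) / (j+1).factorial := rfl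
    have hlam0 : lam ≠ 0 := hlam.ne'
    have hfac0 : ((j+1).factorial : ℝ) ≠ 0 := by positivity
    rw [htser, hfac]
    field_simp
    ring
end SteinCore

section DeltaBound

variable {lam : ℝ} {A : Set ℕ}

lemma tser_succ (lam : ℝ) (k : ℕ) [NeZero lam] : True := trivial

lemma tser_succ_eq {lam : ℝ} (hlam : 0 < lam) (k : ℕ) :
    tser lam (k+1) = tser lam k * (lam / ((k:ℝ)+1)) := by
  unfold tser
  rw [Nat.factorial_succ]
  have h1 : ((k:ℝ)+1) ≠ 0 := by positivity
  have h2 : ((k.factorial : ℝ)) ≠ 0 := by positivity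
  push_cast
  field_simp
  ring

lemma tser_ratio_down {lam : ℝ} (hlam : 0 < lam) (k : ℕ) {c : ℕ} (h : c ≤ k + 1) :
    (c : ℝ) / lam * tser lam (k+1) ≤ tser lam k := by
  rw [tser_succ_eq hlam]
  have h1 : (c:ℝ)/lam * (tser lam k * (lam/((k:ℝ)+1))) = tser lam k * ((c:ℝ)/((k:ℝ)+1)) := by
    field_simp
  rw [h1]
  have h2 : (c:ℝ)/((k:ℝ)+1) ≤ 1 := by
    rw [div_le_one (by positivity)]
    exact_mod_cast h
  nlinarith [tser_nonneg hlam k]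

lemma tser_ratio_up {lam : ℝ} (hlam : 0 < lam) (k : ℕ) {c : ℕ} (h : k + 1 ≤ c) :
    lam / (c : ℝ) * tser lam k ≤ tser lam (k+1) := by
  rw [tser_succ_eq hlam]
  have hc : (0:ℝ) < (c:ℝ) := by
    have : 0 < c := by omega
    exact_mod_cast this
  have h2 : lam/(c:ℝ) ≤ lam/((k:ℝ)+1) :=
    div_le_div_of_nonneg_left hlam.le (by positivity) (by exact_mod_cast h)
  nlinarith [tser_nonneg hlam k]

lemma gA_delta_le (hlam : 0 < lam) (hA : A ⊆ Set.Ici 1) (l : ℕ) :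
    gA lam A (l+2) - gA lam A (l+1) ≤
      (1 - Real.exp (-lam) - lam * Real.exp (-lam)) / (lam * (1 - Real.exp (-lam))) := by
  have hq : (0:ℝ) < 1 - Real.exp (-lam) := q_pos hlam
  have he : Real.exp lam * Real.exp (-lam) = 1 := by rw [← Real.exp_add]; simp
  have hlam0 : lam ≠ 0 := hlam.ne'
  -- abbreviations
  set q : ℝ := 1 - Real.exp (-lam) with hqdef
  have hc1pos : (0:ℝ) < ((l+1).factorial : ℝ) / lam ^ (l+2) := by positivity
  have hc2pos : (0:ℝ) < ((l).factorial : ℝ) / lam ^ (l+1) := by positivity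
  set c1 : ℝ := ((l+1).factorial : ℝ) / lam ^ (l+2) with hc1def
  set c2 : ℝ := ((l).factorial : ℝ) / lam ^ (l+1) with hc2def
  set TailT : ℝ := ∑' j : ℕ, tser lam (j + (l+2)) with hTailTdef
  set TailP : ℝ := ∑' j : ℕ, PPf lam A (j + (l+2)) with hTailPdef
  set MidT1 : ℝ := ∑ i ∈ Finset.range (l+1), t1f lam i with hMidT1def
  set MidP : ℝ := ∑ i ∈ Finset.range (l+1), PPf lam A i with hMidPdef
  set m : ℝ := mA lam A with hmdef
  set E : ℝ := c1 * TailT + c2 * MidT1 with hEdef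
  set D : ℝ := Real.exp (-lam) * E / q with hDdef
  -- Formula for the increment
  have hg2 : gA lam A (l+2) = c1 * (-∑' j : ℕ, uA lam A (j + (l+2)) * tser lam (j + (l+2))) := by
    rw [show gA lam A (l+2) = (((l+1).factorial : ℝ) / lam ^ (l+2)) *
      ∑ i ∈ Finset.range (l+2), uA lam A i * tser lam i from rfl,
      gA_forward_tail hlam hA (l+2)]
  have hg1 : gA lam A (l+1) = c2 * ∑ i ∈ Finset.range (l+1), uA lam A i * tser lam i := rfl
  have hTailU : (∑' j : ℕ, uA lam A (j + (l+2)) * tser lam (j + (l+2)))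
      = TailP - m * TailT := by
    have h1 : ∀ j : ℕ, uA lam A (j + (l+2)) * tser lam (j + (l+2))
        = PPf lam A (j + (l+2)) - m * tser lam (j + (l+2)) := by
      intro j
      rw [uA_mul_eq hA]
      have h2 : t1f lam (j + (l+2)) = tser lam (j + (l+2)) := by
        unfold t1f
        rw [if_neg (by omega)]
      rw [h2]
    simp only [h1]
    rw [Summable.tsum_sub (summable_PPf_add hlam (l+2))
      (((summable_tser_add lam (l+2))).mul_left m), tsum_mul_left]
  have hMidU : (∑ i ∈ Finset.range (l+1), uA lam A i * tser lam i)
      = MidP - m * MidT1 := by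
    simp only [uA_mul_eq hA]
    rw [Finset.sum_sub_distrib, Finset.mul_sum]
  have hSumPP : ∑' j, PPf lam A j = MidP + PPf lam A (l+1) + TailP := by
    rw [← Summable.sum_add_tsum_nat_add (l+2) (summable_PPf hlam), Finset.sum_range_succ]
  have hmq : m * q = Real.exp (-lam) * ∑' j, PPf lam A j := by
    rw [tsum_PPf hlam]
    linear_combination (-(mA lam A * (1 - Real.exp (-lam)))) * he
  have hmE : m * E = D * (MidP + PPf lam A (l+1) + TailP) := by
    rw [hDdef, ← hSumPP, div_mul_eq_mul_div, eq_div_iff hq.ne']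
    linear_combination E * hmq
  have hDelta : gA lam A (l+2) - gA lam A (l+1)
      = (D - c2) * MidP + D * PPf lam A (l+1) + (D - c1) * TailP := by
    rw [hg2, hg1, hTailU, hMidU]
    linear_combination hmE
  -- nonnegativity facts
  have hTailT0 : 0 ≤ TailT := tsum_nonneg (fun j => tser_nonneg hlam _)
  have hTailP0 : 0 ≤ TailP := tsum_nonneg (fun j => PPf_nonneg hlam _)
  have hMidT10 : 0 ≤ MidT1 := Finset.sum_nonneg (fun i _ => t1f_nonneg hlam i)
  have hMidP0 : 0 ≤ MidP := Finset.sum_nonneg (fun i _ => PPf_nonneg hlam i)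
  have hE0 : 0 ≤ E := by positivity
  have hD0 : 0 ≤ D := by positivity
  have hPP0 : 0 ≤ PPf lam A (l+1) := PPf_nonneg hlam _
  have hPPle : PPf lam A (l+1) ≤ tser lam (l+1) := PPf_le hlam _
  have htpos : 0 < tser lam (l+1) := tser_pos hlam _
  -- algebraic identities for c1, c2
  have hlc1 : lam * tser lam (l+1) * c1 = 1 := by
    rw [hc1def]
    unfold tser
    have : ((l+1).factorial : ℝ) ≠ 0 := by positivity
    field_simp
    ring
  have hlc2 : lam * tser lam (l+1) * c2 = lam / ((l:ℝ)+1) := by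
    rw [hc2def]
    unfold tser
    have h1 : ((l+1).factorial : ℝ) = ((l:ℝ)+1) * (l.factorial : ℝ) := by
      rw [Nat.factorial_succ]; push_cast; ring
    have h2 : ((l.factorial : ℝ)) ≠ 0 := by positivity
    have h3 : ((l:ℝ)+1) ≠ 0 := by positivity
    rw [h1]
    field_simp
  -- the key inequality K
  have hMid_le : lam / ((l:ℝ)+1) * MidT1 ≤ ∑ i ∈ Finset.range l, tser lam (i+2) := by
    rw [hMidT1def, Finset.mul_sum, Finset.sum_range_succ']
    have h0 : lam / ((l:ℝ)+1) * t1f lam 0 = 0 := by simp [t1f]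
    rw [h0, add_zero]
    apply Finset.sum_le_sum
    intro i hi
    have h1 : t1f lam (i+1) = tser lam (i+1) := by unfold t1f; rw [if_neg (by omega)]
    rw [h1]
    have h2 : (i+1) + 1 ≤ l + 1 := by
      have := Finset.mem_range.mp hi
      omega
    have := tser_ratio_up hlam (i+1) (c := l+1) h2
    have hcast : ((l+1 : ℕ) : ℝ) = (l:ℝ)+1 := by push_cast; ring
    rw [hcast] at this
    exact this
  have hTail_eq : TailT + ∑ i ∈ Finset.range l, tser lam (i+2) = Real.exp lam - 1 - lam := by
    have hs := Summable.sum_add_tsum_nat_add (f := fun j => tser lam (j+2)) l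
      ((summable_nat_add_iff 2).2 (summable_tser lam))
    have hs2 := Summable.sum_add_tsum_nat_add (f := tser lam) 2 (summable_tser lam)
    rw [tsum_tser] at hs2
    have hr2 : ∑ i ∈ Finset.range 2, tser lam i = 1 + lam := by
      rw [Finset.sum_range_succ, Finset.sum_range_one, tser_zero, tser_one]
    rw [hr2] at hs2
    have hTT : TailT = ∑' j : ℕ, tser lam ((j + l) + 2) := by
      rw [hTailTdef]
      exact tsum_congr fun j => by rw [show j + (l+2) = (j+l)+2 by omega]
    rw [hTT]
    linarith [hs, hs2]
  have hK : lam * tser lam (l+1) * E ≤ Real.exp lam - 1 - lam := by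
    have h1 : lam * tser lam (l+1) * E = TailT + lam / ((l:ℝ)+1) * MidT1 := by
      rw [hEdef]
      linear_combination TailT * hlc1 + MidT1 * hlc2
    rw [h1]
    linarith [hMid_le, hTail_eq]
  -- Ia : D ≤ c1
  have hIa : D ≤ c1 := by
    rw [hDdef, div_le_iff₀ hq]
    have h3 : Real.exp (-lam) * E = (Real.exp (-lam) * c1) * (lam * tser lam (l+1) * E) := by
      linear_combination (-(Real.exp (-lam) * E)) * hlc1
    calc Real.exp (-lam) * E
        = (Real.exp (-lam) * c1) * (lam * tser lam (l+1) * E) := h3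
      _ ≤ (Real.exp (-lam) * c1) * (Real.exp lam - 1) := by
          apply mul_le_mul_of_nonneg_left _ (by positivity)
          linarith [hK, hlam]
      _ = c1 * q := by
          rw [hqdef]
          linear_combination c1 * he
  -- Ib : D ≤ c2
  have hIb : D ≤ c2 := by
    rw [hDdef, div_le_iff₀ hq]
    have hc1c2 : c1 = c2 * (((l:ℝ)+1) / lam) := by
      rw [hc1def, hc2def]
      have h1 : ((l+1).factorial : ℝ) = ((l:ℝ)+1) * (l.factorial : ℝ) := by
        rw [Nat.factorial_succ]; push_cast; ring
      rw [h1]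
      field_simp
      ring
    have hpart1 : ((l:ℝ)+1)/lam * TailT ≤ ∑' j : ℕ, tser lam (j + (l+1)) := by
      rw [hTailTdef, ← tsum_mul_left]
      apply Summable.tsum_le_tsum _ ((summable_tser_add lam (l+2)).mul_left _) (summable_tser_add lam (l+1))
      intro j
      have e1 : j + (l+2) = (j+l+1)+1 := by omega
      have e2 : j + (l+1) = j+l+1 := by omega
      rw [e1, e2]
      have h2 : (l+1 : ℕ) ≤ (j + l + 1) + 1 := by omega
      have := tser_ratio_down hlam (j + l + 1) (c := l+1) h2
      have hcast : ((l+1 : ℕ) : ℝ) = (l:ℝ)+1 := by push_cast; ring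
      rw [hcast] at this
      exact this
    have hpart2 : MidT1 = ∑ i ∈ Finset.range l, tser lam (i+1) := by
      rw [hMidT1def, Finset.sum_range_succ']
      have h0 : t1f lam 0 = 0 := by simp [t1f]
      rw [h0, add_zero]
      apply Finset.sum_congr rfl
      intro i _
      unfold t1f; rw [if_neg (by omega)]
    have hs := Summable.sum_add_tsum_nat_add (f := fun j => tser lam (j+1)) l
      ((summable_nat_add_iff 1).2 (summable_tser lam))
    have hs1 := Summable.sum_add_tsum_nat_add (f := tser lam) 1 (summable_tser lam)
    rw [tsum_tser, Finset.sum_range_one, tser_zero] at hs1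
    have hcore2 : ((l:ℝ)+1)/lam * TailT + MidT1 ≤ Real.exp lam - 1 := by
      rw [hpart2]
      have hsh : (∑' j : ℕ, tser lam (j + (l+1))) = ∑' j : ℕ, tser lam ((j + l) + 1) :=
        tsum_congr fun j => by rw [show j + (l+1) = (j+l)+1 by omega]
      linarith [hpart1, hs, hs1]
    have hEc2 : E = c2 * (((l:ℝ)+1)/lam * TailT + MidT1) := by
      rw [hEdef, hc1c2]
      ring
    calc Real.exp (-lam) * E
        = (Real.exp (-lam) * c2) * (((l:ℝ)+1)/lam * TailT + MidT1) := by rw [hEc2]; ring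
      _ ≤ (Real.exp (-lam) * c2) * (Real.exp lam - 1) := by
          apply mul_le_mul_of_nonneg_left hcore2 (by positivity)
      _ = c2 * q := by
          rw [hqdef]
          linear_combination c2 * he
  -- Ic : D * tser lam (l+1) ≤ target
  have hIc : D * tser lam (l+1)
      ≤ (1 - Real.exp (-lam) - lam * Real.exp (-lam)) / (lam * q) := by
    have hnum : 1 - Real.exp (-lam) - lam * Real.exp (-lam)
        = Real.exp (-lam) * (Real.exp lam - 1 - lam) := by
      linear_combination (-1 : ℝ) * he
    rw [hnum]
    have h1 : D * tser lam (l+1) = Real.exp (-lam) * (tser lam (l+1) * E) / q := by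
      rw [hDdef]; ring
    rw [h1]
    have h2 : tser lam (l+1) * E ≤ (Real.exp lam - 1 - lam)/lam := by
      rw [le_div_iff₀ hlam]
      linarith [hK]
    have h3 : Real.exp (-lam) * (tser lam (l+1) * E) / q
        ≤ Real.exp (-lam) * ((Real.exp lam - 1 - lam)/lam) / q := by
      gcongr
    refine h3.trans (le_of_eq ?_)
    field_simp
  -- conclude
  rw [hDelta]
  have hstep : (D - c2) * MidP + D * PPf lam A (l+1) + (D - c1) * TailP
      ≤ D * tser lam (l+1) := by
    linarith [mul_nonneg hMidP0 (sub_nonneg.mpr hIb), mul_nonneg hTailP0 (sub_nonneg.mpr hIa),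
      mul_le_mul_of_nonneg_left hPPle hD0]
  exact hstep.trans hIc

end DeltaBound

section Complement

variable {lam : ℝ} {A : Set ℕ}

lemma mA_add_compl (hlam : 0 < lam) (hA : A ⊆ Set.Ici 1) :
    mA lam A + mA lam (Set.Ici 1 \ A) = 1 := by
  have hq : (0:ℝ) < 1 - Real.exp (-lam) := q_pos hlam
  have hsum : ∀ B : Set ℕ, Summable (fun k : ℕ => if k ∈ B then poiPMF lam k else 0) := by
    intro B
    exact (summable_poiPMF lam).of_nonneg_of_le
      (fun k => by split; exacts [poiPMF_nonneg hlam k, le_refl 0])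
      (fun k => by split; exacts [le_refl _, poiPMF_nonneg hlam k])
  have key : ∀ B : Set ℕ, B = Set.Ici 1 \ A → (∑' k : ℕ, if k ∈ A then poiPMF lam k else 0)
      + (∑' k : ℕ, if k ∈ B then poiPMF lam k else 0)
      = 1 - Real.exp (-lam) := by
    intro B hB
    rw [← Summable.tsum_add (hsum A) (hsum B), ← tsum_ite_one_le hlam]
    apply tsum_congr
    intro k
    by_cases hk : k ∈ A
    · have h1k : (1:ℕ) ≤ k := hA hk
      have hk2 : k ∉ B := by rw [hB]; exact fun h => h.2 hk
      simp [hk, hk2, h1k]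
    · by_cases h1k : (1:ℕ) ≤ k
      · have hk2 : k ∈ B := by rw [hB]; exact ⟨h1k, hk⟩
        simp [hk, hk2, h1k]
      · have hk2 : k ∉ B := by rw [hB]; exact fun h => h1k h.1
        simp [hk, hk2, h1k]
  rw [mA, mA, ← add_div, key _ rfl, div_self hq.ne']

lemma uA_add_compl (hlam : 0 < lam) (hA : A ⊆ Set.Ici 1) (j : ℕ) :
    uA lam A j + uA lam (Set.Ici 1 \ A) j = 0 := by
  have hm := mA_add_compl hlam hA
  unfold uA
  rcases Nat.eq_zero_or_pos j with h | h
  · simp [h]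
  · have hj : j ≠ 0 := Nat.pos_iff_ne_zero.mp h
    by_cases hjA : j ∈ A
    · have hj2 : j ∉ Set.Ici 1 \ A := fun hh => hh.2 hjA
      simp only [hj, if_false, hjA, if_true, hj2]
      linarith
    · have hj2 : j ∈ Set.Ici 1 \ A := ⟨h, hjA⟩
      simp only [hj, if_false, hjA, hj2, if_true]
      linarith

lemma gA_add_compl (hlam : 0 < lam) (hA : A ⊆ Set.Ici 1) (k : ℕ) :
    gA lam A k + gA lam (Set.Ici 1 \ A) k = 0 := by
  rcases k with _ | j
  · simp [gA]
  · show ((j.factorial : ℝ) / lam ^ (j+1)) * ∑ i ∈ Finset.range (j+1), uA lam A i * tser lam i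
      + ((j.factorial : ℝ) / lam ^ (j+1)) *
        ∑ i ∈ Finset.range (j+1), uA lam (Set.Ici 1 \ A) i * tser lam i = 0
    rw [← mul_add, ← Finset.sum_add_distrib]
    have h1 : ∀ i ∈ Finset.range (j+1),
        uA lam A i * tser lam i + uA lam (Set.Ici 1 \ A) i * tser lam i = 0 := by
      intro i _
      have h := uA_add_compl hlam hA i
      rw [← add_mul, h, zero_mul]
    rw [Finset.sum_congr rfl h1]
    simp

lemma abs_gA_delta_le (hlam : 0 < lam) (hA : A ⊆ Set.Ici 1) (l : ℕ) :
    |gA lam A (l+2) - gA lam A (l+1)| ≤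
      (1 - Real.exp (-lam) - lam * Real.exp (-lam)) / (lam * (1 - Real.exp (-lam))) := by
  rw [abs_le]
  constructor
  · have h1 := gA_delta_le hlam (Set.diff_subset : Set.Ici 1 \ A ⊆ Set.Ici 1) l
    have h2 := gA_add_compl hlam hA (l+2)
    have h3 := gA_add_compl hlam hA (l+1)
    linarith
  · exact gA_delta_le hlam hA l

end Complement


/-- For independent `X_1, …, X_n` with exceedance probabilities
`p_i = P(X_i > s) ∈ [0,1)` and `λ = Σ p_i > 0`, the conditional law of the number of
exceedances `N` given `N ≥ 1` satisfies
`d_TV(L(N^{(1)}), Pn^{(1)}(λ)) ≤ [(1 − e^{−λ} − λe^{−λ})/(λ(1 − e^{−λ}))]·Σ p_i² / (1 − Π(1 − p_i))`. -/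
theorem stmt17 {Ω : Type*} [MeasurableSpace Ω] (μ : Measure Ω) [IsProbabilityMeasure μ]
    (n : ℕ) (X : Fin n → Ω → ℝ) (hmeas : ∀ i, Measurable (X i))
    (hindep : iIndepFun X μ)
    (s : ℝ) (pp : Fin n → ℝ) (hpp : ∀ i, pp i = (μ {ω | s < X i ω}).toReal)
    (hpp0 : ∀ i, 0 ≤ pp i) (hpp1 : ∀ i, pp i < 1)
    (lam : ℝ) (hlam : lam = ∑ i, pp i) (hlampos : 0 < lam) :
    ∀ A : Set ℕ, A ⊆ Set.Ici 1 →
      |condP μ {ω | (∑ i, if s < X i ω then 1 else 0) ∈ A}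
          {ω | 1 ≤ ∑ i, if s < X i ω then 1 else 0} -
        (∑' k : ℕ, if k ∈ A then poiPMF lam k else 0) / (1 - Real.exp (-lam))| ≤
      ((1 - Real.exp (-lam) - lam * Real.exp (-lam)) / (lam * (1 - Real.exp (-lam)))) *
        (∑ i, (pp i) ^ 2) / (1 - ∏ i, (1 - pp i)) := by
  intro A hA
  classical
  set cc : ℝ := (1 - Real.exp (-lam) - lam * Real.exp (-lam)) / (lam * (1 - Real.exp (-lam)))
    with hccdef
  -- basic objects
  set Y : Fin n → Ω → ℕ := fun i ω => if s < X i ω then 1 else 0 with hYdef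
  set N : Ω → ℕ := fun ω => ∑ i, Y i ω with hNdef
  set M : Fin n → Ω → ℕ := fun i ω => ∑ j ∈ Finset.univ.erase i, Y j ω with hMdef
  have hmeasB : ∀ i, MeasurableSet {ω | s < X i ω} := fun i => (hmeas i) measurableSet_Ioi
  have hYmeas : ∀ i, Measurable (Y i) := fun i =>
    Measurable.ite (hmeasB i) measurable_const measurable_const
  have hYindep : iIndepFun Y μ := by
    exact hindep.comp (fun i (x : ℝ) => if s < x then (1:ℕ) else 0)
      (fun i => Measurable.ite measurableSet_Ioi measurable_const measurable_const)
  have hNmeas : Measurable N := by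
    apply Finset.measurable_sum
    exact fun i _ => hYmeas i
  have hMmeas : ∀ i, Measurable (M i) := by
    intro i
    apply Finset.measurable_sum
    exact fun j _ => hYmeas j
  have hYle : ∀ i ω, Y i ω ≤ 1 := by
    intro i ω
    simp only [hYdef]
    split <;> omega
  have hNle : ∀ ω, N ω ≤ n := by
    intro ω
    calc N ω ≤ ∑ _i : Fin n, 1 := Finset.sum_le_sum (fun i _ => hYle i ω)
      _ = n := by simp
  have hMle : ∀ i ω, M i ω ≤ n := by
    intro i ω
    calc M i ω ≤ N ω := Finset.sum_le_sum_of_subset (Finset.erase_subset _ _)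
      _ ≤ n := hNle ω
  have hNM : ∀ i ω, N ω = M i ω + Y i ω := fun i ω =>
    (Finset.sum_erase_add Finset.univ _ (Finset.mem_univ i)).symm
  -- integrability helpers
  have hint : ∀ (f : Ω → ℝ) (C : ℝ), Measurable f → (∀ ω, |f ω| ≤ C) → Integrable f μ := by
    intro f C hf hC
    exact (integrable_const C).mono' hf.aestronglyMeasurable
      (ae_of_all μ fun ω => by simpa [Real.norm_eq_abs] using hC ω)
  have hFb : ∀ (F : ℕ → ℝ) (W : Ω → ℕ), (∀ ω, W ω ≤ n) →
      ∀ ω, |F (W ω)| ≤ ∑ k ∈ Finset.range (n+1), |F k| := by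
    intro F W hW ω
    exact Finset.single_le_sum (f := fun k => |F k|) (fun k _ => abs_nonneg _)
      (Finset.mem_range.mpr (by have := hW ω; omega))
  have hIntF : ∀ (F : ℕ → ℝ) (W : Ω → ℕ), Measurable W → (∀ ω, W ω ≤ n) →
      Integrable (fun ω => F (W ω)) μ := fun F W hW hWb =>
    hint _ _ (measurable_from_top.comp hW) (hFb F W hWb)
  have hIntYF : ∀ (i : Fin n) (F : ℕ → ℝ) (W : Ω → ℕ), Measurable W → (∀ ω, W ω ≤ n) →
      Integrable (fun ω => (Y i ω : ℝ) * F (W ω)) μ := by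
    intro i F W hW hWb
    apply hint _ (∑ k ∈ Finset.range (n+1), |F k|)
    · exact (measurable_from_top.comp (hYmeas i)).mul (measurable_from_top.comp hW)
    · intro ω
      rw [abs_mul]
      have h1 : |(Y i ω : ℝ)| ≤ 1 := by
        rw [Nat.abs_cast]
        exact_mod_cast hYle i ω
      calc |(Y i ω : ℝ)| * |F (W ω)| ≤ 1 * |F (W ω)| :=
            mul_le_mul_of_nonneg_right h1 (abs_nonneg _)
        _ = |F (W ω)| := one_mul _
        _ ≤ _ := hFb F W hWb ω
  -- the key independence identity
  have hYint : ∀ i : Fin n, ∫ ω, (Y i ω : ℝ) ∂μ = pp i := by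
    intro i
    have h1 : (fun ω => (Y i ω : ℝ))
        = Set.indicator {ω | s < X i ω} (fun _ => (1:ℝ)) := by
      funext ω
      by_cases h : s < X i ω <;> simp [hYdef, Set.indicator, h]
    rw [h1, integral_indicator_const (1:ℝ) (hmeasB i), smul_eq_mul, mul_one, hpp i, measureReal_def]
  have hkey : ∀ (i : Fin n) (F : ℕ → ℝ),
      ∫ ω, (Y i ω : ℝ) * F (M i ω) ∂μ = pp i * ∫ ω, F (M i ω) ∂μ := by
    intro i F
    have h1 : IndepFun (fun ω => ∑ j ∈ Finset.univ.erase i, Y j ω) (Y i) μ := by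
      have h0 := hYindep.indepFun_finsetSum_of_notMem hYmeas (Finset.notMem_erase i Finset.univ)
      have h2 : (∑ j ∈ Finset.univ.erase i, Y j) = fun ω => ∑ j ∈ Finset.univ.erase i, Y j ω := by
        funext ω
        exact Finset.sum_apply ω (Finset.univ.erase i) Y
      rwa [h2] at h0
    have hIF : IndepFun (fun ω => (Y i ω : ℝ)) (fun ω => F (M i ω)) μ := by
      exact h1.symm.comp (measurable_from_top (f := fun k : ℕ => (k:ℝ)))
        (measurable_from_top (f := F))
    have h3 := hIF.integral_mul_eq_mul_integral
      ((measurable_from_top.comp (hYmeas i)).aestronglyMeasurable)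
      ((measurable_from_top.comp (hMmeas i)).aestronglyMeasurable)
    have h4 : (fun ω => (Y i ω : ℝ)) * (fun ω => F (M i ω))
        = fun ω => (Y i ω : ℝ) * F (M i ω) := rfl
    rw [h4] at h3
    rw [show (∫ ω, (Y i ω : ℝ) * F (M i ω) ∂μ) = integral μ (fun ω => (Y i ω : ℝ) * F (M i ω))
      from rfl, h3, hYint i]
  -- abbreviations for the Stein function
  set g : ℕ → ℝ := gA lam A with hgdef
  set m : ℝ := mA lam A with hmdef
  set I1 : ℝ := ∫ ω, g (N ω + 1) ∂μ with hI1def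
  set I2 : ℝ := ∫ ω, (N ω : ℝ) * g (N ω) ∂μ with hI2def
  have hJKint : ∀ i : Fin n, Integrable (fun ω => g (M i ω + 1)) μ :=
    fun i => hIntF (fun k => g (k+1)) (M i) (hMmeas i) (hMle i)
  have hKint : ∀ i : Fin n, Integrable (fun ω => g (M i ω + 2) - g (M i ω + 1)) μ :=
    fun i => hIntF (fun k => g (k+2) - g (k+1)) (M i) (hMmeas i) (hMle i)
  -- identity: I2 = ∑ i, pp i * ∫ g(M i + 1)
  have hI2 : I2 = ∑ i, pp i * ∫ ω, g (M i ω + 1) ∂μ := by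
    have h1 : (fun ω => (N ω : ℝ) * g (N ω)) = fun ω => ∑ i, (Y i ω : ℝ) * g (N ω) := by
      funext ω
      rw [← Finset.sum_mul]
      congr 1
      rw [hNdef]
      push_cast
      rfl
    have h2 : ∀ (i : Fin n) (ω : Ω), (Y i ω : ℝ) * g (N ω) = (Y i ω : ℝ) * g (M i ω + 1) := by
      intro i ω
      by_cases h : s < X i ω
      · have hy : Y i ω = 1 := by simp [hYdef, h]
        have hn : N ω = M i ω + 1 := by rw [hNM i ω, hy]
        rw [hn]
      · have hy : Y i ω = 0 := by simp [hYdef, h]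
        rw [hy]
        norm_num
    rw [hI2def, h1]
    rw [integral_finset_sum _ (fun i _ => by
      simpa only [funext (h2 i)] using hIntYF i (fun k => g (k+1)) (M i) (hMmeas i) (hMle i))]
    apply Finset.sum_congr rfl
    intro i _
    rw [show (∫ ω, (Y i ω : ℝ) * g (N ω) ∂μ) = ∫ ω, (Y i ω : ℝ) * g (M i ω + 1) ∂μ from by
      congr 1; funext ω; exact h2 i ω]
    exact hkey i (fun k => g (k+1))
  -- identity: I1 = ∫ g(M i + 1) + pp i * K i
  have hI1 : ∀ i : Fin n, I1 = (∫ ω, g (M i ω + 1) ∂μ)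
      + pp i * ∫ ω, (g (M i ω + 2) - g (M i ω + 1)) ∂μ := by
    intro i
    have h2 : ∀ ω : Ω, g (N ω + 1)
        = g (M i ω + 1) + (Y i ω : ℝ) * (g (M i ω + 2) - g (M i ω + 1)) := by
      intro ω
      by_cases h : s < X i ω
      · have hy : Y i ω = 1 := by simp [hYdef, h]
        have hn : N ω = M i ω + 1 := by rw [hNM i ω, hy]
        rw [hn, hy]
        push_cast
        ring
      · have hy : Y i ω = 0 := by simp [hYdef, h]
        have hn : N ω = M i ω := by rw [hNM i ω, hy]; ring
        rw [hn, hy]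
        push_cast
        ring
    rw [hI1def]
    rw [show (∫ ω, g (N ω + 1) ∂μ) = ∫ ω, (g (M i ω + 1)
        + (Y i ω : ℝ) * (g (M i ω + 2) - g (M i ω + 1))) ∂μ from by
      congr 1; funext ω; exact h2 ω]
    rw [integral_add (hJKint i)
      (hIntYF i (fun k => g (k+2) - g (k+1)) (M i) (hMmeas i) (hMle i))]
    congr 1
    exact hkey i (fun k => g (k+2) - g (k+1))
  -- Stein identity: lam * I1 - I2 = ∑ i, pp i ^ 2 * K i
  have hStein : lam * I1 - I2
      = ∑ i, pp i ^ 2 * ∫ ω, (g (M i ω + 2) - g (M i ω + 1)) ∂μ := by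
    rw [hI2, hlam, Finset.sum_mul, ← Finset.sum_sub_distrib]
    apply Finset.sum_congr rfl
    intro i _
    rw [hI1 i]
    ring
  -- bound on each K i
  have hKbound : ∀ i : Fin n, |∫ ω, (g (M i ω + 2) - g (M i ω + 1)) ∂μ| ≤ cc := by
    intro i
    have h1 : ∀ᵐ ω ∂μ, ‖g (M i ω + 2) - g (M i ω + 1)‖ ≤ cc := by
      apply ae_of_all
      intro ω
      rw [Real.norm_eq_abs]
      exact abs_gA_delta_le hlampos hA (M i ω)
    have h2 := norm_integral_le_of_norm_le_const h1
    rwa [Real.norm_eq_abs, probReal_univ, mul_one] at h2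
  -- lam * I1 - I2 equals the integral of uA ∘ N
  have hG1int : Integrable (fun ω => g (N ω + 1)) μ :=
    hIntF (fun k => g (k+1)) N hNmeas hNle
  have hG2int : Integrable (fun ω => (N ω : ℝ) * g (N ω)) μ :=
    hIntF (fun k => (k : ℝ) * g k) N hNmeas hNle
  have hLHS : lam * I1 - I2 = ∫ ω, uA lam A (N ω) ∂μ := by
    have h1 : ∀ ω, uA lam A (N ω) = lam * g (N ω + 1) - (N ω : ℝ) * g (N ω) := by
      intro ω
      exact (gA_stein_eq hlampos (N ω)).symm
    rw [show (∫ ω, uA lam A (N ω) ∂μ)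
        = ∫ ω, (lam * g (N ω + 1) - (N ω : ℝ) * g (N ω)) ∂μ from by
      congr 1; funext ω; exact h1 ω]
    rw [integral_sub (hG1int.const_mul lam) hG2int, integral_const_mul]
  -- the integral of uA ∘ N in terms of probabilities
  set a : ℝ := (μ {ω | N ω ∈ A}).toReal with hadef
  set b : ℝ := (μ {ω | 1 ≤ N ω}).toReal with hbdef
  have hNAmeas : MeasurableSet {ω | N ω ∈ A} := hNmeas (by trivial : MeasurableSet A)
  have hN1meas : MeasurableSet {ω | 1 ≤ N ω} :=
    hNmeas (by trivial : MeasurableSet {k : ℕ | 1 ≤ k})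
  have hRHS : (∫ ω, uA lam A (N ω) ∂μ) = a - m * b := by
    have h1 : ∀ ω, uA lam A (N ω)
        = (if N ω ∈ A then (1:ℝ) else 0) - m * (if 1 ≤ N ω then (1:ℝ) else 0) := by
      intro ω
      unfold uA
      rcases Nat.eq_zero_or_pos (N ω) with h | h
      · have h2 : N ω ∉ A := fun hc => by simpa [h] using hA hc
        have h0 : (0:ℕ) ∉ A := h0A hA
        simp [h, h2, h0]
      · have h2 : N ω ≠ 0 := Nat.pos_iff_ne_zero.mp h
        have h3 : 1 ≤ N ω := h
        simp only [h2, if_false]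
        rw [if_pos h3, mul_one, hmdef]
    rw [show (∫ ω, uA lam A (N ω) ∂μ)
        = ∫ ω, ((if N ω ∈ A then (1:ℝ) else 0) - m * (if 1 ≤ N ω then (1:ℝ) else 0)) ∂μ from by
      congr 1; funext ω; exact h1 ω]
    have hind1 : (fun ω => if N ω ∈ A then (1:ℝ) else 0)
        = Set.indicator {ω | N ω ∈ A} (fun _ => (1:ℝ)) := by
      funext ω
      by_cases h : N ω ∈ A <;> simp [Set.indicator, h]
    have hind2 : (fun ω => if 1 ≤ N ω then (1:ℝ) else 0)
        = Set.indicator {ω | 1 ≤ N ω} (fun _ => (1:ℝ)) := by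
      funext ω
      by_cases h : 1 ≤ N ω <;> simp [Set.indicator, h]
    have hi1 : Integrable (fun ω => if N ω ∈ A then (1:ℝ) else 0) μ := by
      rw [hind1]
      exact (integrable_const (1:ℝ)).indicator hNAmeas
    have hi2 : Integrable (fun ω => if 1 ≤ N ω then (1:ℝ) else 0) μ := by
      rw [hind2]
      exact (integrable_const (1:ℝ)).indicator hN1meas
    rw [integral_sub hi1 (hi2.const_mul m), integral_const_mul, hind1, hind2,
      integral_indicator_const (1:ℝ) hNAmeas, integral_indicator_const (1:ℝ) hN1meas]
    simp [hadef, hbdef, measureReal_def]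
  -- b = 1 - ∏ (1 - pp i)
  have hmuB_le : ∀ i, μ {ω | s < X i ω} ≤ 1 := fun i => prob_le_one
  have hb_eq : b = 1 - ∏ i, (1 - pp i) := by
    have h0 : {ω | N ω = 0} = ⋂ i, (X i) ⁻¹' (Set.Iic s) := by
      ext ω
      simp only [Set.mem_setOf_eq, Set.mem_iInter, Set.mem_preimage, Set.mem_Iic, hNdef]
      rw [Finset.sum_eq_zero_iff]
      constructor
      · intro h i
        have := h i (Finset.mem_univ i)
        by_contra hc
        push_neg at hc
        simp [hYdef, hc] at this
      · intro h i _
        have : ¬ s < X i ω := not_lt.mpr (h i)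
        simp [hYdef, this]
    have h1 : μ {ω | N ω = 0} = ∏ i, μ ((X i) ⁻¹' (Set.Iic s)) := by
      rw [h0]
      exact hindep.meas_iInter (fun i => ⟨Set.Iic s, measurableSet_Iic, rfl⟩)
    have h2 : ∀ i, μ ((X i) ⁻¹' (Set.Iic s)) = 1 - μ {ω | s < X i ω} := by
      intro i
      have h3 : (X i) ⁻¹' (Set.Iic s) = {ω | s < X i ω}ᶜ := by
        ext ω
        simp [not_lt]
      rw [h3, prob_compl_eq_one_sub (hmeasB i)]
    have h4 : {ω | 1 ≤ N ω} = {ω | N ω = 0}ᶜ := by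
      ext ω
      simp [Nat.one_le_iff_ne_zero]
    have h5 : μ {ω | 1 ≤ N ω} = 1 - μ {ω | N ω = 0} := by
      rw [h4, prob_compl_eq_one_sub]
      exact hNmeas (by trivial : MeasurableSet {(0:ℕ)})
    rw [hbdef, h5, ENNReal.toReal_sub_of_le prob_le_one ENNReal.one_ne_top, ENNReal.toReal_one,
      h1]
    congr 1
    rw [ENNReal.toReal_prod]
    apply Finset.prod_congr rfl
    intro i _
    rw [h2 i, ENNReal.toReal_sub_of_le (hmuB_le i) ENNReal.one_ne_top, ENNReal.toReal_one,
      hpp i]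
  have hbpos : 0 < b := by
    rw [hb_eq]
    obtain ⟨i0, hi0⟩ : ∃ i, 0 < pp i := by
      by_contra hc
      push_neg at hc
      have : ∀ i, pp i = 0 := fun i => le_antisymm (hc i) (hpp0 i)
      rw [hlam] at hlampos
      simp [this] at hlampos
    have h1 : ∏ i, (1 - pp i) = (1 - pp i0) * ∏ i ∈ Finset.univ.erase i0, (1 - pp i) :=
      (Finset.mul_prod_erase Finset.univ _ (Finset.mem_univ i0)).symm
    have h2 : ∏ i ∈ Finset.univ.erase i0, (1 - pp i) ≤ 1 :=
      Finset.prod_le_one (fun i _ => by linarith [hpp1 i]) (fun i _ => by linarith [hpp0 i])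
    have h3 : ∏ i ∈ Finset.univ.erase i0, (1 - pp i) ≥ 0 :=
      Finset.prod_nonneg (fun i _ => by linarith [hpp1 i])
    nlinarith [hpp1 i0]
  -- condP equals a / b
  have hcond : condP μ {ω | (∑ i, if s < X i ω then 1 else 0) ∈ A}
      {ω | 1 ≤ ∑ i, if s < X i ω then 1 else 0} = a / b := by
    have h1 : {ω : Ω | (∑ i, if s < X i ω then 1 else 0) ∈ A} = {ω | N ω ∈ A} := rfl
    have h2 : {ω : Ω | 1 ≤ ∑ i, if s < X i ω then 1 else 0} = {ω | 1 ≤ N ω} := rfl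
    have h3 : {ω | N ω ∈ A} ∩ {ω | 1 ≤ N ω} = {ω | N ω ∈ A} := by
      apply Set.inter_eq_left.mpr
      intro ω hω
      exact hA hω
    rw [condP, h1, h2, h3]
  -- the Poisson term equals m
  have hpois : (∑' k : ℕ, if k ∈ A then poiPMF lam k else 0) / (1 - Real.exp (-lam)) = m := rfl
  -- final assembly
  rw [hcond, hpois]
  have hsum_bound : |a - m * b| ≤ cc * ∑ i, pp i ^ 2 := by
    rw [← hRHS, ← hLHS, hStein]
    calc |∑ i, pp i ^ 2 * ∫ ω, (g (M i ω + 2) - g (M i ω + 1)) ∂μ|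
        ≤ ∑ i, |pp i ^ 2 * ∫ ω, (g (M i ω + 2) - g (M i ω + 1)) ∂μ| :=
          Finset.abs_sum_le_sum_abs _ _
      _ ≤ ∑ i, pp i ^ 2 * cc := by
          apply Finset.sum_le_sum
          intro i _
          rw [abs_mul, abs_of_nonneg (sq_nonneg (pp i))]
          exact mul_le_mul_of_nonneg_left (hKbound i) (sq_nonneg (pp i))
      _ = cc * ∑ i, pp i ^ 2 := by rw [← Finset.sum_mul]; ring
  have hfin : |a / b - m| = |a - m * b| / b := by
    have h1 : a / b - m = (a - m * b) / b := by field_simp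
    rw [h1, abs_div, abs_of_pos hbpos]
  rw [hfin]
  rw [← hb_eq]
  calc |a - m * b| / b ≤ (cc * ∑ i, pp i ^ 2) / b := by
        gcongr
      _ = cc * (∑ i, pp i ^ 2) / b := by ring
end
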